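/- arXiv:1808.04998 — 6 statements merged into one kernel-verified Lean document; each statement's English description precedes it below -/
import Mathlib

section
/- Let C be a finitely complete category. Then C is regular if and only if (1) every morphism factors as a regular epimorphism followed by a monomorphism, (2) for every regular epimorphism f : A → B and every object E, the induced morphism 1_E × f : E × A → E × B is a regular epimorphism, and (3) regular epimorphisms are stable under pullback along split monomorphisms. -/
open CategoryTheory CategoryTheory.Limits

/-- A morphism is a regular epimorphism (the coequalizer of some pair of morphisms). -/
def IsRegEpi {C : Type*} [Category C] {A B : C} (f : A ⟶ B) : Prop :=
  Nonempty (RegularEpi f)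

/-- A finitely complete category is regular if every morphism factors as a regular
epimorphism followed by a monomorphism, and these factorizations (i.e. regular
epimorphisms) are stable under pullback. -/
structure IsRegularCategory (C : Type*) [Category C] [HasFiniteLimits C] : Prop where
  factor : ∀ {A B : C} (f : A ⟶ B), ∃ (I : C) (p : A ⟶ I) (i : I ⟶ B),
    IsRegEpi p ∧ Mono i ∧ p ≫ i = f
  regEpi_pullback_stable : ∀ {P E A B : C} (fst : P ⟶ E) (snd : P ⟶ A)
    (p : E ⟶ B) (f : A ⟶ B), IsPullback fst snd p f → IsRegEpi f → IsRegEpi fst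

/-- The square expressing `prod.map (𝟙 E) f` as a pullback of `f` along the
second projection. -/
lemma isPullback_prodMap_snd {C : Type*} [Category C] [HasFiniteLimits C]
    (E : C) {A B : C} (f : A ⟶ B) :
    IsPullback (Limits.prod.map (𝟙 E) f) Limits.prod.snd Limits.prod.snd f := by
  have comm : Limits.prod.map (𝟙 E) f ≫ (Limits.prod.snd : E ⨯ B ⟶ B) =
      (Limits.prod.snd : E ⨯ A ⟶ A) ≫ f := by simp
  refine IsPullback.of_isLimit' ⟨comm⟩ ?_
  refine PullbackCone.IsLimit.mk _ (fun s => Limits.prod.lift (s.fst ≫ Limits.prod.fst) s.snd)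
    (fun s => ?_) (fun s => by simp [prod.lift_fst, prod.lift_snd, prod.lift_fst_assoc, prod.lift_snd_assoc]) (fun s m hm1 hm2 => ?_)
  · apply Limits.prod.hom_ext
    · simp [prod.lift_fst, prod.lift_snd, prod.lift_fst_assoc, prod.lift_snd_assoc]
    · simpa [prod.lift_fst, prod.lift_snd, prod.lift_fst_assoc, prod.lift_snd_assoc] using s.condition.symm
  · apply Limits.prod.hom_ext
    · have := hm1 =≫ (Limits.prod.fst : E ⨯ B ⟶ E)
      simpa [prod.lift_fst, prod.lift_snd, prod.lift_fst_assoc, prod.lift_snd_assoc] using this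
    · simpa [prod.lift_fst, prod.lift_snd, prod.lift_fst_assoc, prod.lift_snd_assoc] using hm2

/-- Any pullback square of `f` along `p` can be seen as a pullback of
`prod.map (𝟙 E) f` along the graph `prod.lift (𝟙 E) p`. -/
lemma isPullback_graph {C : Type*} [Category C] [HasFiniteLimits C]
    {P E A B : C} {fst : P ⟶ E} {snd : P ⟶ A} {p : E ⟶ B} {f : A ⟶ B}
    (h : IsPullback fst snd p f) :
    IsPullback fst (Limits.prod.lift fst snd) (Limits.prod.lift (𝟙 E) p)
      (Limits.prod.map (𝟙 E) f) := by
  have comm : fst ≫ Limits.prod.lift (𝟙 E) p =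
      Limits.prod.lift fst snd ≫ Limits.prod.map (𝟙 E) f := by
    apply Limits.prod.hom_ext
    · simp [prod.lift_fst, prod.lift_snd, prod.lift_fst_assoc, prod.lift_snd_assoc]
    · simpa [prod.lift_fst, prod.lift_snd, prod.lift_fst_assoc, prod.lift_snd_assoc] using h.w
  refine IsPullback.of_isLimit' ⟨comm⟩ ?_
  refine PullbackCone.IsLimit.mk _ (fun s => ?_) (fun s => ?_) (fun s => ?_) ?_
  · refine h.lift s.fst (s.snd ≫ Limits.prod.snd) ?_
    have c1 := s.condition =≫ (Limits.prod.snd : E ⨯ B ⟶ B)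
    simpa [prod.lift_fst, prod.lift_snd, prod.lift_fst_assoc, prod.lift_snd_assoc] using c1
  · simp
  · have c0 := s.condition =≫ (Limits.prod.fst : E ⨯ B ⟶ E)
    simp [prod.lift_fst, prod.lift_snd, prod.lift_fst_assoc, prod.lift_snd_assoc] at c0
    apply Limits.prod.hom_ext
    · simpa [prod.lift_fst, prod.lift_snd, prod.lift_fst_assoc, prod.lift_snd_assoc] using c0
    · simp [prod.lift_fst, prod.lift_snd, prod.lift_fst_assoc, prod.lift_snd_assoc]
  · intro s m hm1 hm2
    apply h.hom_ext
    · simpa using hm1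
    · have := hm2 =≫ (Limits.prod.snd : E ⨯ A ⟶ A)
      simpa [prod.lift_fst, prod.lift_snd, prod.lift_fst_assoc, prod.lift_snd_assoc] using this

/-- A finitely complete category `C` is regular if and only if (1) every morphism
factors as a regular epimorphism followed by a monomorphism, (2) for every regular
epimorphism `f : A ⟶ B` and every object `E` the morphism `1_E × f` is a regular
epimorphism, and (3) regular epimorphisms are stable under pullback along split
monomorphisms. -/
theorem regular_iff (C : Type*) [Category C] [HasFiniteLimits C] :
    IsRegularCategory C ↔
      ((∀ {A B : C} (f : A ⟶ B), ∃ (I : C) (p : A ⟶ I) (i : I ⟶ B),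
          IsRegEpi p ∧ Mono i ∧ p ≫ i = f) ∧
        (∀ (E : C) {A B : C} (f : A ⟶ B), IsRegEpi f →
          IsRegEpi (Limits.prod.map (𝟙 E) f)) ∧
        (∀ {P E A B : C} (fst : P ⟶ E) (snd : P ⟶ A) (s : E ⟶ B) (f : A ⟶ B),
          IsPullback fst snd s f → IsSplitMono s → IsRegEpi f → IsRegEpi fst)) := by
  constructor
  · intro hreg
    refine ⟨hreg.factor, fun E A B f hf => ?_, fun fst snd s f hpb _ hf =>
      hreg.regEpi_pullback_stable fst snd s f hpb hf⟩
    exact hreg.regEpi_pullback_stable _ _ _ _ (isPullback_prodMap_snd E f) hf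
  · rintro ⟨h1, h2, h3⟩
    refine ⟨h1, fun fst snd p f hpb hf => ?_⟩
    exact h3 fst (Limits.prod.lift fst snd) (Limits.prod.lift (𝟙 _) p)
      (Limits.prod.map (𝟙 _) f) (isPullback_graph hpb)
      ⟨⟨Limits.prod.fst, by simp [prod.lift_fst, prod.lift_snd, prod.lift_fst_assoc, prod.lift_snd_assoc]⟩⟩ (h2 _ f hf)
end

section
/- Let f : A → C be a morphism of cocommutative Hopf algebras over a field K, and let HKer(f) = {a ∈ A : f(a₁) ⊗ a₂ = 1 ⊗ a} be its Hopf kernel. Then HKer(f) is a normal Hopf subalgebra of A, i.e., for every a ∈ A and x ∈ HKer(f), a₁ x S(a₂) ∈ HKer(f). -/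
open TensorProduct Coalgebra

/-- A coalgebra is cocommutative if the comultiplication is invariant under the
switch map. -/
def IsCocomm (K A : Type*) [CommSemiring K] [AddCommMonoid A] [Module K A]
    [Coalgebra K A] : Prop :=
  (TensorProduct.comm K A A).toLinearMap ∘ₗ (Coalgebra.comul (R := K) (A := A)) =
    Coalgebra.comul

/-- The linear map sending `a ⊗ b` to the Sweedler sum `a₁ * b * S(a₂)`
(the adjoint action of a Hopf algebra on itself). -/
noncomputable def adAct (K A : Type*) [CommSemiring K] [Semiring A] [HopfAlgebra K A] :
    A ⊗[K] A →ₗ[K] A :=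
  (LinearMap.mul' K A) ∘ₗ
    (LinearMap.lTensor A ((LinearMap.mul' K A) ∘ₗ
      (TensorProduct.comm K A A).toLinearMap ∘ₗ
      (LinearMap.rTensor A (HopfAlgebra.antipode (R := K) (A := A))))) ∘ₗ
    (TensorProduct.assoc K A A A).toLinearMap ∘ₗ
    (LinearMap.rTensor A (Coalgebra.comul (R := K) (A := A)))

/-- The linear map sending `x ⊗ y` to the Sweedler sum
`x₁ * y₁ * S(x₂) * S(y₂)` (the "Hopf commutator" `{x, y}`). -/
noncomputable def hopfComm (K A : Type*) [CommSemiring K] [Semiring A] [HopfAlgebra K A] :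
    A ⊗[K] A →ₗ[K] A :=
  (LinearMap.mul' K A) ∘ₗ
    (TensorProduct.map (LinearMap.mul' K A)
      ((LinearMap.mul' K A) ∘ₗ
        TensorProduct.map (HopfAlgebra.antipode (R := K) (A := A))
          (HopfAlgebra.antipode (R := K) (A := A)))) ∘ₗ
    (TensorProduct.tensorTensorTensorComm K A A A A).toLinearMap ∘ₗ
    (TensorProduct.map (Coalgebra.comul (R := K)) (Coalgebra.comul (R := K)))


open TensorProduct Coalgebra HopfAlgebra LinearMap

noncomputable section HKNaux

namespace HKN

variable {K : Type*} [CommSemiring K]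

section Conv

variable {A B : Type*} [AddCommMonoid A] [Module K A] [Coalgebra K A]
  [Semiring B] [Algebra K B]

/-- Convolution product on `Hom(A, B)`. -/
def conv (g h : A →ₗ[K] B) : A →ₗ[K] B :=
  LinearMap.mul' K B ∘ₗ TensorProduct.map g h ∘ₗ Coalgebra.comul

/-- The unit for convolution. -/
def convUnit : A →ₗ[K] B := Algebra.linearMap K B ∘ₗ Coalgebra.counit

lemma convUnit_apply (a : A) : (convUnit (K := K) (A := A) (B := B)) a
    = algebraMap K B (Coalgebra.counit a) := rfl

lemma conv_repr (g h : A →ₗ[K] B) {a : A} {ι : Type*} (r : Coalgebra.Repr K a ι) :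
    conv g h a = ∑ i ∈ r.index, g (r.left i) * h (r.right i) := by
  simp [conv, ← r.eq, map_sum]

lemma counit_smul_sum {a : A} {ι : Type*} (r : Coalgebra.Repr K a ι) :
    ∑ i ∈ r.index, Coalgebra.counit (R := K) (r.left i) • r.right i = a := by
  have h := congrArg (TensorProduct.lid K A) (sum_counit_tmul_eq r)
  simp only [map_sum, TensorProduct.lid_tmul, one_smul] at h
  exact h

lemma smul_counit_sum {a : A} {ι : Type*} (r : Coalgebra.Repr K a ι) :
    ∑ i ∈ r.index, Coalgebra.counit (R := K) (r.right i) • r.left i = a := by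
  have h := congrArg (TensorProduct.rid K A) (sum_tmul_counit_eq r)
  simp only [map_sum, TensorProduct.rid_tmul, one_smul] at h
  exact h

lemma convUnit_conv (h : A →ₗ[K] B) : conv convUnit h = h := by
  ext a
  set r := ℛ K a with hr
  rw [conv_repr _ _ r]
  calc ∑ i ∈ r.index, (convUnit (K := K) (B := B)) (r.left i) * h (r.right i)
      = ∑ i ∈ r.index, Coalgebra.counit (R := K) (r.left i) • h (r.right i) := by
        simp [convUnit_apply, Algebra.smul_def]
    _ = h (∑ i ∈ r.index, Coalgebra.counit (R := K) (r.left i) • r.right i) := by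
        simp [map_sum]
    _ = h a := by rw [counit_smul_sum r]

lemma conv_convUnit (g : A →ₗ[K] B) : conv g convUnit = g := by
  ext a
  set r := ℛ K a with hr
  rw [conv_repr _ _ r]
  calc ∑ i ∈ r.index, g (r.left i) * (convUnit (K := K) (B := B)) (r.right i)
      = ∑ i ∈ r.index, Coalgebra.counit (R := K) (r.right i) • g (r.left i) := by
        simp [convUnit_apply, Algebra.smul_def, Algebra.commutes, mul_comm]
    _ = g (∑ i ∈ r.index, Coalgebra.counit (R := K) (r.right i) • r.left i) := by
        simp [map_sum]
    _ = g a := by rw [smul_counit_sum r]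

lemma conv_assoc (f g h : A →ₗ[K] B) : conv (conv f g) h = conv f (conv g h) := by
  ext a
  set r := ℛ K a with hr
  set r₁ : (i : A × A) → Coalgebra.Repr K (r.left i) (A × A) := fun i => ℛ K (r.left i) with hr₁
  set r₂ : (i : A × A) → Coalgebra.Repr K (r.right i) (A × A) := fun i => ℛ K (r.right i) with hr₂
  have key := Coalgebra.sum_map_tmul_tmul_eq f g h a (repr := r) (a₁ := r₁) (a₂ := r₂)
  have key2 := congrArg (LinearMap.mul' K B ∘ₗ LinearMap.lTensor B (LinearMap.mul' K B)) key
  simp only [map_sum, coe_comp, Function.comp_apply, lTensor_tmul, mul'_apply] at key2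
  rw [conv_repr _ _ r, conv_repr _ _ r]
  calc ∑ i ∈ r.index, conv f g (r.left i) * h (r.right i)
      = ∑ i ∈ r.index, ∑ j ∈ (r₁ i).index,
          f ((r₁ i).left j) * ((r₁ i).right j |> g) * h (r.right i) := by
        refine Finset.sum_congr rfl fun i _ => ?_
        rw [conv_repr _ _ (r₁ i), Finset.sum_mul]
    _ = ∑ i ∈ r.index, ∑ j ∈ (r₂ i).index,
          f (r.left i) * (g ((r₂ i).left j) * h ((r₂ i).right j)) := by
        simpa [mul_assoc] using key2.symm
    _ = ∑ i ∈ r.index, f (r.left i) * conv g h (r.right i) := by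
        refine Finset.sum_congr rfl fun i _ => ?_
        rw [conv_repr _ _ (r₂ i), Finset.mul_sum]

lemma conv_unique {g h k : A →ₗ[K] B} (h1 : conv g h = convUnit)
    (h2 : conv h k = convUnit) : g = k := by
  have : conv g (conv h k) = conv (conv g h) k := (conv_assoc g h k).symm
  rw [h1, h2, conv_convUnit, convUnit_conv] at this
  exact this

end Conv

section Hopf

variable {A : Type*} [Semiring A] [HopfAlgebra K A]

lemma conv_antipode_id :
    conv (antipode (R := K) (A := A)) LinearMap.id = convUnit := by
  rw [conv, convUnit]
  exact mul_antipode_rTensor_comul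

lemma conv_id_antipode :
    conv LinearMap.id (antipode (R := K) (A := A)) = convUnit := by
  rw [conv, convUnit]
  exact mul_antipode_lTensor_comul

variable {C : Type*} [Semiring C] [HopfAlgebra K C] (f : A →ₐc[K] C)

@[simp] lemma bialg_toLin_apply (x : A) : f.toLinearMap x = f x := rfl
@[simp] lemma bialg_toCoalg_apply (x : A) : f.toCoalgHom x = f x := rfl

/-- comul of the image under a coalgebra map, elementwise. -/
lemma comul_apply_coalgHom (u : A) :
    Coalgebra.comul (R := K) (f u)
      = TensorProduct.map f.toLinearMap f.toLinearMap (Coalgebra.comul u) := by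
  have h := LinearMap.congr_fun (CoalgHomClass.map_comp_comul (F := A →ₐc[K] C) f) u
  simpa [bialg_toCoalg_apply] using h.symm

lemma counit_apply_coalgHom (u : A) :
    Coalgebra.counit (R := K) (f u) = Coalgebra.counit (R := K) u := by
  have h := LinearMap.congr_fun (CoalgHomClass.counit_comp (F := A →ₐc[K] C) f) u
  simpa using h

/-- Sweedler: `∑ f(u₁) * S(f(u₂)) = ε(u) 1`. -/
lemma sum_map_mul_antipode_map {u : A} {ι : Type*} (r : Coalgebra.Repr K u ι) :
    ∑ j ∈ r.index, f (r.left j) * antipode (R := K) (f (r.right j))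
      = algebraMap K C (Coalgebra.counit (R := K) u) := by
  have h : ∑ j ∈ r.index, (f (r.left j) ⊗ₜ[K] f (r.right j))
      = Coalgebra.comul (R := K) (f u) := by
    rw [comul_apply_coalgHom, ← r.eq]
    simp [map_sum, bialg_toCoalg_apply]
  have h2 := congrArg (LinearMap.mul' K C ∘ₗ
    LinearMap.lTensor C (antipode (R := K) (A := C))) h
  simp only [map_sum, coe_comp, Function.comp_apply, lTensor_tmul, mul'_apply,
    mul_antipode_lTensor_comul_apply] at h2
  rw [h2, counit_apply_coalgHom]

/-- Sweedler: `∑ S(f(u₁)) * f(u₂) = ε(u) 1`. -/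
lemma sum_antipode_map_mul_map {u : A} {ι : Type*} (r : Coalgebra.Repr K u ι) :
    ∑ j ∈ r.index, antipode (R := K) (f (r.left j)) * f (r.right j)
      = algebraMap K C (Coalgebra.counit (R := K) u) := by
  have h : ∑ j ∈ r.index, (f (r.left j) ⊗ₜ[K] f (r.right j))
      = Coalgebra.comul (R := K) (f u) := by
    rw [comul_apply_coalgHom, ← r.eq]
    simp [map_sum, bialg_toCoalg_apply]
  have h2 := congrArg (LinearMap.mul' K C ∘ₗ
    LinearMap.rTensor C (antipode (R := K) (A := C))) h
  simp only [map_sum, coe_comp, Function.comp_apply, rTensor_tmul, mul'_apply,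
    mul_antipode_rTensor_comul_apply] at h2
  rw [h2, counit_apply_coalgHom]

/-- A bialgebra morphism between Hopf algebras commutes with antipodes. -/
lemma map_antipode :
    f.toLinearMap ∘ₗ antipode (R := K) (A := A)
      = antipode (R := K) (A := C) ∘ₗ f.toLinearMap := by
  refine (conv_unique (h := f.toLinearMap) ?_ ?_).symm
  · -- conv (S_C ∘ f) f = convUnit
    ext a
    rw [conv_repr _ _ (ℛ K a), convUnit_apply]
    exact sum_antipode_map_mul_map f (ℛ K a)
  · -- conv f (f ∘ S_A) = convUnit
    ext a
    rw [conv_repr _ _ (ℛ K a), convUnit_apply]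
    simp only [coe_comp, Function.comp_apply, bialg_toLin_apply, ← map_mul, ← map_sum]
    rw [sum_mul_antipode_eq_algebraMap_counit (ℛ K a)]
    exact AlgHomClass.commutes f _

end Hopf

section Cocomm

variable {A : Type*} [AddCommMonoid A] [Module K A] [Coalgebra K A]

/-- Right-nested double comultiplication `a ↦ a₁ ⊗ (a₂ ⊗ a₃)`. -/
def D2 : A →ₗ[K] A ⊗[K] (A ⊗[K] A) :=
  LinearMap.lTensor A (Coalgebra.comul (R := K)) ∘ₗ Coalgebra.comul

/-- Swap of the first two factors of `A ⊗ (A ⊗ A)`. -/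
def sw : A ⊗[K] (A ⊗[K] A) →ₗ[K] A ⊗[K] (A ⊗[K] A) :=
  (TensorProduct.assoc K A A A).toLinearMap ∘ₗ
    LinearMap.rTensor A (TensorProduct.comm K A A).toLinearMap ∘ₗ
    (TensorProduct.assoc K A A A).symm.toLinearMap

lemma sw_D2 (hA : _root_.IsCocomm K A) : sw ∘ₗ (D2 (K := K) (A := A)) = D2 := by
  have h1 : LinearMap.rTensor A (TensorProduct.comm K A A).toLinearMap ∘ₗ
      LinearMap.rTensor A (Coalgebra.comul (R := K) (A := A)) ∘ₗ Coalgebra.comul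
      = LinearMap.rTensor A (Coalgebra.comul (R := K)) ∘ₗ Coalgebra.comul := by
    rw [← comp_assoc, ← rTensor_comp, hA]
  rw [sw, D2]
  simp only [comp_assoc]
  rw [coassoc_symm, h1, coassoc]

/-- Right-nested triple comultiplication. -/
def D3 : A →ₗ[K] A ⊗[K] (A ⊗[K] (A ⊗[K] A)) :=
  LinearMap.lTensor A (D2 (K := K) (A := A)) ∘ₗ Coalgebra.comul

lemma lsw_D3 (hA : _root_.IsCocomm K A) :
    LinearMap.lTensor A sw ∘ₗ (D3 (K := K) (A := A)) = D3 := by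
  rw [D3, ← comp_assoc, ← lTensor_comp, sw_D2 hA]

lemma M_eq :
    TensorProduct.map (Coalgebra.comul (R := K) (A := A)) Coalgebra.comul ∘ₗ Coalgebra.comul
      = (TensorProduct.assoc K A A (A ⊗[K] A)).symm.toLinearMap ∘ₗ (D3 (K := K) (A := A)) := by
  have nat1 : LinearMap.lTensor (A ⊗[K] A) (Coalgebra.comul (R := K) (A := A)) ∘ₗ
      (TensorProduct.assoc K A A A).symm.toLinearMap
      = (TensorProduct.assoc K A A (A ⊗[K] A)).symm.toLinearMap ∘ₗ
        LinearMap.lTensor A (LinearMap.lTensor A (Coalgebra.comul (R := K))) := by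
    ext a b c
    simp
  have h0 : TensorProduct.map (Coalgebra.comul (R := K) (A := A)) Coalgebra.comul
      = LinearMap.lTensor (A ⊗[K] A) Coalgebra.comul ∘ₗ
        LinearMap.rTensor A (Coalgebra.comul (R := K)) := by
    rw [lTensor_comp_rTensor]
  rw [h0, comp_assoc, ← coassoc_symm, D3, D2, lTensor_comp, ← comp_assoc, nat1,
    comp_assoc, ← comp_assoc (f := Coalgebra.comul), comp_assoc]

lemma C1 (hA : _root_.IsCocomm K A) :
    (TensorProduct.tensorTensorTensorComm K A A A A).toLinearMap ∘ₗ
      (TensorProduct.map (Coalgebra.comul (R := K) (A := A)) Coalgebra.comul ∘ₗ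
        Coalgebra.comul)
      = TensorProduct.map Coalgebra.comul Coalgebra.comul ∘ₗ Coalgebra.comul := by
  have nat2 : (TensorProduct.tensorTensorTensorComm K A A A A).toLinearMap ∘ₗ
      (TensorProduct.assoc K A A (A ⊗[K] A)).symm.toLinearMap
      = (TensorProduct.assoc K A A (A ⊗[K] A)).symm.toLinearMap ∘ₗ
        LinearMap.lTensor A sw := by
    ext a b c
    simp [sw]
  rw [M_eq, ← comp_assoc, nat2, comp_assoc, lsw_D3 hA]

end Cocomm

section HopfCocomm

variable {A : Type*} [Semiring A] [HopfAlgebra K A]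

lemma mul'_tensorProduct :
    LinearMap.mul' K (A ⊗[K] A)
      = TensorProduct.map (LinearMap.mul' K A) (LinearMap.mul' K A) ∘ₗ
        (TensorProduct.tensorTensorTensorComm K A A A A).toLinearMap := by
  ext p q u v
  simp [Algebra.TensorProduct.tmul_mul_tmul]

lemma nat3 : (TensorProduct.tensorTensorTensorComm K A A A A).toLinearMap ∘ₗ
      LinearMap.lTensor (A ⊗[K] A)
        (TensorProduct.map (antipode (R := K) (A := A)) (antipode (R := K)))
    = TensorProduct.map (LinearMap.lTensor A (antipode (R := K)))
        (LinearMap.lTensor A (antipode (R := K))) ∘ₗ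
      (TensorProduct.tensorTensorTensorComm K A A A A).toLinearMap := by
  ext p q u v
  simp

lemma comul_mul'_map :
    LinearMap.mul' K (A ⊗[K] A) ∘ₗ
        TensorProduct.map (Coalgebra.comul (R := K) (A := A)) Coalgebra.comul
      = Coalgebra.comul ∘ₗ LinearMap.mul' K A := by
  ext a b
  simp

lemma map_counit_comul :
    TensorProduct.map (Algebra.linearMap K A ∘ₗ Coalgebra.counit)
        (Algebra.linearMap K A ∘ₗ Coalgebra.counit) ∘ₗ Coalgebra.comul
      = (convUnit : A →ₗ[K] A ⊗[K] A) := by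
  ext a
  set r := ℛ K a with hr
  have h := congrArg (TensorProduct.map (Algebra.linearMap K A)
    (Algebra.linearMap K A ∘ₗ Coalgebra.counit)) (sum_counit_tmul_eq r)
  simp only [map_sum, TensorProduct.map_tmul, coe_comp, Function.comp_apply,
    Algebra.linearMap_apply, map_one] at h
  calc (TensorProduct.map (Algebra.linearMap K A ∘ₗ Coalgebra.counit)
        (Algebra.linearMap K A ∘ₗ Coalgebra.counit) ∘ₗ Coalgebra.comul) a
      = ∑ i ∈ r.index, algebraMap K A (Coalgebra.counit (R := K) (r.left i)) ⊗ₜ[K]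
          algebraMap K A (Coalgebra.counit (R := K) (r.right i)) := by
        simp only [coe_comp, Function.comp_apply, ← r.eq, map_sum, TensorProduct.map_tmul,
          Algebra.linearMap_apply]
    _ = (1 : A) ⊗ₜ[K] algebraMap K A (Coalgebra.counit (R := K) a) := h
    _ = convUnit a := by
        rw [convUnit_apply, Algebra.TensorProduct.algebraMap_apply,
          Algebra.algebraMap_eq_smul_one, TensorProduct.tmul_smul,
          TensorProduct.smul_tmul']

/-- In a cocommutative Hopf algebra, the antipode is a coalgebra morphism:
`Δ ∘ S = (S ⊗ S) ∘ Δ`. -/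
lemma comul_antipode (hA : _root_.IsCocomm K A) :
    Coalgebra.comul (R := K) ∘ₗ antipode (R := K) (A := A)
      = TensorProduct.map (antipode (R := K)) (antipode (R := K)) ∘ₗ Coalgebra.comul := by
  refine conv_unique (h := (Coalgebra.comul : A →ₗ[K] A ⊗[K] A)) ?_ ?_
  · -- conv (Δ ∘ S) Δ = convUnit
    ext a
    rw [conv_repr _ _ (ℛ K a), convUnit_apply]
    simp only [coe_comp, Function.comp_apply, ← Bialgebra.comul_mul, ← map_sum,
      sum_antipode_mul_eq_algebraMap_counit, Bialgebra.comul_algebraMap]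
  · -- conv Δ ((S ⊗ S) ∘ Δ) = convUnit
    have step1 : TensorProduct.map (Coalgebra.comul (R := K) (A := A))
        (TensorProduct.map (antipode (R := K) (A := A)) (antipode (R := K) (A := A)) ∘ₗ
          (Coalgebra.comul (R := K) (A := A)))
        = LinearMap.lTensor (A ⊗[K] A)
            (TensorProduct.map (antipode (R := K) (A := A)) (antipode (R := K) (A := A))) ∘ₗ
          TensorProduct.map (Coalgebra.comul (R := K) (A := A))
            (Coalgebra.comul (R := K) (A := A)) := by
      have hl : LinearMap.lTensor (A ⊗[K] A)
          (TensorProduct.map (antipode (R := K) (A := A)) (antipode (R := K) (A := A)))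
          = TensorProduct.map LinearMap.id
              (TensorProduct.map (antipode (R := K) (A := A))
                (antipode (R := K) (A := A))) := rfl
      rw [hl, ← TensorProduct.map_comp, id_comp]
    calc conv (Coalgebra.comul (R := K) (A := A))
          (TensorProduct.map (antipode (R := K) (A := A)) (antipode (R := K) (A := A)) ∘ₗ
            Coalgebra.comul)
        = LinearMap.mul' K (A ⊗[K] A) ∘ₗ
            (LinearMap.lTensor (A ⊗[K] A)
              (TensorProduct.map (antipode (R := K) (A := A)) (antipode (R := K) (A := A))) ∘ₗ
             (TensorProduct.map (Coalgebra.comul (R := K) (A := A)) Coalgebra.comul ∘ₗ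
              Coalgebra.comul)) := by
          rw [conv, step1]; simp only [comp_assoc]
      _ = (TensorProduct.map (LinearMap.mul' K A) (LinearMap.mul' K A) ∘ₗ
            (TensorProduct.tensorTensorTensorComm K A A A A).toLinearMap) ∘ₗ
            (LinearMap.lTensor (A ⊗[K] A)
              (TensorProduct.map (antipode (R := K) (A := A)) (antipode (R := K) (A := A))) ∘ₗ
             (TensorProduct.map (Coalgebra.comul (R := K) (A := A)) Coalgebra.comul ∘ₗ
              Coalgebra.comul)) := by
          rw [← mul'_tensorProduct]
      _ = TensorProduct.map (LinearMap.mul' K A) (LinearMap.mul' K A) ∘ₗ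
            (((TensorProduct.tensorTensorTensorComm K A A A A).toLinearMap ∘ₗ
              LinearMap.lTensor (A ⊗[K] A)
              (TensorProduct.map (antipode (R := K) (A := A)) (antipode (R := K) (A := A)))) ∘ₗ
             (TensorProduct.map (Coalgebra.comul (R := K) (A := A)) Coalgebra.comul ∘ₗ
              Coalgebra.comul)) := by
          simp only [comp_assoc]
      _ = TensorProduct.map (LinearMap.mul' K A) (LinearMap.mul' K A) ∘ₗ
            ((TensorProduct.map (LinearMap.lTensor A (antipode (R := K) (A := A)))
                (LinearMap.lTensor A (antipode (R := K) (A := A))) ∘ₗ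
              (TensorProduct.tensorTensorTensorComm K A A A A).toLinearMap) ∘ₗ
             (TensorProduct.map (Coalgebra.comul (R := K) (A := A)) Coalgebra.comul ∘ₗ
              Coalgebra.comul)) := by
          rw [nat3]
      _ = (TensorProduct.map (LinearMap.mul' K A) (LinearMap.mul' K A) ∘ₗ
            TensorProduct.map (LinearMap.lTensor A (antipode (R := K) (A := A)))
                (LinearMap.lTensor A (antipode (R := K) (A := A)))) ∘ₗ
            ((TensorProduct.tensorTensorTensorComm K A A A A).toLinearMap ∘ₗ
             (TensorProduct.map (Coalgebra.comul (R := K) (A := A)) Coalgebra.comul ∘ₗ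
              Coalgebra.comul)) := by
          simp only [comp_assoc]
      _ = (TensorProduct.map (LinearMap.mul' K A) (LinearMap.mul' K A) ∘ₗ
            TensorProduct.map (LinearMap.lTensor A (antipode (R := K) (A := A)))
                (LinearMap.lTensor A (antipode (R := K) (A := A)))) ∘ₗ
            (TensorProduct.map (Coalgebra.comul (R := K) (A := A)) Coalgebra.comul ∘ₗ
              Coalgebra.comul) := by
          rw [C1 hA]
      _ = TensorProduct.map
            (LinearMap.mul' K A ∘ₗ
              (LinearMap.lTensor A (antipode (R := K) (A := A)) ∘ₗ Coalgebra.comul))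
            (LinearMap.mul' K A ∘ₗ
              (LinearMap.lTensor A (antipode (R := K) (A := A)) ∘ₗ Coalgebra.comul)) ∘ₗ
            Coalgebra.comul := by
          rw [← TensorProduct.map_comp, ← comp_assoc, ← TensorProduct.map_comp]
          simp only [comp_assoc]
      _ = TensorProduct.map (Algebra.linearMap K A ∘ₗ Coalgebra.counit)
            (Algebra.linearMap K A ∘ₗ Coalgebra.counit) ∘ₗ Coalgebra.comul := by
          have hax : LinearMap.mul' K A ∘ₗ
              (LinearMap.lTensor A (antipode (R := K) (A := A)) ∘ₗ Coalgebra.comul)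
              = Algebra.linearMap K A ∘ₗ Coalgebra.counit := by
            rw [← comp_assoc]
            simp only [comp_assoc]
            exact mul_antipode_lTensor_comul
          rw [hax]
      _ = convUnit := map_counit_comul

end HopfCocomm

section Main

variable {A : Type*} [Semiring A] [HopfAlgebra K A]

lemma adAct_tmul (a x : A) {ι : Type*} (r : Coalgebra.Repr K a ι) :
    adAct K A (a ⊗ₜ[K] x)
      = ∑ i ∈ r.index, r.left i * (x * antipode (R := K) (r.right i)) := by
  rw [adAct]
  simp only [coe_comp, Function.comp_apply, LinearEquiv.coe_coe, rTensor_tmul]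
  rw [← r.eq]
  simp [TensorProduct.sum_tmul, map_sum]

variable {C : Type*} [Semiring C] [HopfAlgebra K C] (f : A →ₐc[K] C)

lemma rTensor_bialgHom_mul (u v : A ⊗[K] A) :
    LinearMap.rTensor A f.toLinearMap (u * v)
      = LinearMap.rTensor A f.toLinearMap u * LinearMap.rTensor A f.toLinearMap v := by
  have h : LinearMap.rTensor A f.toLinearMap
      = (Algebra.TensorProduct.map (f : A →ₐ[K] C) (AlgHom.id K A)).toLinearMap := by
    ext a b
    simp
  rw [h]
  exact map_mul (Algebra.TensorProduct.map (f : A →ₐ[K] C) (AlgHom.id K A)) u v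

end Main

end HKN
end HKNaux

open HKN in
/-- The Hopf kernel `HKer(f) = {a | f(a₁) ⊗ a₂ = 1 ⊗ a}` of a morphism of
cocommutative Hopf algebras is normal: `a₁ x S(a₂) ∈ HKer(f)` for all `a ∈ A` and
`x ∈ HKer(f)`. -/
theorem hopfKernel_normal
    {K A C : Type*} [Field K] [Ring A] [HopfAlgebra K A] [Ring C] [HopfAlgebra K C]
    (hA : _root_.IsCocomm K A) (hC : _root_.IsCocomm K C) (f : A →ₐc[K] C) :
    ∀ (a : A), ∀ x ∈ {a : A |
        LinearMap.rTensor A f.toLinearMap (Coalgebra.comul (R := K) a) = (1 : C) ⊗ₜ[K] a},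
      adAct K A (a ⊗ₜ[K] x) ∈ {a : A |
        LinearMap.rTensor A f.toLinearMap (Coalgebra.comul (R := K) a) = (1 : C) ⊗ₜ[K] a} := by
  intro a x hx
  simp only [Set.mem_setOf_eq] at hx ⊢
  set r := ℛ K a with hrdef
  -- computing `(f ⊗ id)(Δ (S w))`
  have key : ∀ w : A,
      LinearMap.rTensor A f.toLinearMap
          (Coalgebra.comul (R := K) (HopfAlgebra.antipode (R := K) w))
        = TensorProduct.map
            (HopfAlgebra.antipode (R := K) (A := C) ∘ₗ f.toLinearMap)
            (HopfAlgebra.antipode (R := K) (A := A)) (Coalgebra.comul (R := K) w) := by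
    intro w
    have h1 := LinearMap.congr_fun (HKN.comul_antipode (K := K) (A := A) hA) w
    simp only [LinearMap.coe_comp, Function.comp_apply] at h1
    rw [h1]
    have h2 : LinearMap.rTensor A f.toLinearMap ∘ₗ
        TensorProduct.map (HopfAlgebra.antipode (R := K) (A := A))
          (HopfAlgebra.antipode (R := K) (A := A))
        = TensorProduct.map
            (HopfAlgebra.antipode (R := K) (A := C) ∘ₗ f.toLinearMap)
            (HopfAlgebra.antipode (R := K) (A := A)) := by
      have h3 : LinearMap.rTensor A f.toLinearMap
          = TensorProduct.map f.toLinearMap LinearMap.id := rfl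
      rw [h3, ← TensorProduct.map_comp, HKN.map_antipode f, LinearMap.id_comp]
    have h4 := LinearMap.congr_fun h2 (Coalgebra.comul (R := K) w)
    simp only [LinearMap.coe_comp, Function.comp_apply] at h4
    exact h4
  -- the "evaluation" map Θ
  set Θ : (A ⊗[K] A) ⊗[K] (A ⊗[K] A) →ₗ[K] C ⊗[K] A :=
    (LinearMap.mul' K (C ⊗[K] A)) ∘ₗ
      (LinearMap.lTensor (C ⊗[K] A) (LinearMap.mulLeft K ((1 : C) ⊗ₜ[K] x))) ∘ₗ
      (TensorProduct.map (LinearMap.rTensor A f.toLinearMap)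
        (TensorProduct.map
          (HopfAlgebra.antipode (R := K) (A := C) ∘ₗ f.toLinearMap)
          (HopfAlgebra.antipode (R := K) (A := A)))) ∘ₗ
      (TensorProduct.tensorTensorTensorComm K A A A A).toLinearMap with hΘ
  -- Step A : LHS = Θ ((Δ ⊗ Δ)(Δ a))
  have stepA : LinearMap.rTensor A f.toLinearMap
      (Coalgebra.comul (R := K) (adAct K A (a ⊗ₜ[K] x)))
      = Θ ((TensorProduct.map (Coalgebra.comul (R := K) (A := A)) Coalgebra.comul)
          (Coalgebra.comul (R := K) a)) := by
    have hC1 := LinearMap.congr_fun (HKN.C1 (K := K) (A := A) hA) a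
    simp only [LinearMap.coe_comp, Function.comp_apply, LinearEquiv.coe_coe] at hC1
    rw [hΘ]
    simp only [LinearMap.coe_comp, Function.comp_apply, LinearEquiv.coe_coe]
    rw [hC1, ← r.eq]
    simp only [map_sum, TensorProduct.map_tmul, LinearMap.lTensor_tmul,
      LinearMap.mul'_apply, LinearMap.mulLeft_apply]
    rw [adAct_tmul a x r, map_sum, map_sum]
    refine Finset.sum_congr rfl fun i _ => ?_
    rw [Bialgebra.comul_mul, Bialgebra.comul_mul, rTensor_bialgHom_mul f,
      rTensor_bialgHom_mul f, hx, key (r.right i)]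
  rw [stepA]
  -- Step B : evaluate Θ on `Δ u ⊗ Δ v`
  have stepB : ∀ u v : A,
      Θ ((Coalgebra.comul (R := K) u) ⊗ₜ[K] (Coalgebra.comul (R := K) v))
        = Coalgebra.counit (R := K) u • ((1 : C) ⊗ₜ[K] adAct K A (v ⊗ₜ[K] x)) := by
    intro u v
    set ru := ℛ K u with hru
    set rv := ℛ K v with hrv
    have heval : ∀ p q s t : A,
        Θ ((p ⊗ₜ[K] q) ⊗ₜ[K] (s ⊗ₜ[K] t))
          = (f p * HopfAlgebra.antipode (R := K) (f q)) ⊗ₜ[K]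
              (s * (x * HopfAlgebra.antipode (R := K) t)) := by
      intro p q s t
      rw [hΘ]
      simp only [LinearMap.coe_comp, Function.comp_apply, LinearEquiv.coe_coe,
        TensorProduct.tensorTensorTensorComm_tmul, TensorProduct.map_tmul,
        LinearMap.lTensor_tmul, LinearMap.mul'_apply, LinearMap.mulLeft_apply,
        LinearMap.rTensor_tmul, bialg_toLin_apply,
        Algebra.TensorProduct.tmul_mul_tmul, one_mul]
    calc Θ ((Coalgebra.comul (R := K) u) ⊗ₜ[K] (Coalgebra.comul (R := K) v))
        = ∑ i ∈ ru.index, ∑ j ∈ rv.index,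
            (f (ru.left i) * HopfAlgebra.antipode (R := K) (f (ru.right i))) ⊗ₜ[K]
              (rv.left j * (x * HopfAlgebra.antipode (R := K) (rv.right j))) := by
          rw [← ru.eq, ← rv.eq, TensorProduct.sum_tmul]
          simp only [TensorProduct.tmul_sum, map_sum]
          exact Finset.sum_congr rfl fun i _ => Finset.sum_congr rfl fun j _ =>
            heval _ _ _ _
      _ = (∑ i ∈ ru.index,
            f (ru.left i) * HopfAlgebra.antipode (R := K) (f (ru.right i))) ⊗ₜ[K]
          (∑ j ∈ rv.index,
            rv.left j * (x * HopfAlgebra.antipode (R := K) (rv.right j))) := by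
          rw [TensorProduct.sum_tmul]
          exact Finset.sum_congr rfl fun i _ => (TensorProduct.tmul_sum _ _ _).symm
      _ = (algebraMap K C (Coalgebra.counit (R := K) u)) ⊗ₜ[K] (adAct K A (v ⊗ₜ[K] x)) := by
          rw [sum_map_mul_antipode_map f ru, adAct_tmul v x rv]
      _ = Coalgebra.counit (R := K) u • ((1 : C) ⊗ₜ[K] adAct K A (v ⊗ₜ[K] x)) := by
          rw [Algebra.algebraMap_eq_smul_one, TensorProduct.smul_tmul']
  -- Step C : sum up
  calc Θ ((TensorProduct.map (Coalgebra.comul (R := K) (A := A)) Coalgebra.comul)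
          (Coalgebra.comul (R := K) a))
      = ∑ i ∈ r.index,
          Θ ((Coalgebra.comul (R := K) (r.left i)) ⊗ₜ[K]
            (Coalgebra.comul (R := K) (r.right i))) := by
        rw [← r.eq]
        simp only [map_sum, TensorProduct.map_tmul]
    _ = ∑ i ∈ r.index, Coalgebra.counit (R := K) (r.left i) •
          ((1 : C) ⊗ₜ[K] adAct K A (r.right i ⊗ₜ[K] x)) := by
        exact Finset.sum_congr rfl fun i _ => stepB _ _
    _ = ∑ i ∈ r.index, ((TensorProduct.mk K C A 1) ∘ₗ adAct K A ∘ₗ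
          ((TensorProduct.mk K A A).flip x)) (Coalgebra.counit (R := K) (r.left i) • r.right i) := by
        simp only [map_smul, LinearMap.coe_comp, Function.comp_apply,
          TensorProduct.mk_apply, LinearMap.flip_apply]
    _ = ((TensorProduct.mk K C A 1) ∘ₗ adAct K A ∘ₗ ((TensorProduct.mk K A A).flip x))
          (∑ i ∈ r.index, Coalgebra.counit (R := K) (r.left i) • r.right i) := by
        rw [map_sum]
    _ = (1 : C) ⊗ₜ[K] adAct K A (a ⊗ₜ[K] x) := by
        rw [HKN.counit_smul_sum r]
        simp only [LinearMap.coe_comp, Function.comp_apply, TensorProduct.mk_apply,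
          LinearMap.flip_apply]
end

section
/- Let p : A → B be a morphism of cocommutative Hopf algebras over a field K and C ⊆ B a Hopf subalgebra. Then for any Hopf subalgebra D ⊆ A, D ⊆ p⁻¹(C) if and only if p(D) ⊆ C; in other words, direct image and h-inverse image along p form a Galois connection between the lattices of Hopf subalgebras of A and of B. -/
open TensorProduct Coalgebra

/-- The `h`-inverse of a Hopf subalgebra `C ⊆ B` along `p : A → B`:
`p⁻¹(C) = {x ∈ A | p(x₁) ⊗ x₂ − 1 ⊗ x ∈ C⁺ ⊗ A}`. -/
noncomputable def hInv {K A B : Type*} [Field K] [Ring A] [HopfAlgebra K A]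
    [Ring B] [HopfAlgebra K B] (p : A →ₐc[K] B) (C : Subalgebra K B) : Set A :=
  {x : A | LinearMap.rTensor A p.toLinearMap (Coalgebra.comul (R := K) x) - (1 : B) ⊗ₜ[K] x ∈
    LinearMap.range (LinearMap.rTensor A
      (Submodule.subtype (C.toSubmodule ⊓ LinearMap.ker (Coalgebra.counit (R := K)))))}

/-- Galois connection: `D ⊆ p⁻¹(C)` if and only if `p(D) ⊆ C`, for Hopf subalgebras
`D ⊆ A`, `C ⊆ B` and a morphism of cocommutative Hopf algebras `p : A → B`. -/
theorem hInv_galoisConnection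
    {K A B : Type*} [Field K] [Ring A] [HopfAlgebra K A] [Ring B] [HopfAlgebra K B]
    (hA : _root_.IsCocomm K A) (hB : _root_.IsCocomm K B) (p : A →ₐc[K] B) (C : Subalgebra K B)
    (hC_comul : ∀ c ∈ C, Coalgebra.comul (R := K) c ∈
      LinearMap.range (TensorProduct.map C.toSubmodule.subtype C.toSubmodule.subtype))
    (hC_antipode : ∀ c ∈ C, HopfAlgebra.antipode (R := K) c ∈ C)
    (D : Subalgebra K A)
    (hD_comul : ∀ d ∈ D, Coalgebra.comul (R := K) d ∈
      LinearMap.range (TensorProduct.map D.toSubmodule.subtype D.toSubmodule.subtype))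
    (hD_antipode : ∀ d ∈ D, HopfAlgebra.antipode (R := K) d ∈ D) :
    (D : Set A) ⊆ hInv p C ↔ ∀ d ∈ D, p d ∈ C := by
  classical
  set S := C.toSubmodule ⊓ LinearMap.ker (Coalgebra.counit (R := K) (A := B)) with hS
  constructor
  · intro h d hd
    obtain ⟨y, hy⟩ := h hd
    set φ : B ⊗[K] A →ₗ[K] B :=
      (TensorProduct.rid K B).toLinearMap ∘ₗ
        LinearMap.lTensor B (Coalgebra.counit (R := K) (A := A)) with hφ
    have key : φ (LinearMap.rTensor A p.toLinearMap (Coalgebra.comul (R := K) d)) = p d := by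
      have hc : φ ∘ₗ LinearMap.rTensor A p.toLinearMap
          = p.toLinearMap ∘ₗ (TensorProduct.rid K A).toLinearMap ∘ₗ
            LinearMap.lTensor A (Coalgebra.counit (R := K)) := by
        ext a a'
        simp [hφ]
      have h2 := LinearMap.congr_fun hc (Coalgebra.comul (R := K) d)
      simp only [LinearMap.comp_apply] at h2
      rw [h2, Coalgebra.lTensor_counit_comul]
      simp only [LinearEquiv.coe_coe, TensorProduct.rid_tmul, one_smul]
      rfl
    have mem : ∀ z : ↥S ⊗[K] A, φ (LinearMap.rTensor A (Submodule.subtype S) z) ∈ C := by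
      intro z
      induction z using TensorProduct.induction_on with
      | zero => simpa using C.zero_mem
      | tmul s a =>
        simp only [hφ, LinearMap.comp_apply, LinearMap.rTensor_tmul, LinearMap.lTensor_tmul,
          Submodule.coe_subtype, LinearEquiv.coe_coe, TensorProduct.rid_tmul]
        exact C.toSubmodule.smul_mem _ (Submodule.mem_inf.mp s.2).1
      | add u v hu hv =>
        rw [map_add, map_add]
        exact C.add_mem hu hv
    have hmem := mem y
    rw [hy, map_sub, key] at hmem
    have hφ1 : φ ((1 : B) ⊗ₜ[K] d) = Coalgebra.counit (R := K) d • (1 : B) := by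
      simp [hφ]
    rw [hφ1] at hmem
    have : p d = (p d - Coalgebra.counit (R := K) d • (1 : B))
        + Coalgebra.counit (R := K) d • (1 : B) := by abel
    rw [this]
    exact C.add_mem hmem (C.toSubmodule.smul_mem _ C.one_mem)
  · intro h x hx
    obtain ⟨t, ht⟩ := hD_comul x hx
    set g : A →ₗ[K] B :=
      p.toLinearMap - (Algebra.linearMap K B) ∘ₗ (Coalgebra.counit (R := K) (A := A)) with hg
    have hf : ∀ d : ↥D.toSubmodule, g d.1 ∈ S := by
      intro d
      refine Submodule.mem_inf.mpr ⟨?_, ?_⟩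
      · exact C.sub_mem (h d.1 d.2) (C.algebraMap_mem _)
      · simp [hg, LinearMap.mem_ker, CoalgHomClass.counit_comp_apply]
    set f : ↥D.toSubmodule →ₗ[K] ↥S :=
      (g ∘ₗ D.toSubmodule.subtype).codRestrict S (fun d => hf d) with hfdef
    refine ⟨TensorProduct.map f D.toSubmodule.subtype t, ?_⟩
    have keymap :
        LinearMap.rTensor A (Submodule.subtype S) ∘ₗ TensorProduct.map f D.toSubmodule.subtype
          = LinearMap.rTensor A p.toLinearMap ∘ₗ
              TensorProduct.map D.toSubmodule.subtype D.toSubmodule.subtype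
            - (TensorProduct.mk K B A 1) ∘ₗ (TensorProduct.lid K A).toLinearMap ∘ₗ
                LinearMap.rTensor A (Coalgebra.counit (R := K)) ∘ₗ
                TensorProduct.map D.toSubmodule.subtype D.toSubmodule.subtype := by
      ext d e
      simp [hfdef, hg, TensorProduct.sub_tmul, TensorProduct.smul_tmul,
        Algebra.algebraMap_eq_smul_one]
    have hkey := LinearMap.congr_fun keymap t
    simp only [LinearMap.comp_apply, LinearMap.sub_apply] at hkey
    rw [hkey, ht, Coalgebra.rTensor_counit_comul]
    simp
end

section
/- Let p : A → B be a morphism of cocommutative Hopf algebras over a field K and C ⊆ B a Hopf subalgebra. Then C = p(p⁻¹(C)) if and only if C = p(D) for some Hopf subalgebra D ⊆ A. -/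
open TensorProduct Coalgebra

open LinearMap

namespace HopfAux

variable {K : Type*} [CommSemiring K]

section Conv

variable {A : Type*} [AddCommMonoid A] [Module K A] [Coalgebra K A]
variable {E : Type*} [Semiring E] [Algebra K E]

/-- Convolution product on linear maps from a coalgebra to an algebra. -/
noncomputable def conv (f g : A →ₗ[K] E) : A →ₗ[K] E :=
  mul' K E ∘ₗ TensorProduct.map f g ∘ₗ comul

/-- Convolution unit. -/
noncomputable def convOne : A →ₗ[K] E :=
  Algebra.linearMap K E ∘ₗ counit

lemma conv_apply (f g : A →ₗ[K] E) (x : A) :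
    conv f g x = mul' K E (TensorProduct.map f g (comul x)) := rfl

lemma convOne_apply (x : A) : (convOne : A →ₗ[K] E) x = counit (R := K) x • 1 := by
  simp [convOne, Algebra.linearMap_apply, Algebra.algebraMap_eq_smul_one]

lemma mul'_assoc' :
    mul' K E ∘ₗ rTensor E (mul' K E) =
      mul' K E ∘ₗ lTensor E (mul' K E) ∘ₗ (TensorProduct.assoc K E E E).toLinearMap := by
  apply TensorProduct.ext_threefold
  intro x y z
  simp [mul_assoc]

lemma assoc_natural {M N P Q R S : Type*}
    [AddCommMonoid M] [AddCommMonoid N] [AddCommMonoid P] [AddCommMonoid Q]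
    [AddCommMonoid R] [AddCommMonoid S] [Module K M] [Module K N] [Module K P]
    [Module K Q] [Module K R] [Module K S]
    (f : M →ₗ[K] Q) (g : N →ₗ[K] R) (h : P →ₗ[K] S) :
    (TensorProduct.assoc K Q R S).toLinearMap ∘ₗ
        TensorProduct.map (TensorProduct.map f g) h =
      TensorProduct.map f (TensorProduct.map g h) ∘ₗ
        (TensorProduct.assoc K M N P).toLinearMap := by
  apply TensorProduct.ext_threefold
  intro x y z
  simp

lemma conv_assoc (f g h : A →ₗ[K] E) : conv (conv f g) h = conv f (conv g h) := by
  have e1 : TensorProduct.map (conv f g) h =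
      rTensor E (mul' K E) ∘ₗ TensorProduct.map (TensorProduct.map f g) h ∘ₗ
        rTensor A (comul (R := K)) := by
    apply TensorProduct.ext'
    intro x y
    simp [conv_apply]
  have e2 : TensorProduct.map f (conv g h) =
      lTensor E (mul' K E) ∘ₗ TensorProduct.map f (TensorProduct.map g h) ∘ₗ
        lTensor A (comul (R := K)) := by
    apply TensorProduct.ext'
    intro x y
    simp [conv_apply]
  ext x
  calc conv (conv f g) h x
      = mul' K E (TensorProduct.map (conv f g) h (comul x)) := rfl
    _ = mul' K E (rTensor E (mul' K E)
          (TensorProduct.map (TensorProduct.map f g) h (rTensor A comul (comul x)))) := by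
        rw [LinearMap.congr_fun e1 (comul x)]; rfl
    _ = mul' K E (lTensor E (mul' K E) ((TensorProduct.assoc K E E E)
          (TensorProduct.map (TensorProduct.map f g) h (rTensor A comul (comul x))))) := by
        rw [← LinearMap.comp_apply, LinearMap.congr_fun (mul'_assoc' (K := K) (E := E))]; rfl
    _ = mul' K E (lTensor E (mul' K E) (TensorProduct.map f (TensorProduct.map g h)
          (lTensor A comul (comul x)))) := by
        exact congrArg _ (congrArg _ (by
          simpa using LinearMap.congr_fun (assoc_natural f g h) (rTensor A comul (comul x))))
    _ = conv f (conv g h) x := by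
        rw [conv_apply, LinearMap.congr_fun e2 (comul x)]; rfl

lemma conv_one (f : A →ₗ[K] E) : conv f convOne = f := by
  have e : mul' K E ∘ₗ TensorProduct.map f (convOne (K := K) (A := A) (E := E)) =
      f ∘ₗ (TensorProduct.rid K A).toLinearMap ∘ₗ lTensor A (counit (R := K)) := by
    apply TensorProduct.ext'
    intro x y
    simp [convOne_apply, Algebra.algebraMap_eq_smul_one, mul_smul_comm]
  ext x
  calc conv f convOne x
      = (mul' K E ∘ₗ TensorProduct.map f convOne) (comul x) := rfl
    _ = f ((TensorProduct.rid K A) (lTensor A counit (comul x))) := by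
        rw [e]; rfl
    _ = f x := by
        rw [Coalgebra.lTensor_counit_comul]
        simp

lemma one_conv (f : A →ₗ[K] E) : conv convOne f = f := by
  have e : mul' K E ∘ₗ TensorProduct.map (convOne (K := K) (A := A) (E := E)) f =
      f ∘ₗ (TensorProduct.lid K A).toLinearMap ∘ₗ rTensor A (counit (R := K)) := by
    apply TensorProduct.ext'
    intro x y
    simp [convOne_apply, Algebra.algebraMap_eq_smul_one, smul_mul_assoc]
  ext x
  calc conv convOne f x
      = (mul' K E ∘ₗ TensorProduct.map convOne f) (comul x) := rfl
    _ = f ((TensorProduct.lid K A) (rTensor A counit (comul x))) := by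
        rw [e]; rfl
    _ = f x := by
        rw [Coalgebra.rTensor_counit_comul]
        simp

lemma conv_left_right_inv {l a r : A →ₗ[K] E}
    (h1 : conv l a = convOne) (h2 : conv a r = convOne) : l = r := by
  have h3 : conv l (conv a r) = conv (conv l a) r := (conv_assoc l a r).symm
  rw [h1, h2, conv_one, one_conv] at h3
  exact h3

/-- Push an algebra morphism through a convolution. -/
lemma algHom_comp_conv {F : Type*} [Semiring F] [Algebra K F] (φ : E →ₐ[K] F)
    (f g : A →ₗ[K] E) :
    φ.toLinearMap ∘ₗ conv f g = conv (φ.toLinearMap ∘ₗ f) (φ.toLinearMap ∘ₗ g) := by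
  have e : ∀ t : E ⊗[K] E, φ (mul' K E t) = mul' K F (TensorProduct.map φ.toLinearMap φ.toLinearMap t) := by
    intro t
    induction t using TensorProduct.induction_on with
    | zero => simp
    | tmul a b => simp
    | add u v hu hv => simp [map_add, hu, hv]
  ext x
  simp only [LinearMap.comp_apply, conv_apply, AlgHom.toLinearMap_apply]
  rw [e]
  congr 1
  rw [← LinearMap.comp_apply, ← TensorProduct.map_comp]

lemma algHom_comp_convOne {F : Type*} [Semiring F] [Algebra K F] (φ : E →ₐ[K] F) :
    φ.toLinearMap ∘ₗ (convOne (K := K) (A := A) (E := E)) = convOne := by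
  ext x
  simp [convOne_apply, Algebra.algebraMap_eq_smul_one]

/-- Pull a coalgebra morphism into a convolution. -/
lemma conv_comp_coalgHom {A' : Type*} [AddCommMonoid A'] [Module K A'] [Coalgebra K A']
    (ψ : A' →ₗ[K] A)
    (hψ : TensorProduct.map ψ ψ ∘ₗ comul (R := K) (A := A') = comul (R := K) (A := A) ∘ₗ ψ)
    (f g : A →ₗ[K] E) :
    conv f g ∘ₗ ψ = conv (f ∘ₗ ψ) (g ∘ₗ ψ) := by
  ext x
  have h := LinearMap.congr_fun hψ x
  simp only [LinearMap.comp_apply] at h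
  simp only [LinearMap.comp_apply, conv_apply]
  rw [← h]
  have h2 : TensorProduct.map f g ((TensorProduct.map ψ ψ) (comul x)) =
      TensorProduct.map (f ∘ₗ ψ) (g ∘ₗ ψ) (comul x) := by
    rw [← LinearMap.comp_apply, ← TensorProduct.map_comp]
  rw [← h2]

lemma convOne_comp_coalgHom {A' : Type*} [AddCommMonoid A'] [Module K A'] [Coalgebra K A']
    (ψ : A' →ₗ[K] A) (hψ : counit (R := K) (A := A) ∘ₗ ψ = counit) :
    (convOne (K := K) (A := A) (E := E)) ∘ₗ ψ = convOne := by
  ext x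
  have h := LinearMap.congr_fun hψ x
  simp only [LinearMap.comp_apply] at h
  simp only [LinearMap.comp_apply, convOne, ← h]

end Conv

section Cocomm

variable {A : Type*} [AddCommMonoid A] [Module K A] [Coalgebra K A]
variable {E F : Type*} [Semiring E] [Algebra K E] [Semiring F] [Algebra K F]

lemma mul'_tensorProduct :
    mul' K (E ⊗[K] F) =
      TensorProduct.map (mul' K E) (mul' K F) ∘ₗ
        (tensorTensorTensorComm K E F E F).toLinearMap := by
  apply TensorProduct.ext_fourfold'
  intro a b c d
  simp [Algebra.TensorProduct.tmul_mul_tmul]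

lemma ttc_natural {M N P Q E' F' : Type*}
    [AddCommMonoid M] [AddCommMonoid N] [AddCommMonoid P] [AddCommMonoid Q]
    [AddCommMonoid E'] [AddCommMonoid F'] [Module K M] [Module K N] [Module K P]
    [Module K Q] [Module K E'] [Module K F']
    (f : M →ₗ[K] E) (g : N →ₗ[K] F) (f' : P →ₗ[K] E') (g' : Q →ₗ[K] F') :
    (tensorTensorTensorComm K E F E' F').toLinearMap ∘ₗ
        TensorProduct.map (TensorProduct.map f g) (TensorProduct.map f' g') =
      TensorProduct.map (TensorProduct.map f f') (TensorProduct.map g g') ∘ₗ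
        (tensorTensorTensorComm K M N P Q).toLinearMap := by
  apply TensorProduct.ext_fourfold'
  intro a b c d
  simp

/-- The middle-swap map `x ⊗ (y ⊗ z) ↦ y ⊗ (x ⊗ z)`. -/
noncomputable def mmid : A ⊗[K] (A ⊗[K] A) →ₗ[K] A ⊗[K] (A ⊗[K] A) :=
  (TensorProduct.assoc K A A A).toLinearMap ∘ₗ
    rTensor A (TensorProduct.comm K A A).toLinearMap ∘ₗ
    (TensorProduct.assoc K A A A).symm.toLinearMap

lemma ttc_eq_mmid :
    (tensorTensorTensorComm K A A A A).toLinearMap =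
      (TensorProduct.assoc K A A (A ⊗[K] A)).symm.toLinearMap ∘ₗ
        lTensor A (mmid (K := K) (A := A)) ∘ₗ
        (TensorProduct.assoc K A A (A ⊗[K] A)).toLinearMap := by
  apply TensorProduct.ext_fourfold'
  intro a b c d
  simp [mmid]

lemma assoc_lTensor_natural :
    (TensorProduct.assoc K A A (A ⊗[K] A)).toLinearMap ∘ₗ
        lTensor (A ⊗[K] A) (comul (R := K) (A := A)) =
      lTensor A (lTensor A (comul (R := K) (A := A))) ∘ₗ
        (TensorProduct.assoc K A A A).toLinearMap := by
  apply TensorProduct.ext_threefold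
  intro x y z
  simp

lemma mmid_comul (hA : _root_.IsCocomm K A) :
    mmid (K := K) (A := A) ∘ₗ lTensor A (comul (R := K)) ∘ₗ comul =
      lTensor A (comul (R := K)) ∘ₗ comul := by
  ext x
  simp only [LinearMap.comp_apply]
  rw [← Coalgebra.coassoc_apply (R := K) x]
  simp only [mmid, LinearMap.comp_apply, LinearEquiv.coe_coe, LinearEquiv.symm_apply_apply]
  rw [← LinearMap.comp_apply (rTensor A _), ← LinearMap.rTensor_comp, hA]

lemma comul4_cocomm (hA : _root_.IsCocomm K A) :
    (tensorTensorTensorComm K A A A A).toLinearMap ∘ₗ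
        TensorProduct.map (comul (R := K)) (comul (R := K)) ∘ₗ comul =
      TensorProduct.map (comul (R := K)) (comul (R := K)) ∘ₗ comul := by
  ext x
  simp only [LinearMap.comp_apply, LinearEquiv.coe_coe]
  have hw : TensorProduct.map (comul (R := K) (A := A)) comul (comul x) =
      lTensor (A ⊗[K] A) comul (rTensor A comul (comul x)) := by
    have h1 := LinearMap.congr_fun (lTensor_comp_rTensor (f := comul (R := K) (A := A))
      (g := comul (R := K) (A := A))) (comul x)
    simp only [LinearMap.comp_apply] at h1
    exact h1.symm
  have key : (TensorProduct.assoc K A A (A ⊗[K] A))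
      (TensorProduct.map (comul (R := K) (A := A)) comul (comul x)) =
      lTensor A (lTensor A (comul (R := K)) ∘ₗ comul) (comul x) := by
    rw [hw]
    have h1 := LinearMap.congr_fun (assoc_lTensor_natural (K := K) (A := A))
      (rTensor A comul (comul x))
    simp only [LinearMap.comp_apply, LinearEquiv.coe_coe] at h1
    rw [h1, Coalgebra.coassoc_apply]
    simpa using (LinearMap.congr_fun
      (LinearMap.lTensor_comp A (g := lTensor A (comul (R := K) (A := A)))
        (f := comul (R := K) (A := A))) (comul x)).symm
  have h2 := LinearMap.congr_fun (ttc_eq_mmid (K := K) (A := A))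
    (TensorProduct.map (comul (R := K) (A := A)) comul (comul x))
  simp only [LinearMap.comp_apply, LinearEquiv.coe_coe] at h2
  rw [h2, key]
  have h3 : lTensor A (mmid (K := K) (A := A))
      (lTensor A (lTensor A (comul (R := K)) ∘ₗ comul) (comul x)) =
      lTensor A (lTensor A (comul (R := K)) ∘ₗ comul) (comul x) := by
    have h4 := LinearMap.congr_fun (LinearMap.lTensor_comp A
      (g := mmid (K := K) (A := A))
      (f := lTensor A (comul (R := K) (A := A)) ∘ₗ comul)) (comul x)
    simp only [LinearMap.comp_apply] at h4
    rw [← h4, mmid_comul hA]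
  rw [h3, ← key, LinearEquiv.symm_apply_apply]

lemma conv_comul_comul (hA : _root_.IsCocomm K A)
    (f f' : A →ₗ[K] E) (g g' : A →ₗ[K] F) :
    conv (TensorProduct.map f g ∘ₗ comul) (TensorProduct.map f' g' ∘ₗ comul) =
      TensorProduct.map (conv f f') (conv g g') ∘ₗ comul := by
  ext x
  simp only [LinearMap.comp_apply, conv_apply]
  have e0 : TensorProduct.map (TensorProduct.map f g ∘ₗ comul)
        (TensorProduct.map f' g' ∘ₗ comul) (comul x) =
      TensorProduct.map (TensorProduct.map f g) (TensorProduct.map f' g')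
        (TensorProduct.map (comul (R := K)) comul (comul x)) := by
    simpa using LinearMap.congr_fun (TensorProduct.map_comp (f₂ := TensorProduct.map f g)
      (f₁ := comul (R := K)) (g₂ := TensorProduct.map f' g') (g₁ := comul (R := K))) (comul x)
  rw [e0]
  have e2 := LinearMap.congr_fun (mul'_tensorProduct (K := K) (E := E) (F := F))
    (TensorProduct.map (TensorProduct.map f g) (TensorProduct.map f' g')
      (TensorProduct.map (comul (R := K)) comul (comul x)))
  simp only [LinearMap.comp_apply, LinearEquiv.coe_coe] at e2
  rw [e2]
  have e3 := LinearMap.congr_fun (ttc_natural f g f' g')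
    (TensorProduct.map (comul (R := K)) comul (comul x))
  simp only [LinearMap.comp_apply, LinearEquiv.coe_coe] at e3
  rw [e3]
  have e4 := LinearMap.congr_fun (comul4_cocomm hA) x
  simp only [LinearMap.comp_apply, LinearEquiv.coe_coe] at e4
  rw [e4]
  have e1 : TensorProduct.map (conv f f') (conv g g') (comul x) =
      TensorProduct.map (mul' K E) (mul' K F)
        (TensorProduct.map (TensorProduct.map f f') (TensorProduct.map g g')
          (TensorProduct.map (comul (R := K)) comul (comul x))) := by
    have i1 := LinearMap.congr_fun (TensorProduct.map_comp
      (f₂ := mul' K E ∘ₗ TensorProduct.map f f') (f₁ := comul (R := K))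
      (g₂ := mul' K F ∘ₗ TensorProduct.map g g') (g₁ := comul (R := K))) (comul x)
    have i2 := LinearMap.congr_fun (TensorProduct.map_comp
      (f₂ := mul' K E) (f₁ := TensorProduct.map f f') (g₂ := mul' K F) (g₁ := TensorProduct.map g g'))
      (TensorProduct.map (comul (R := K)) comul (comul x))
    simp only [LinearMap.comp_apply] at i1 i2
    rw [← i2, ← i1]
    rfl
  rw [e1]

lemma map_convOne_convOne :
    TensorProduct.map (convOne (K := K) (A := A) (E := E))
        (convOne (K := K) (A := A) (E := F)) ∘ₗ comul =
      convOne (K := K) (A := A) (E := E ⊗[K] F) := by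
  ext x
  simp only [LinearMap.comp_apply]
  have e0 : TensorProduct.map (convOne (K := K) (A := A) (E := E))
        (convOne (K := K) (A := A) (E := F)) (comul x) =
      TensorProduct.map (Algebra.linearMap K E) (Algebra.linearMap K F)
        (TensorProduct.map (counit (R := K)) (counit (R := K)) (comul x)) := by
    simpa [convOne] using LinearMap.congr_fun (TensorProduct.map_comp
      (f₂ := Algebra.linearMap K E) (f₁ := counit (R := K) (A := A))
      (g₂ := Algebra.linearMap K F) (g₁ := counit (R := K) (A := A))) (comul x)
  have e1 : TensorProduct.map (counit (R := K) (A := A)) (counit (R := K) (A := A)) (comul x) =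
      (1 : K) ⊗ₜ[K] counit (R := K) x := by
    have h1 := LinearMap.congr_fun (lTensor_comp_rTensor (f := counit (R := K) (A := A))
      (g := counit (R := K) (A := A))) (comul x)
    simp only [LinearMap.comp_apply] at h1
    rw [← h1, Coalgebra.rTensor_counit_comul]
    simp
  rw [e0, e1, convOne_apply]
  simp [Algebra.TensorProduct.one_def, Algebra.algebraMap_eq_smul_one,
    TensorProduct.smul_tmul]

end Cocomm

section Hopf

variable {A : Type*} [Semiring A] [HopfAlgebra K A]
variable {B : Type*} [Semiring B] [HopfAlgebra K B]

lemma conv_antipode_id :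
    conv (HopfAlgebra.antipode (R := K) (A := A)) LinearMap.id = convOne := by
  rw [conv, convOne]
  exact HopfAlgebra.mul_antipode_rTensor_comul

lemma conv_id_antipode :
    conv LinearMap.id (HopfAlgebra.antipode (R := K) (A := A)) = convOne := by
  rw [conv, convOne]
  exact HopfAlgebra.mul_antipode_lTensor_comul

lemma antipode_one' : HopfAlgebra.antipode (R := K) (A := A) 1 = 1 := by
  have h := HopfAlgebra.mul_antipode_rTensor_comul_apply (R := K) (A := A) 1
  simpa [Algebra.TensorProduct.one_def] using h

lemma counit_comp_antipode :
    counit (R := K) (A := A) ∘ₗ HopfAlgebra.antipode (R := K) = counit := by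
  have h := algHom_comp_conv (Bialgebra.counitAlgHom K A)
    (HopfAlgebra.antipode (R := K) (A := A)) LinearMap.id
  rw [conv_antipode_id, algHom_comp_convOne] at h
  have hε : (Bialgebra.counitAlgHom K A).toLinearMap = counit (R := K) := rfl
  rw [hε, LinearMap.comp_id] at h
  have hone : (convOne : A →ₗ[K] K) = counit := by
    ext x; simp [convOne_apply]
  calc counit (R := K) (A := A) ∘ₗ HopfAlgebra.antipode (R := K)
      = conv (counit (R := K) (A := A) ∘ₗ HopfAlgebra.antipode (R := K)) convOne :=
        (conv_one _).symm
    _ = conv (counit (R := K) (A := A) ∘ₗ HopfAlgebra.antipode (R := K)) counit := by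
        rw [hone]
    _ = convOne := h.symm
    _ = counit := hone

lemma bialgHom_comp_antipode (p : A →ₐc[K] B) :
    p.toLinearMap ∘ₗ HopfAlgebra.antipode (R := K) =
      HopfAlgebra.antipode (R := K) ∘ₗ p.toLinearMap := by
  apply conv_left_right_inv (a := p.toLinearMap)
  · have h := algHom_comp_conv (p : A →ₐ[K] B)
      (HopfAlgebra.antipode (R := K) (A := A)) LinearMap.id
    rw [conv_antipode_id, algHom_comp_convOne, LinearMap.comp_id] at h
    have h' : ((p : A →ₐ[K] B)).toLinearMap = p.toLinearMap := rfl
    rw [h'] at h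
    exact h.symm
  · have h := conv_comp_coalgHom (E := B) p.toLinearMap
      (CoalgHomClass.map_comp_comul p) LinearMap.id (HopfAlgebra.antipode (R := K))
    rw [conv_id_antipode, LinearMap.id_comp] at h
    rw [← h]
    exact convOne_comp_coalgHom p.toLinearMap (CoalgHomClass.counit_comp p)

lemma comul_comp_antipode (hA : _root_.IsCocomm K A) :
    comul (R := K) ∘ₗ HopfAlgebra.antipode (R := K) (A := A) =
      TensorProduct.map (HopfAlgebra.antipode (R := K)) (HopfAlgebra.antipode (R := K)) ∘ₗ
        comul := by
  apply conv_left_right_inv (a := (comul : A →ₗ[K] A ⊗[K] A))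
  · have h := algHom_comp_conv (Bialgebra.comulAlgHom K A)
      (HopfAlgebra.antipode (R := K) (A := A)) LinearMap.id
    rw [conv_antipode_id, algHom_comp_convOne] at h
    have hΔ : (Bialgebra.comulAlgHom K A).toLinearMap = comul (R := K) := rfl
    rw [hΔ, LinearMap.comp_id] at h
    exact h.symm
  · have h := conv_comul_comul hA LinearMap.id
      (HopfAlgebra.antipode (R := K) (A := A)) LinearMap.id
      (HopfAlgebra.antipode (R := K) (A := A))
    rw [TensorProduct.map_id, LinearMap.id_comp, conv_id_antipode,
      map_convOne_convOne] at h
    exact h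

end Hopf

section Main

variable {K A B : Type*} [Field K] [Ring A] [HopfAlgebra K A] [Ring B] [HopfAlgebra K B]

variable (p : A →ₐc[K] B) (C : Subalgebra K B)

/-- The augmentation ideal `C⁺` as a submodule of `B`. -/
noncomputable def Cp : Submodule K B :=
  C.toSubmodule ⊓ LinearMap.ker (Coalgebra.counit (R := K))

/-- The submodule `C⁺ ⊗ A` of `B ⊗ A`. -/
noncomputable def NN : Submodule K (B ⊗[K] A) :=
  LinearMap.range (LinearMap.rTensor A (Submodule.subtype (Cp  C)))

/-- The comodule-style map `x ↦ p(x₁) ⊗ x₂`. -/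
noncomputable def rho : A →ₗ[K] B ⊗[K] A :=
  LinearMap.rTensor A p.toLinearMap ∘ₗ comul

/-- `x ↦ p(x₁) ⊗ x₂ - 1 ⊗ x`. -/
noncomputable def phim : A →ₗ[K] B ⊗[K] A :=
  rho p - TensorProduct.mk K B A 1

lemma phim_apply (x : A) :
    phim p x = LinearMap.rTensor A p.toLinearMap (comul x) - (1 : B) ⊗ₜ[K] x := rfl

lemma mem_hInv_iff (x : A) : x ∈ hInv p C ↔ phim p x ∈ NN  C := Iff.rfl

lemma mem_NN_of {c : B} (hc : c ∈ Cp  C) (a : A) : c ⊗ₜ[K] a ∈ NN  C :=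
  ⟨(⟨c, hc⟩ : Cp  C) ⊗ₜ[K] a, rfl⟩

lemma NN_mul_left (a : A) {n : B ⊗[K] A} (hn : n ∈ NN  C) :
    ((1 : B) ⊗ₜ[K] a) * n ∈ NN  C := by
  obtain ⟨u, rfl⟩ := hn
  induction u using TensorProduct.induction_on with
  | zero => simpa using Submodule.zero_mem _
  | tmul c b =>
      simp only [LinearMap.rTensor_tmul, Submodule.coe_subtype,
        Algebra.TensorProduct.tmul_mul_tmul, one_mul]
      exact mem_NN_of C c.2 _
  | add u v hu hv =>
      rw [map_add, mul_add]
      exact Submodule.add_mem _ hu hv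

lemma NN_mul_right (a : A) {n : B ⊗[K] A} (hn : n ∈ NN  C) :
    n * ((1 : B) ⊗ₜ[K] a) ∈ NN  C := by
  obtain ⟨u, rfl⟩ := hn
  induction u using TensorProduct.induction_on with
  | zero => simpa using Submodule.zero_mem _
  | tmul c b =>
      simp only [LinearMap.rTensor_tmul, Submodule.coe_subtype,
        Algebra.TensorProduct.tmul_mul_tmul, mul_one]
      exact mem_NN_of C c.2 _
  | add u v hu hv =>
      rw [map_add, add_mul]
      exact Submodule.add_mem _ hu hv

lemma Cp_mul_mem {c c' : B} (hc : c ∈ Cp C) (hc' : c' ∈ Cp C) :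
    c * c' ∈ Cp C := by
  rw [Cp, Submodule.mem_inf] at hc hc' ⊢
  obtain ⟨hc1, hc2⟩ := hc
  obtain ⟨hc1', hc2'⟩ := hc'
  rw [LinearMap.mem_ker] at hc2
  constructor
  · exact C.mul_mem hc1 hc1'
  · rw [LinearMap.mem_ker, Bialgebra.counit_mul, hc2, zero_mul]

lemma NN_mul_pure {c : B} (hc : c ∈ Cp  C) (b : A) {m : B ⊗[K] A}
    (hm : m ∈ NN  C) : (c ⊗ₜ[K] b) * m ∈ NN  C := by
  obtain ⟨v, rfl⟩ := hm
  induction v using TensorProduct.induction_on with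
  | zero => simpa using Submodule.zero_mem _
  | tmul c' b' =>
      simp only [LinearMap.rTensor_tmul, Submodule.coe_subtype,
        Algebra.TensorProduct.tmul_mul_tmul]
      exact mem_NN_of C (Cp_mul_mem C hc c'.2) _
  | add u v hu hv =>
      rw [map_add, mul_add]
      exact Submodule.add_mem _ hu hv

lemma NN_mul {n m : B ⊗[K] A} (hn : n ∈ NN  C) (hm : m ∈ NN  C) :
    n * m ∈ NN  C := by
  obtain ⟨u, rfl⟩ := hn
  induction u using TensorProduct.induction_on with
  | zero => simpa using Submodule.zero_mem _
  | tmul c b =>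
      simp only [LinearMap.rTensor_tmul, Submodule.coe_subtype]
      exact NN_mul_pure C c.2 b hm
  | add u v hu hv =>
      rw [map_add, add_mul]
      exact Submodule.add_mem _ hu hv

lemma p_lin_apply (x : A) : p.toLinearMap x = p x := rfl

lemma p_coalg_apply (x : A) : p.toCoalgHom x = p x := rfl

lemma p_lin_mul (x y : A) : p.toLinearMap (x * y) = p.toLinearMap x * p.toLinearMap y := by
  simp only [p_lin_apply, map_mul]

lemma p_lin_one : p.toLinearMap (1 : A) = 1 := by
  simp only [p_lin_apply, map_one]

lemma rTensor_p_mul (u v : A ⊗[K] A) :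
    LinearMap.rTensor A p.toLinearMap (u * v) =
      LinearMap.rTensor A p.toLinearMap u * LinearMap.rTensor A p.toLinearMap v := by
  induction u using TensorProduct.induction_on with
  | zero => simp
  | tmul a b =>
      induction v using TensorProduct.induction_on with
      | zero => simp
      | tmul c d =>
          simp [Algebra.TensorProduct.tmul_mul_tmul, p_coalg_apply, map_mul]
      | add u' v' hu hv =>
          rw [mul_add, map_add, map_add, mul_add, hu, hv]
  | add u' v' hu hv =>
      rw [add_mul, map_add, map_add, add_mul, hu, hv]

lemma rho_mul (x y : A) : rho p (x * y) = rho p x * rho p y := by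
  simp only [rho, LinearMap.comp_apply, Bialgebra.comul_mul]
  exact rTensor_p_mul p _ _

lemma rho_one : rho p (1 : A) = 1 := by
  simp [rho, Algebra.TensorProduct.one_def, p_coalg_apply, map_one]

/-- The h-inverse as a subalgebra of `A`. -/
noncomputable def hInvAlg : Subalgebra K A where
  carrier := hInv p C
  one_mem' := by
    rw [mem_hInv_iff]
    have : phim p (1 : A) = 0 := by
      rw [phim_apply]
      simp [Algebra.TensorProduct.one_def, p_coalg_apply, map_one]
    rw [this]
    exact Submodule.zero_mem _
  mul_mem' := by
    intro x y hx hy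
    rw [mem_hInv_iff] at hx hy ⊢
    have key : phim p (x * y) =
        phim p x * ((1 : B) ⊗ₜ[K] y) + phim p x * phim p y +
          ((1 : B) ⊗ₜ[K] x) * phim p y := by
      have h1 : phim p (x * y) = rho p x * rho p y - (1 : B) ⊗ₜ[K] (x * y) := by
        rw [phim_apply, ← rho_mul]
        rfl
      have h2 : ((1 : B) ⊗ₜ[K] x) * ((1 : B) ⊗ₜ[K] y) = (1 : B) ⊗ₜ[K] (x * y) := by
        simp [Algebra.TensorProduct.tmul_mul_tmul]
      have hx' : rho p x = phim p x + (1 : B) ⊗ₜ[K] x := (sub_add_cancel _ _).symm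
      have hy' : rho p y = phim p y + (1 : B) ⊗ₜ[K] y := (sub_add_cancel _ _).symm
      rw [h1, hx', hy', ← h2]
      noncomm_ring
    rw [key]
    exact Submodule.add_mem _
      (Submodule.add_mem _ (NN_mul_right C y hx) (NN_mul C hx hy))
      (NN_mul_left C x hy)
  add_mem' := by
    intro x y hx hy
    rw [mem_hInv_iff] at hx hy ⊢
    rw [map_add]
    exact Submodule.add_mem _ hx hy
  zero_mem' := by
    rw [mem_hInv_iff, map_zero]
    exact Submodule.zero_mem _
  algebraMap_mem' := by
    intro k
    rw [mem_hInv_iff]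
    have : algebraMap K A k = k • (1 : A) := Algebra.algebraMap_eq_smul_one k
    rw [this, map_smul]
    refine Submodule.smul_mem _ _ ?_
    have h0 : phim p (1 : A) = 0 := by
      rw [phim_apply]
      simp [Algebra.TensorProduct.one_def, p_coalg_apply, map_one]
    rw [h0]
    exact Submodule.zero_mem _

/-- The twisting map `ξ = assoc⁻¹ ∘ (id ⊗ Δ) : B ⊗ A → (B ⊗ A) ⊗ A`. -/
noncomputable def xi : B ⊗[K] A →ₗ[K] (B ⊗[K] A) ⊗[K] A :=
  (TensorProduct.assoc K B A A).symm.toLinearMap ∘ₗ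
    LinearMap.lTensor B (comul (R := K))

lemma assoc_rTensor_natural :
    (TensorProduct.assoc K B A A).toLinearMap ∘ₗ
        LinearMap.rTensor A (LinearMap.rTensor A p.toLinearMap) =
      LinearMap.rTensor (A ⊗[K] A) p.toLinearMap ∘ₗ
        (TensorProduct.assoc K A A A).toLinearMap := by
  apply TensorProduct.ext_threefold
  intro x y z
  simp

lemma claimA (x : A) :
    LinearMap.rTensor A (rho p) (comul x) = xi (rho p x) := by
  have a1 : LinearMap.rTensor A (rho p) (comul x) =
      LinearMap.rTensor A (LinearMap.rTensor A p.toLinearMap)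
        (LinearMap.rTensor A (comul (R := K)) (comul x)) := by
    have := LinearMap.congr_fun (LinearMap.rTensor_comp A
      (g := LinearMap.rTensor A p.toLinearMap) (f := comul (R := K) (A := A))) (comul x)
    simp only [LinearMap.comp_apply] at this
    exact this
  have a2 : LinearMap.rTensor A (comul (R := K)) (comul x) =
      (TensorProduct.assoc K A A A).symm
        (LinearMap.lTensor A (comul (R := K)) (comul x)) :=
    (Coalgebra.coassoc_symm_apply x).symm
  have a3 : ∀ v : A ⊗[K] (A ⊗[K] A),
      LinearMap.rTensor A (LinearMap.rTensor A p.toLinearMap)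
          ((TensorProduct.assoc K A A A).symm v) =
        (TensorProduct.assoc K B A A).symm
          (LinearMap.rTensor (A ⊗[K] A) p.toLinearMap v) := by
    intro v
    have h := LinearMap.congr_fun (assoc_rTensor_natural p)
      ((TensorProduct.assoc K A A A).symm v)
    simp only [LinearMap.comp_apply, LinearEquiv.coe_coe,
      LinearEquiv.apply_symm_apply] at h
    rw [LinearEquiv.eq_symm_apply]
    exact h
  have a4 : LinearMap.rTensor (A ⊗[K] A) p.toLinearMap
        (LinearMap.lTensor A (comul (R := K)) (comul x)) =
      LinearMap.lTensor B (comul (R := K))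
        (LinearMap.rTensor A p.toLinearMap (comul x)) := by
    have h1 := LinearMap.congr_fun (rTensor_comp_lTensor (f := p.toLinearMap)
      (g := comul (R := K) (A := A))) (comul x)
    have h2 := LinearMap.congr_fun (lTensor_comp_rTensor (f := p.toLinearMap)
      (g := comul (R := K) (A := A))) (comul x)
    simp only [LinearMap.comp_apply] at h1 h2
    rw [h1, ← h2]
  rw [a1, a2, a3, a4]
  rfl

lemma claimB (x : A) :
    LinearMap.rTensor A (TensorProduct.mk K B A 1) (comul x) = xi ((1 : B) ⊗ₜ[K] x) := by
  have e : LinearMap.rTensor A (TensorProduct.mk K B A 1) =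
      (TensorProduct.assoc K B A A).symm.toLinearMap ∘ₗ
        TensorProduct.mk K B (A ⊗[K] A) 1 := by
    apply TensorProduct.ext'
    intro a b
    simp
  rw [e]
  simp only [xi, LinearMap.comp_apply, LinearMap.lTensor_tmul, TensorProduct.mk_apply]

set_option synthInstance.maxHeartbeats 1000000 in
lemma xi_NN_zero {n : B ⊗[K] A} (hn : n ∈ NN C) :
    LinearMap.rTensor A (NN (A := A)  C).mkQ (xi n) = 0 := by
  obtain ⟨u, rfl⟩ := hn
  induction u using TensorProduct.induction_on with
  | zero => rw [map_zero, map_zero, map_zero]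
  | tmul c a =>
      simp only [LinearMap.rTensor_tmul, Submodule.coe_subtype, xi, LinearMap.comp_apply,
        LinearMap.lTensor_tmul, LinearEquiv.coe_coe]
      induction (comul (R := K) a) using TensorProduct.induction_on with
      | zero => rw [TensorProduct.tmul_zero, map_zero, map_zero]
      | tmul a1 a2 =>
          simp only [TensorProduct.assoc_symm_tmul, LinearMap.rTensor_tmul]
          have : ((c : B) ⊗ₜ[K] a1) ∈ NN (A := A) C := mem_NN_of C c.2 a1
          rw [Submodule.mkQ_apply, (Submodule.Quotient.mk_eq_zero _).2 this,
            TensorProduct.zero_tmul]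
      | add v w hv hw =>
          rw [TensorProduct.tmul_add, map_add, map_add, hv, hw, add_zero]
  | add u v hu hv =>
      rw [map_add, map_add, map_add, hu, hv, add_zero]

/-- All of `comul` of an element of the h-inverse lies in `hInv ⊗ A`. -/
lemma comul_mem_rTensor {d : A} (hd : d ∈ hInv p C) :
    comul (R := K) d ∈ LinearMap.range (LinearMap.rTensor A
      (Submodule.subtype (hInvAlg p C).toSubmodule)) := by
  set D0 := (hInvAlg p C).toSubmodule with hD0
  have hker : ∀ y : A, y ∈ hInv p C ↔ phim p y ∈ NN C := fun y => Iff.rfl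
  set φ : A →ₗ[K] (B ⊗[K] A) ⧸ (NN (A := A) C) := (NN (A := A) C).mkQ ∘ₗ phim p with hφ
  have hexact : Function.Exact (Submodule.subtype D0) φ := by
    intro y
    constructor
    · intro hy
      have : phim p y ∈ NN C := by
        have : (NN (A := A) C).mkQ (phim p y) = 0 := hy
        rwa [Submodule.mkQ_apply, Submodule.Quotient.mk_eq_zero] at this
      exact ⟨⟨y, this⟩, rfl⟩
    · rintro ⟨⟨z, hz⟩, rfl⟩
      show (NN (A := A) C).mkQ (phim p z) = 0
      rw [Submodule.mkQ_apply, Submodule.Quotient.mk_eq_zero]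
      exact hz
  have texact := Module.Flat.rTensor_exact (M := A) hexact
  have hzero : LinearMap.rTensor A φ (comul d) = 0 := by
    have h1 : LinearMap.rTensor A φ (comul d) =
        LinearMap.rTensor A (NN (A := A) C).mkQ
          (LinearMap.rTensor A (phim p) (comul d)) := by
      have := LinearMap.congr_fun (LinearMap.rTensor_comp A
        (g := (NN (A := A) C).mkQ) (f := phim p)) (comul d)
      simp only [LinearMap.comp_apply] at this
      exact this
    have h2 : LinearMap.rTensor A (phim p) (comul d) = xi (phim p d) := by
      have hphi : phim p = rho p - TensorProduct.mk K B A 1 := rfl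
      rw [hphi, LinearMap.rTensor_sub, LinearMap.sub_apply, claimA, claimB, ← map_sub]
      rfl
    rw [h1, h2]
    exact xi_NN_zero C hd
  have := (texact (comul d)).1 hzero
  obtain ⟨u, hu⟩ := this
  exact ⟨u, hu⟩

lemma comm_rTensor_subtype (D0 : Submodule K A) (u : D0 ⊗[K] A) :
    (TensorProduct.comm K A A) (LinearMap.rTensor A (Submodule.subtype D0) u) =
      LinearMap.lTensor A (Submodule.subtype D0) ((TensorProduct.comm K D0 A) u) := by
  have e : (TensorProduct.comm K A A).toLinearMap ∘ₗ
        LinearMap.rTensor A (Submodule.subtype D0) =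
      LinearMap.lTensor A (Submodule.subtype D0) ∘ₗ
        (TensorProduct.comm K D0 A).toLinearMap := by
    apply TensorProduct.ext'
    intro x y
    simp
  have := LinearMap.congr_fun e u
  simpa using this

/-- Combine left and right membership using a linear projection. -/
lemma mem_map_of_both {D0 : Submodule K A} {t : A ⊗[K] A}
    (h1 : t ∈ LinearMap.range (LinearMap.rTensor A (Submodule.subtype D0)))
    (h2 : t ∈ LinearMap.range (LinearMap.lTensor A (Submodule.subtype D0))) :
    t ∈ LinearMap.range (TensorProduct.map (Submodule.subtype D0) (Submodule.subtype D0)) := by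
  obtain ⟨q, hq⟩ := Submodule.exists_isCompl D0
  set π := D0.projectionOnto q hq with hπ
  set P : A →ₗ[K] A := D0.subtype ∘ₗ π with hP
  have hPid : ∀ z : D0, P (z : A) = (z : A) := by
    intro z
    simp [hP, hπ, Submodule.projectionOnto_apply_left hq]
  have hr : LinearMap.rTensor A P t = t := by
    obtain ⟨u, rfl⟩ := h1
    have h3 := LinearMap.congr_fun (LinearMap.rTensor_comp A
      (g := P) (f := Submodule.subtype D0)) u
    simp only [LinearMap.comp_apply] at h3
    rw [← h3]
    have h4 : P ∘ₗ Submodule.subtype D0 = Submodule.subtype D0 := by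
      ext z; exact hPid z
    rw [h4]
  have hl : LinearMap.lTensor A P t = t := by
    obtain ⟨u, rfl⟩ := h2
    have h3 := LinearMap.congr_fun (LinearMap.lTensor_comp A
      (g := P) (f := Submodule.subtype D0)) u
    simp only [LinearMap.comp_apply] at h3
    rw [← h3]
    have h4 : P ∘ₗ Submodule.subtype D0 = Submodule.subtype D0 := by
      ext z; exact hPid z
    rw [h4]
  have hmap : TensorProduct.map P P t = t := by
    have := LinearMap.congr_fun (lTensor_comp_rTensor (f := P) (g := P)) t
    simp only [LinearMap.comp_apply] at this
    rw [← this, hr, hl]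
  have hsplit : TensorProduct.map P P =
      TensorProduct.map (Submodule.subtype D0) (Submodule.subtype D0) ∘ₗ
        TensorProduct.map π π := by
    rw [hP, ← TensorProduct.map_comp]
  refine ⟨TensorProduct.map π π t, ?_⟩
  rw [← LinearMap.comp_apply, ← hsplit, hmap]

/-- Comultiplication closure of the h-inverse. -/
lemma hInvAlg_comul_closed (hA : _root_.IsCocomm K A) {d : A} (hd : d ∈ hInvAlg p C) :
    comul (R := K) d ∈ LinearMap.range (TensorProduct.map
      (hInvAlg p C).toSubmodule.subtype (hInvAlg p C).toSubmodule.subtype) := by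
  have h1 := comul_mem_rTensor p C hd
  have h2 : comul (R := K) d ∈ LinearMap.range (LinearMap.lTensor A
      (Submodule.subtype (hInvAlg p C).toSubmodule)) := by
    obtain ⟨u, hu⟩ := h1
    refine ⟨(TensorProduct.comm K _ A) u, ?_⟩
    have hc : (TensorProduct.comm K A A) (comul (R := K) d) = comul d :=
      LinearMap.congr_fun hA d
    rw [← hc, ← hu]
    exact (comm_rTensor_subtype _ u).symm
  exact mem_map_of_both h1 h2

lemma mapSS_NN (hC_antipode : ∀ c ∈ C, HopfAlgebra.antipode (R := K) c ∈ C)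
    {n : B ⊗[K] A} (hn : n ∈ NN C) :
    TensorProduct.map (HopfAlgebra.antipode (R := K) (A := B))
      (HopfAlgebra.antipode (R := K) (A := A)) n ∈ NN C := by
  obtain ⟨u, rfl⟩ := hn
  induction u using TensorProduct.induction_on with
  | zero => rw [map_zero, map_zero]; exact Submodule.zero_mem _
  | tmul c a =>
      simp only [LinearMap.rTensor_tmul, Submodule.coe_subtype, TensorProduct.map_tmul]
      refine mem_NN_of C ?_ _
      have hc := c.2
      simp only [Cp, Submodule.mem_inf] at hc ⊢
      refine ⟨hC_antipode _ hc.1, ?_⟩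
      rw [LinearMap.mem_ker] at hc ⊢
      have h2 := LinearMap.congr_fun (counit_comp_antipode (K := K) (A := B)) (c : B)
      simp only [LinearMap.comp_apply] at h2
      rw [h2]
      exact hc.2
  | add u v hu hv =>
      rw [map_add, map_add]
      exact Submodule.add_mem _ hu hv

lemma rTensor_p_mapSS :
    LinearMap.rTensor A p.toLinearMap ∘ₗ
        TensorProduct.map (HopfAlgebra.antipode (R := K) (A := A))
          (HopfAlgebra.antipode (R := K) (A := A)) =
      TensorProduct.map (HopfAlgebra.antipode (R := K) (A := B))
          (HopfAlgebra.antipode (R := K) (A := A)) ∘ₗ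
        LinearMap.rTensor A p.toLinearMap := by
  have hpS : ∀ a : A, p (HopfAlgebra.antipode (R := K) a) =
      HopfAlgebra.antipode (R := K) (p a) := by
    intro a
    have h0 := LinearMap.congr_fun (bialgHom_comp_antipode (K := K) p) a
    simp only [LinearMap.comp_apply] at h0
    exact h0
  apply TensorProduct.ext'
  intro a b
  simp only [LinearMap.comp_apply, TensorProduct.map_tmul, LinearMap.rTensor_tmul]
  rw [show ∀ y : A, p.toLinearMap y = p y from fun _ => rfl,
    show ∀ y : A, p.toLinearMap y = p y from fun _ => rfl, hpS]

lemma phim_antipode (hA : _root_.IsCocomm K A) (d : A) :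
    phim p (HopfAlgebra.antipode (R := K) d) =
      TensorProduct.map (HopfAlgebra.antipode (R := K) (A := B))
        (HopfAlgebra.antipode (R := K) (A := A)) (phim p d) := by
  have h1 : comul (R := K) (HopfAlgebra.antipode (R := K) d) =
      TensorProduct.map (HopfAlgebra.antipode (R := K) (A := A))
        (HopfAlgebra.antipode (R := K)) (comul d) := by
    have h0 := LinearMap.congr_fun (comul_comp_antipode (K := K) hA) d
    simp only [LinearMap.comp_apply] at h0
    exact h0
  have h2 : LinearMap.rTensor A p.toLinearMap
      (TensorProduct.map (HopfAlgebra.antipode (R := K) (A := A))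
        (HopfAlgebra.antipode (R := K)) (comul d)) =
      TensorProduct.map (HopfAlgebra.antipode (R := K) (A := B))
        (HopfAlgebra.antipode (R := K) (A := A))
        (LinearMap.rTensor A p.toLinearMap (comul d)) := by
    have h0 := LinearMap.congr_fun (rTensor_p_mapSS p) (comul d)
    simp only [LinearMap.comp_apply] at h0
    exact h0
  rw [phim_apply, h1, h2, phim_apply, map_sub]
  congr 1
  simp [antipode_one']

lemma hInvAlg_antipode_closed (hA : _root_.IsCocomm K A)
    (hC_antipode : ∀ c ∈ C, HopfAlgebra.antipode (R := K) c ∈ C)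
    {d : A} (hd : d ∈ hInvAlg p C) :
    HopfAlgebra.antipode (R := K) d ∈ hInvAlg p C := by
  have hd' : phim p d ∈ NN C := hd
  show phim p (HopfAlgebra.antipode (R := K) d) ∈ NN C
  rw [phim_antipode p hA]
  exact mapSS_NN C hC_antipode hd'

/-- The contraction `B ⊗ A → B`, `b ⊗ a ↦ ε(a) b`. -/
noncomputable def contrR : B ⊗[K] A →ₗ[K] B :=
  (TensorProduct.rid K B).toLinearMap ∘ₗ LinearMap.lTensor B (counit (R := K))

lemma contrR_NN {n : B ⊗[K] A} (hn : n ∈ NN C) : contrR n ∈ C.toSubmodule := by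
  obtain ⟨u, rfl⟩ := hn
  induction u using TensorProduct.induction_on with
  | zero => rw [map_zero, map_zero]; exact Submodule.zero_mem _
  | tmul c a =>
      simp only [LinearMap.rTensor_tmul, Submodule.coe_subtype, contrR,
        LinearMap.comp_apply, LinearMap.lTensor_tmul, LinearEquiv.coe_coe,
        TensorProduct.rid_tmul]
      exact Submodule.smul_mem _ _ c.2.1
  | add u v hu hv =>
      rw [map_add, map_add]
      exact Submodule.add_mem _ hu hv

lemma contrR_phim (x : A) :
    contrR (phim p x) = p x - counit (R := K) x • (1 : B) := by
  rw [phim_apply, map_sub]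
  have hA2 : contrR ((1 : B) ⊗ₜ[K] x) = counit (R := K) x • (1 : B) := by
    simp [contrR]
  have hA1 : contrR (LinearMap.rTensor A p.toLinearMap (comul x)) = p x := by
    have h1 := LinearMap.congr_fun (lTensor_comp_rTensor (f := p.toLinearMap)
      (g := counit (R := K) (A := A))) (comul x)
    have h2 := LinearMap.congr_fun (rTensor_comp_lTensor (f := p.toLinearMap)
      (g := counit (R := K) (A := A))) (comul x)
    simp only [LinearMap.comp_apply] at h1 h2
    simp only [contrR, LinearMap.comp_apply, LinearEquiv.coe_coe]
    rw [h1, ← h2, Coalgebra.lTensor_counit_comul]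
    simp only [LinearMap.rTensor_tmul, TensorProduct.rid_tmul, one_smul, p_lin_apply]
  rw [hA1, hA2]

lemma p_mem_of_mem_hInv {x : A} (hx : x ∈ hInv p C) : p x ∈ C := by
  have h1 : contrR (phim p x) ∈ C.toSubmodule := contrR_NN C hx
  rw [contrR_phim] at h1
  have : p x = (p x - counit (R := K) x • (1 : B)) + counit (R := K) x • (1 : B) := by abel
  rw [this]
  exact C.toSubmodule.add_mem h1 (Submodule.smul_mem _ _ (C.one_mem))

/-- Any comultiplication-closed subalgebra mapping into `C` is contained in the
h-inverse. -/
lemma mem_hInv_of_subcoalg (D : Subalgebra K A)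
    (hDcomul : ∀ d ∈ D, Coalgebra.comul (R := K) d ∈
      LinearMap.range (TensorProduct.map D.toSubmodule.subtype D.toSubmodule.subtype))
    (hDimg : ∀ d ∈ D, p d ∈ C) {d : A} (hd : d ∈ D) : d ∈ hInv p C := by
  set h : A →ₗ[K] B := p.toLinearMap - Algebra.linearMap K B ∘ₗ counit (R := K) with hh
  have hmem : ∀ z : D.toSubmodule, h (z : A) ∈ Cp C := by
    intro z
    rw [Cp, Submodule.mem_inf]
    constructor
    · have h1 : p (z : A) ∈ C := hDimg _ z.2
      have h2 : h (z : A) = p (z : A) - counit (R := K) (z : A) • (1 : B) := by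
        simp only [hh, LinearMap.sub_apply, LinearMap.comp_apply, Algebra.linearMap_apply,
          Algebra.algebraMap_eq_smul_one, p_lin_apply]
      rw [h2]
      exact C.toSubmodule.sub_mem h1 (Submodule.smul_mem _ _ C.one_mem)
    · rw [LinearMap.mem_ker]
      simp only [hh, LinearMap.sub_apply, map_sub, LinearMap.comp_apply,
        Algebra.linearMap_apply]
      rw [show (p.toLinearMap (z : A)) = p (z : A) from rfl,
        CoalgHomClass.counit_comp_apply p (z : A)]
      simp
  set g : D.toSubmodule →ₗ[K] Cp C :=
    LinearMap.codRestrict (Cp C) (h ∘ₗ D.toSubmodule.subtype) hmem with hg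
  obtain ⟨u, hu⟩ := hDcomul d hd
  show phim p d ∈ NN C
  have key : phim p d = LinearMap.rTensor A (h) (comul d) := by
    have e1 : LinearMap.rTensor A h (comul d) =
        LinearMap.rTensor A p.toLinearMap (comul d) -
          LinearMap.rTensor A (Algebra.linearMap K B ∘ₗ counit (R := K)) (comul d) := by
      rw [hh, LinearMap.rTensor_sub]
      rfl
    have e2 : LinearMap.rTensor A (Algebra.linearMap K B ∘ₗ counit (R := K)) (comul d) =
        (1 : B) ⊗ₜ[K] d := by
      have h3 := LinearMap.congr_fun (LinearMap.rTensor_comp A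
        (g := Algebra.linearMap K B) (f := counit (R := K) (A := A))) (comul d)
      simp only [LinearMap.comp_apply] at h3
      rw [h3, Coalgebra.rTensor_counit_comul]
      simp
    rw [phim_apply, e1, e2]
  rw [key, ← hu]
  have e3 : LinearMap.rTensor A h (TensorProduct.map D.toSubmodule.subtype
        D.toSubmodule.subtype u) =
      LinearMap.rTensor A (Submodule.subtype (Cp C))
        (TensorProduct.map g D.toSubmodule.subtype u) := by
    have i1 := LinearMap.congr_fun (TensorProduct.map_comp (f₂ := h) (f₁ := D.toSubmodule.subtype)
      (g₂ := LinearMap.id) (g₁ := D.toSubmodule.subtype)) u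
    have i2 := LinearMap.congr_fun (TensorProduct.map_comp (f₂ := Submodule.subtype (Cp C)) (f₁ := g)
      (g₂ := LinearMap.id) (g₁ := D.toSubmodule.subtype)) u
    simp only [LinearMap.comp_apply] at i1 i2
    have e4 : h ∘ₗ D.toSubmodule.subtype = Submodule.subtype (Cp C) ∘ₗ g := by
      ext z
      simp [hg]
      rfl
    calc LinearMap.rTensor A h (TensorProduct.map D.toSubmodule.subtype
          D.toSubmodule.subtype u)
        = TensorProduct.map (h ∘ₗ D.toSubmodule.subtype)
            (LinearMap.id ∘ₗ D.toSubmodule.subtype) u := by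
          rw [show LinearMap.rTensor A h = TensorProduct.map h LinearMap.id from rfl, ← i1]
      _ = TensorProduct.map (Submodule.subtype (Cp C) ∘ₗ g)
            (LinearMap.id ∘ₗ D.toSubmodule.subtype) u := by rw [e4]
      _ = LinearMap.rTensor A (Submodule.subtype (Cp C))
            (TensorProduct.map g D.toSubmodule.subtype u) := by
          rw [i2,
            show LinearMap.rTensor A (Submodule.subtype (Cp C)) =
              TensorProduct.map (Submodule.subtype (Cp C)) LinearMap.id from rfl]
  rw [e3]
  exact ⟨_, rfl⟩

end Main

end HopfAux

/-- `C = p(p⁻¹(C))` if and only if `C = p(D)` for some Hopf subalgebra `D ⊆ A`. -/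
theorem image_hInv_eq_iff
    {K A B : Type*} [Field K] [Ring A] [HopfAlgebra K A] [Ring B] [HopfAlgebra K B]
    (hA : _root_.IsCocomm K A) (hB : _root_.IsCocomm K B) (p : A →ₐc[K] B) (C : Subalgebra K B)
    (hC_comul : ∀ c ∈ C, Coalgebra.comul (R := K) c ∈
      LinearMap.range (TensorProduct.map C.toSubmodule.subtype C.toSubmodule.subtype))
    (hC_antipode : ∀ c ∈ C, HopfAlgebra.antipode (R := K) c ∈ C) :
    p '' hInv p C = (C : Set B) ↔
      ∃ D : Subalgebra K A,
        (∀ d ∈ D, Coalgebra.comul (R := K) d ∈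
          LinearMap.range (TensorProduct.map D.toSubmodule.subtype D.toSubmodule.subtype)) ∧
        (∀ d ∈ D, HopfAlgebra.antipode (R := K) d ∈ D) ∧
        p '' (D : Set A) = (C : Set B) := by
  constructor
  · intro h
    refine ⟨HopfAux.hInvAlg p C, ?_, ?_, ?_⟩
    · intro d hd
      exact HopfAux.hInvAlg_comul_closed p C hA hd
    · intro d hd
      exact HopfAux.hInvAlg_antipode_closed p C hA hC_antipode hd
    · have hcoe : (HopfAux.hInvAlg p C : Set A) = hInv p C := rfl
      rw [hcoe]
      exact h
  · rintro ⟨D, hDc, hDa, hDim⟩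
    apply Set.Subset.antisymm
    · rintro b ⟨x, hx, rfl⟩
      exact HopfAux.p_mem_of_mem_hInv p C hx
    · intro c hc
      have hc' : c ∈ p '' (D : Set A) := by
        rw [hDim]
        exact hc
      obtain ⟨d, hd, rfl⟩ := hc'
      refine ⟨d, ?_, rfl⟩
      refine HopfAux.mem_hInv_of_subcoalg p C D hDc (fun z hz => ?_) hd
      have : p z ∈ p '' (D : Set A) := ⟨z, hz, rfl⟩
      rw [hDim] at this
      exact this
end

section
/- Let A be a cocommutative Hopf algebra over a field K and X, Y ⊆ A normal Hopf subalgebras. Let [X,Y] be the subalgebra of A generated by all elements {x,y} = x₁ y₁ S(x₂) S(y₂) for x ∈ X, y ∈ Y. Then [X,Y] is a subcoalgebra of A: Δ({x,y}) ∈ [X,Y] ⊗ [X,Y] for every generator, so [X,Y] is a sub-bialgebra. -/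
open TensorProduct Coalgebra

section helpers
variable {R M N P Q : Type*} [CommSemiring R] [AddCommMonoid M] [AddCommMonoid N]
  [AddCommMonoid P] [AddCommMonoid Q] [Module R M] [Module R N] [Module R P] [Module R Q]

lemma ext_threefold_right {W : Type*} [AddCommMonoid W] [Module R W]
    {f g : M ⊗[R] (N ⊗[R] P) →ₗ[R] W}
    (h : ∀ a b c, f (a ⊗ₜ (b ⊗ₜ c)) = g (a ⊗ₜ (b ⊗ₜ c))) : f = g := by
  apply TensorProduct.ext'
  intro a z
  induction z using TensorProduct.induction_on with
  | zero => simp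
  | tmul b c => exact h a b c
  | add u v hu hv => rw [TensorProduct.tmul_add, map_add, map_add, hu, hv]

lemma leftComm_decomp' :
    (TensorProduct.leftComm R M N P).toLinearMap =
    (TensorProduct.assoc R N M P).toLinearMap ∘ₗ
      (LinearMap.rTensor P (TensorProduct.comm R M N).toLinearMap) ∘ₗ
      (TensorProduct.assoc R M N P).symm.toLinearMap := by
  apply ext_threefold_right
  intro a b c
  simp [TensorProduct.leftComm_tmul]

lemma assoc_lTensor_assoc_symm {Q' : Type*} [AddCommMonoid Q'] [Module R Q']
    (f : P →ₗ[R] Q') (z : M ⊗[R] (N ⊗[R] P)) :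
    (TensorProduct.assoc R M N Q') (LinearMap.lTensor (M ⊗[R] N) f
      ((TensorProduct.assoc R M N P).symm z)) =
    LinearMap.lTensor M (LinearMap.lTensor N f) z := by
  have : (TensorProduct.assoc R M N Q').toLinearMap ∘ₗ LinearMap.lTensor (M ⊗[R] N) f ∘ₗ
      (TensorProduct.assoc R M N P).symm.toLinearMap
      = LinearMap.lTensor M (LinearMap.lTensor N f) := by
    apply ext_threefold_right; intro a b c; simp
  exact congr($this z)

lemma ttt_decomp :
    (TensorProduct.tensorTensorTensorComm R M N P Q).toLinearMap =
    (TensorProduct.assoc R M P (N ⊗[R] Q)).symm.toLinearMap ∘ₗ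
      (LinearMap.lTensor M (TensorProduct.leftComm R N P Q).toLinearMap) ∘ₗ
      (TensorProduct.assoc R M N (P ⊗[R] Q)).toLinearMap := by
  apply TensorProduct.ext_fourfold'
  intro a b c d
  simp [TensorProduct.leftComm_tmul]

lemma ttt_natural {M' N' P' Q' : Type*}
    [AddCommMonoid M'] [AddCommMonoid N'] [AddCommMonoid P'] [AddCommMonoid Q']
    [Module R M'] [Module R N'] [Module R P'] [Module R Q']
    (f : M →ₗ[R] M') (g : N →ₗ[R] N') (h : P →ₗ[R] P') (k : Q →ₗ[R] Q') :
    (TensorProduct.tensorTensorTensorComm R M' N' P' Q').toLinearMap ∘ₗ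
      (TensorProduct.map (TensorProduct.map f g) (TensorProduct.map h k)) =
    (TensorProduct.map (TensorProduct.map f h) (TensorProduct.map g k)) ∘ₗ
      (TensorProduct.tensorTensorTensorComm R M N P Q).toLinearMap := by
  apply TensorProduct.ext_fourfold'
  intro a b c d
  simp

end helpers

section main
variable {K A : Type*} [Field K] [Ring A] [HopfAlgebra K A]

lemma comm_comul (hA : _root_.IsCocomm K A) (a : A) :
    TensorProduct.comm K A A (Coalgebra.comul (R := K) a) = Coalgebra.comul (R := K) a :=
  LinearMap.congr_fun (hA : _ = _) a

/-- swap a repr using cocommutativity -/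
noncomputable def Coalgebra.Repr.swap (hA : _root_.IsCocomm K A) {a : A} (r : Coalgebra.Repr K a (A × A)) :
    Coalgebra.Repr K a (A × A) where
  index := r.index
  left := r.right
  right := r.left
  eq := by
    have := congrArg (TensorProduct.comm K A A) r.eq
    rw [_root_.comm_comul hA, map_sum] at this
    simpa using this

lemma swap12 (hA : _root_.IsCocomm K A) :
    (TensorProduct.leftComm K A A A).toLinearMap ∘ₗ
      (LinearMap.lTensor A (Coalgebra.comul (R := K))) ∘ₗ (Coalgebra.comul (R := K) (A := A)) =
    (LinearMap.lTensor A (Coalgebra.comul (R := K))) ∘ₗ Coalgebra.comul := by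
  rw [leftComm_decomp']
  calc (TensorProduct.assoc K A A A).toLinearMap ∘ₗ
      (LinearMap.rTensor A (TensorProduct.comm K A A).toLinearMap) ∘ₗ
      (TensorProduct.assoc K A A A).symm.toLinearMap ∘ₗ
      (LinearMap.lTensor A (Coalgebra.comul (R := K))) ∘ₗ (Coalgebra.comul (R := K) (A := A))
      = (TensorProduct.assoc K A A A).toLinearMap ∘ₗ
        ((LinearMap.rTensor A ((TensorProduct.comm K A A).toLinearMap ∘ₗ
          (Coalgebra.comul (R := K)))) ∘ₗ (Coalgebra.comul (R := K) (A := A))) := by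
        rw [Coalgebra.coassoc_symm, LinearMap.rTensor_comp]
        rfl
    _ = (TensorProduct.assoc K A A A).toLinearMap ∘ₗ
        (LinearMap.rTensor A (Coalgebra.comul (R := K))) ∘ₗ (Coalgebra.comul (R := K) (A := A)) := by
        rw [(hA : _ = _)]
    _ = _ := Coalgebra.coassoc

lemma swap23 (hA : _root_.IsCocomm K A) (a : A) :
    TensorProduct.tensorTensorTensorComm K A A A A
      (TensorProduct.map (Coalgebra.comul (R := K)) (Coalgebra.comul (R := K))
        (Coalgebra.comul (R := K) a)) =
    TensorProduct.map (Coalgebra.comul (R := K)) (Coalgebra.comul (R := K))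
      (Coalgebra.comul (R := K) a) := by
  set D := Coalgebra.comul (R := K) (A := A) with hD
  have hmap : TensorProduct.map D D (D a) =
      LinearMap.lTensor (A ⊗[K] A) D (LinearMap.rTensor A D (D a)) := by
    conv_rhs => rw [← LinearMap.comp_apply, LinearMap.lTensor_comp_rTensor]
  have hr : LinearMap.rTensor A D (D a) =
      (TensorProduct.assoc K A A A).symm (LinearMap.lTensor A D (D a)) := by
    rw [Coalgebra.coassoc_symm_apply]
  have hTheta : (TensorProduct.assoc K A A (A ⊗[K] A)) (TensorProduct.map D D (D a)) =
      LinearMap.lTensor A ((LinearMap.lTensor A D) ∘ₗ D) (D a) := by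
    rw [hmap, hr, assoc_lTensor_assoc_symm, ← LinearMap.comp_apply, ← LinearMap.lTensor_comp]
  have hd := congr($(ttt_decomp (R := K) (M := A) (N := A) (P := A) (Q := A))
    (TensorProduct.map D D (D a)))
  simp only [LinearMap.comp_apply, LinearEquiv.coe_coe] at hd
  rw [hd]
  rw [hTheta, ← LinearMap.comp_apply, ← LinearMap.lTensor_comp, swap12 hA, ← hTheta]
  simp

end main


section conv
variable {K A : Type*} [Field K] [Ring A] [HopfAlgebra K A]
variable {V : Type*} [Ring V] [Algebra K V]

/-- convolution product in `Hom(A, V)` -/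
noncomputable def conv (f g : A →ₗ[K] V) : A →ₗ[K] V :=
  (LinearMap.mul' K V) ∘ₗ (TensorProduct.map f g) ∘ₗ (Coalgebra.comul (R := K))

lemma conv_apply (f g : A →ₗ[K] V) {a : A} (r : Coalgebra.Repr K a (A × A)) :
    conv f g a = ∑ i ∈ r.index, f (r.left i) * g (r.right i) := by
  rw [conv, LinearMap.comp_apply, LinearMap.comp_apply, ← r.eq, map_sum, map_sum]
  simp

/-- the unit of the convolution algebra -/
noncomputable def convUnit : A →ₗ[K] V :=
  (Algebra.linearMap K V) ∘ₗ (Coalgebra.counit (R := K))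

lemma sum_counit_smul {a : A} (r : Coalgebra.Repr K a (A × A)) :
    ∑ i ∈ r.index, Coalgebra.counit (R := K) (r.left i) • r.right i = a := by
  have h2 := congrArg (TensorProduct.lid K A) (Coalgebra.sum_counit_tmul_eq r)
  simp only [map_sum, TensorProduct.lid_tmul, one_smul] at h2
  exact h2

lemma sum_smul_counit {a : A} (r : Coalgebra.Repr K a (A × A)) :
    ∑ i ∈ r.index, Coalgebra.counit (R := K) (r.right i) • r.left i = a := by
  have h2 := congrArg (TensorProduct.rid K A) (Coalgebra.sum_tmul_counit_eq r)
  simp only [map_sum, TensorProduct.rid_tmul, one_smul] at h2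
  exact h2

lemma conv_unit_left (f : A →ₗ[K] V) : conv convUnit f = f := by
  ext a
  let r := ℛ K a
  rw [conv_apply _ _ r]
  have : ∀ i ∈ r.index, convUnit (K := K) (A := A) (V := V) (r.left i) * f (r.right i)
      = Coalgebra.counit (R := K) (r.left i) • f (r.right i) := by
    intro i _
    rw [convUnit]
    simp [Algebra.smul_def]
  rw [Finset.sum_congr rfl this]
  calc ∑ i ∈ r.index, Coalgebra.counit (R := K) (r.left i) • f (r.right i)
      = f (∑ i ∈ r.index, Coalgebra.counit (R := K) (r.left i) • r.right i) := by
        rw [map_sum]; simp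
    _ = f a := by rw [_root_.sum_counit_smul]

lemma conv_unit_right (f : A →ₗ[K] V) : conv f convUnit = f := by
  ext a
  let r := ℛ K a
  rw [conv_apply _ _ r]
  have : ∀ i ∈ r.index, f (r.left i) * convUnit (K := K) (A := A) (V := V) (r.right i)
      = Coalgebra.counit (R := K) (r.right i) • f (r.left i) := by
    intro i _
    rw [convUnit]
    simp [Algebra.smul_def, Algebra.commutes]
  rw [Finset.sum_congr rfl this]
  calc ∑ i ∈ r.index, Coalgebra.counit (R := K) (r.right i) • f (r.left i)
      = f (∑ i ∈ r.index, Coalgebra.counit (R := K) (r.right i) • r.left i) := by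
        rw [map_sum]; simp
    _ = f a := by rw [_root_.sum_smul_counit]

lemma conv_assoc (f g h : A →ₗ[K] V) : conv (conv f g) h = conv f (conv g h) := by
  ext a
  let r := ℛ K a
  let r1 : (i : A × A) → Coalgebra.Repr K (r.left i) (A × A) := fun i => ℛ K (r.left i)
  let r2 : (i : A × A) → Coalgebra.Repr K (r.right i) (A × A) := fun i => ℛ K (r.right i)
  have key := Coalgebra.sum_map_tmul_tmul_eq (R := K) f g h a (repr := r) (a₁ := r1) (a₂ := r2)
  have := congrArg ((LinearMap.mul' K V) ∘ₗ (LinearMap.lTensor V (LinearMap.mul' K V))) key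
  simp only [map_sum, LinearMap.comp_apply, LinearMap.lTensor_tmul, LinearMap.mul'_apply] at this
  rw [conv_apply _ _ r, conv_apply _ _ r]
  have l1 : ∀ i ∈ r.index, conv f g (r.left i) * h (r.right i)
      = ∑ j ∈ (r1 i).index, f ((r1 i).left j) * g ((r1 i).right j) * h (r.right i) := by
    intro i _
    rw [conv_apply _ _ (r1 i), Finset.sum_mul]
  have l2 : ∀ i ∈ r.index, f (r.left i) * conv g h (r.right i)
      = ∑ j ∈ (r2 i).index, f (r.left i) * (g ((r2 i).left j) * h ((r2 i).right j)) := by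
    intro i _
    rw [conv_apply _ _ (r2 i), Finset.mul_sum]
  rw [Finset.sum_congr rfl l1, Finset.sum_congr rfl l2]
  have l3 : ∑ i ∈ r.index, ∑ j ∈ (r1 i).index,
      f ((r1 i).left j) * g ((r1 i).right j) * h (r.right i)
      = ∑ i ∈ r.index, ∑ j ∈ (r1 i).index,
      f ((r1 i).left j) * (g ((r1 i).right j) * h (r.right i)) := by
    apply Finset.sum_congr rfl; intro i _
    apply Finset.sum_congr rfl; intro j _
    rw [mul_assoc]
  rw [l3]
  exact this.symm

end conv



section sq
variable {K A : Type*} [Field K] [Ring A] [HopfAlgebra K A]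

noncomputable abbrev SS : A ⊗[K] A →ₗ[K] A ⊗[K] A :=
  TensorProduct.map (HopfAlgebra.antipode (R := K)) (HopfAlgebra.antipode (R := K))

noncomputable abbrev uu : A →ₗ[K] A := (Algebra.linearMap K A) ∘ₗ (Coalgebra.counit (R := K))

/-- antipode axiom for the tensor square -/
lemma mulB_lTensor_SS :
    (LinearMap.mul' K (A ⊗[K] A)) ∘ₗ (TensorProduct.map LinearMap.id (SS (K := K) (A := A))) ∘ₗ
      (TensorProduct.tensorTensorTensorComm K A A A A).toLinearMap ∘ₗ
      (TensorProduct.map (Coalgebra.comul (R := K)) (Coalgebra.comul (R := K))) =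
    TensorProduct.map (uu (K := K) (A := A)) (uu (K := K) (A := A)) := by
  apply TensorProduct.ext'
  intro x y
  simp only [LinearMap.comp_apply, TensorProduct.map_tmul, LinearEquiv.coe_coe]
  let rx := ℛ K x
  let ry := ℛ K y
  rw [← rx.eq, ← ry.eq, TensorProduct.sum_tmul]
  rw [map_sum, map_sum, map_sum]
  have step : ∀ i ∈ rx.index,
      (LinearMap.mul' K (A ⊗[K] A)) ((TensorProduct.map LinearMap.id SS)
        ((TensorProduct.tensorTensorTensorComm K A A A A)
          ((rx.left i ⊗ₜ[K] rx.right i) ⊗ₜ[K] (∑ j ∈ ry.index, ry.left j ⊗ₜ[K] ry.right j))))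
      = (rx.left i * HopfAlgebra.antipode (R := K) (rx.right i)) ⊗ₜ[K]
          (Coalgebra.counit (R := K) y • (1 : A)) := by
    intro i _
    rw [TensorProduct.tmul_sum, map_sum, map_sum, map_sum]
    have inner : ∀ j ∈ ry.index,
        (LinearMap.mul' K (A ⊗[K] A)) ((TensorProduct.map LinearMap.id SS)
          ((TensorProduct.tensorTensorTensorComm K A A A A)
            ((rx.left i ⊗ₜ[K] rx.right i) ⊗ₜ[K] (ry.left j ⊗ₜ[K] ry.right j))))
        = (rx.left i * HopfAlgebra.antipode (R := K) (rx.right i)) ⊗ₜ[K]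
            (ry.left j * HopfAlgebra.antipode (R := K) (ry.right j)) := by
      intro j _
      simp [Algebra.TensorProduct.tmul_mul_tmul]
    rw [Finset.sum_congr rfl inner, ← TensorProduct.tmul_sum,
      HopfAlgebra.sum_mul_antipode_eq_smul ry]
  rw [Finset.sum_congr rfl step, ← TensorProduct.sum_tmul,
    HopfAlgebra.sum_mul_antipode_eq_smul rx]
  simp [TensorProduct.smul_tmul, Algebra.smul_def, TensorProduct.tmul_smul]
end sq


section CA
variable {K A : Type*} [Field K] [Ring A] [HopfAlgebra K A]

lemma sum_counit_mul_counit {a : A} (r : Coalgebra.Repr K a (A × A)) :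
    ∑ i ∈ r.index, Coalgebra.counit (R := K) (r.left i) * Coalgebra.counit (R := K) (r.right i)
      = Coalgebra.counit (R := K) a := by
  have := congrArg (Coalgebra.counit (R := K) (A := A)) (_root_.sum_counit_smul r)
  simpa [map_sum, smul_eq_mul] using this

lemma mapuu_comul (a : A) :
    TensorProduct.map (uu (K := K) (A := A)) (uu (K := K) (A := A)) (Coalgebra.comul (R := K) a)
      = convUnit (K := K) (A := A) (V := A ⊗[K] A) a := by
  let r := ℛ K a
  rw [← r.eq, map_sum]
  have step : ∀ i ∈ r.index,
      TensorProduct.map (uu (K := K) (A := A)) (uu (K := K) (A := A))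
        (r.left i ⊗ₜ[K] r.right i)
      = (Coalgebra.counit (R := K) (r.left i) * Coalgebra.counit (R := K) (r.right i)) •
          ((1 : A) ⊗ₜ[K] (1 : A)) := by
    intro i _
    simp only [TensorProduct.map_tmul, LinearMap.comp_apply, Algebra.linearMap_apply,
      Algebra.algebraMap_eq_smul_one, TensorProduct.smul_tmul', TensorProduct.tmul_smul,
      smul_smul]
    rw [mul_comm]
  rw [Finset.sum_congr rfl step, ← Finset.sum_smul, sum_counit_mul_counit r]
  simp [convUnit, Algebra.smul_def, Algebra.TensorProduct.one_def]

lemma conv_comul_SScomul (hA : _root_.IsCocomm K A) :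
    conv (Coalgebra.comul (R := K) (A := A))
      ((SS (K := K) (A := A)) ∘ₗ (Coalgebra.comul (R := K))) = convUnit := by
  ext a
  have hmap : TensorProduct.map (Coalgebra.comul (R := K) (A := A))
      ((SS (K := K) (A := A)) ∘ₗ (Coalgebra.comul (R := K)))
      = (TensorProduct.map LinearMap.id (SS (K := K) (A := A))) ∘ₗ
        (TensorProduct.map (Coalgebra.comul (R := K)) (Coalgebra.comul (R := K))) := by
    rw [← TensorProduct.map_comp, LinearMap.id_comp]
  rw [conv, LinearMap.comp_apply, LinearMap.comp_apply, hmap, LinearMap.comp_apply,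
    ← swap23 hA a]
  have := congr($(mulB_lTensor_SS (K := K) (A := A)) (Coalgebra.comul (R := K) a))
  simp only [LinearMap.comp_apply, LinearEquiv.coe_coe] at this
  rw [this, mapuu_comul]

lemma conv_comulS_comul :
    conv ((Coalgebra.comul (R := K) (A := A)) ∘ₗ (HopfAlgebra.antipode (R := K)))
      (Coalgebra.comul (R := K) (A := A)) = convUnit := by
  ext a
  let r := ℛ K a
  rw [conv_apply _ _ r]
  have step : ∀ i ∈ r.index,
      ((Coalgebra.comul (R := K) (A := A)) ∘ₗ (HopfAlgebra.antipode (R := K))) (r.left i) *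
        (Coalgebra.comul (R := K) (A := A)) (r.right i)
      = (Coalgebra.comul (R := K) (A := A))
          (HopfAlgebra.antipode (R := K) (r.left i) * r.right i) := by
    intro i _
    rw [LinearMap.comp_apply, Bialgebra.comul_mul]
  rw [Finset.sum_congr rfl step, ← map_sum, HopfAlgebra.sum_antipode_mul_eq_algebraMap_counit r,
    Bialgebra.comul_algebraMap]
  simp [convUnit]

lemma comul_antipode (hA : _root_.IsCocomm K A) :
    (Coalgebra.comul (R := K) (A := A)) ∘ₗ (HopfAlgebra.antipode (R := K)) =
    (SS (K := K) (A := A)) ∘ₗ (Coalgebra.comul (R := K)) := by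
  calc (Coalgebra.comul (R := K) (A := A)) ∘ₗ (HopfAlgebra.antipode (R := K))
      = conv ((Coalgebra.comul (R := K) (A := A)) ∘ₗ (HopfAlgebra.antipode (R := K)))
          convUnit := (conv_unit_right _).symm
    _ = conv ((Coalgebra.comul (R := K) (A := A)) ∘ₗ (HopfAlgebra.antipode (R := K)))
          (conv (Coalgebra.comul (R := K) (A := A))
            ((SS (K := K) (A := A)) ∘ₗ (Coalgebra.comul (R := K)))) := by
        rw [conv_comul_SScomul hA]
    _ = conv (conv ((Coalgebra.comul (R := K) (A := A)) ∘ₗ (HopfAlgebra.antipode (R := K)))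
          (Coalgebra.comul (R := K) (A := A)))
          ((SS (K := K) (A := A)) ∘ₗ (Coalgebra.comul (R := K))) := (conv_assoc _ _ _).symm
    _ = conv convUnit ((SS (K := K) (A := A)) ∘ₗ (Coalgebra.comul (R := K))) := by
        rw [conv_comulS_comul]
    _ = (SS (K := K) (A := A)) ∘ₗ (Coalgebra.comul (R := K)) := conv_unit_left _

lemma comul_antipode_apply (hA : _root_.IsCocomm K A) (a : A) :
    (Coalgebra.comul (R := K) (A := A)) (HopfAlgebra.antipode (R := K) a) =
    TensorProduct.map (HopfAlgebra.antipode (R := K)) (HopfAlgebra.antipode (R := K))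
      (Coalgebra.comul (R := K) a) :=
  congr($(comul_antipode hA) a)

end CA

/-- The commutator subalgebra `[X,Y]`: the subalgebra of `A` generated by the
Hopf commutators `{x,y} = x₁ y₁ S(x₂) S(y₂)` for `x ∈ X`, `y ∈ Y`. -/
noncomputable def hopfCommutator {K A : Type*} [Field K] [Ring A] [HopfAlgebra K A]
    (X Y : Subalgebra K A) : Subalgebra K A :=
  Algebra.adjoin K {z : A | ∃ x ∈ X, ∃ y ∈ Y, z = hopfComm K A (x ⊗ₜ[K] y)}

section main2
variable (K A : Type*) [Field K] [Ring A] [HopfAlgebra K A]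

/-- the "core" of the Hopf commutator, before comultiplying -/
noncomputable def hCp : (A ⊗[K] A) ⊗[K] (A ⊗[K] A) →ₗ[K] A :=
  (LinearMap.mul' K A) ∘ₗ
    (TensorProduct.map (LinearMap.mul' K A)
      ((LinearMap.mul' K A) ∘ₗ
        TensorProduct.map (HopfAlgebra.antipode (R := K) (A := A))
          (HopfAlgebra.antipode (R := K) (A := A)))) ∘ₗ
    (TensorProduct.tensorTensorTensorComm K A A A A).toLinearMap

/-- the double commutator map -/
noncomputable def Wmap : ((A ⊗[K] A) ⊗[K] (A ⊗[K] A)) ⊗[K] ((A ⊗[K] A) ⊗[K] (A ⊗[K] A)) →ₗ[K]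
    A ⊗[K] A :=
  (TensorProduct.map (hCp K A) (hCp K A)) ∘ₗ
    (TensorProduct.tensorTensorTensorComm K (A ⊗[K] A) (A ⊗[K] A) (A ⊗[K] A) (A ⊗[K] A)).toLinearMap

variable {K A}

lemma hopfComm_eq (z : A ⊗[K] A) :
    hopfComm K A z = hCp K A (TensorProduct.map (Coalgebra.comul (R := K))
      (Coalgebra.comul (R := K)) z) := rfl

lemma hCp_tmul (a b c d : A) :
    hCp K A ((a ⊗ₜ[K] b) ⊗ₜ[K] (c ⊗ₜ[K] d)) =
      (a * c) * (HopfAlgebra.antipode (R := K) b * HopfAlgebra.antipode (R := K) d) := by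
  simp [hCp]

lemma Wmap_tmul (z₁ z₂ w₁ w₂ : A ⊗[K] A) :
    Wmap K A ((z₁ ⊗ₜ[K] z₂) ⊗ₜ[K] (w₁ ⊗ₜ[K] w₂)) =
      hCp K A (z₁ ⊗ₜ[K] w₁) ⊗ₜ[K] hCp K A (z₂ ⊗ₜ[K] w₂) := by
  simp [Wmap]

end main2

section sums
variable {α β γ δ M : Type*} [AddCommMonoid M]

lemma sum4_reverse (s : Finset α) (t : Finset β) (u : Finset γ) (v : Finset δ)
    (f : α → β → γ → δ → M) :
    ∑ i ∈ s, ∑ j ∈ t, ∑ k ∈ u, ∑ l ∈ v, f i j k l =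
    ∑ l ∈ v, ∑ k ∈ u, ∑ j ∈ t, ∑ i ∈ s, f i j k l := by
  calc ∑ i ∈ s, ∑ j ∈ t, ∑ k ∈ u, ∑ l ∈ v, f i j k l
      = ∑ j ∈ t, ∑ i ∈ s, ∑ k ∈ u, ∑ l ∈ v, f i j k l := Finset.sum_comm
    _ = ∑ j ∈ t, ∑ k ∈ u, ∑ i ∈ s, ∑ l ∈ v, f i j k l :=
        Finset.sum_congr rfl (fun j _ => Finset.sum_comm)
    _ = ∑ j ∈ t, ∑ k ∈ u, ∑ l ∈ v, ∑ i ∈ s, f i j k l :=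
        Finset.sum_congr rfl (fun j _ => Finset.sum_congr rfl (fun k _ => Finset.sum_comm))
    _ = ∑ k ∈ u, ∑ j ∈ t, ∑ l ∈ v, ∑ i ∈ s, f i j k l := Finset.sum_comm
    _ = ∑ k ∈ u, ∑ l ∈ v, ∑ j ∈ t, ∑ i ∈ s, f i j k l :=
        Finset.sum_congr rfl (fun k _ => Finset.sum_comm)
    _ = ∑ l ∈ v, ∑ k ∈ u, ∑ j ∈ t, ∑ i ∈ s, f i j k l := Finset.sum_comm

end sums

section main3
variable {K A : Type*} [Field K] [Ring A] [HopfAlgebra K A]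

lemma claim33 (a b c d : A) (ra : Coalgebra.Repr K a (A × A)) (rb : Coalgebra.Repr K b (A × A))
    (rc : Coalgebra.Repr K c (A × A)) (rd : Coalgebra.Repr K d (A × A)) :
    (Coalgebra.comul (R := K) a * Coalgebra.comul (R := K) c) *
      (SS (K := K) (A := A) (Coalgebra.comul (R := K) b) *
       SS (K := K) (A := A) (Coalgebra.comul (R := K) d)) =
    Wmap K A
      ((TensorProduct.tensorTensorTensorComm K A A A A
          (Coalgebra.comul (R := K) a ⊗ₜ[K] Coalgebra.comul (R := K) b)) ⊗ₜ[K]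
       (TensorProduct.tensorTensorTensorComm K A A A A
          (Coalgebra.comul (R := K) c ⊗ₜ[K] Coalgebra.comul (R := K) d))) := by
  rw [← ra.eq, ← rb.eq, ← rc.eq, ← rd.eq]
  simp only [map_sum, TensorProduct.map_tmul, TensorProduct.sum_tmul, TensorProduct.tmul_sum,
    Finset.sum_mul_sum, Algebra.TensorProduct.tmul_mul_tmul,
    TensorProduct.tensorTensorTensorComm_tmul, Wmap_tmul, hCp_tmul, LinearMap.mul'_apply]
  rw [sum4_reverse]

end main3

section main4
variable {K A : Type*} [Field K] [Ring A] [HopfAlgebra K A]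

lemma hopfComm_tmul (x y : A) (rx : Coalgebra.Repr K x (A × A)) (ry : Coalgebra.Repr K y (A × A)) :
    hopfComm K A (x ⊗ₜ[K] y) =
    ∑ i ∈ rx.index, ∑ j ∈ ry.index,
      (rx.left i * ry.left j) *
        (HopfAlgebra.antipode (R := K) (rx.right i) *
         HopfAlgebra.antipode (R := K) (ry.right j)) := by
  rw [hopfComm]
  simp only [LinearMap.comp_apply, TensorProduct.map_tmul, LinearEquiv.coe_coe]
  rw [← rx.eq, ← ry.eq]
  simp only [TensorProduct.sum_tmul, TensorProduct.tmul_sum, map_sum,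
    TensorProduct.tensorTensorTensorComm_tmul, TensorProduct.map_tmul,
    LinearMap.comp_apply, LinearMap.mul'_apply]
  rw [Finset.sum_comm]

lemma comul_hopfComm (hA : _root_.IsCocomm K A) (x y : A) :
    Coalgebra.comul (R := K) (hopfComm K A (x ⊗ₜ[K] y)) =
    TensorProduct.map (hopfComm K A) (hopfComm K A)
      (TensorProduct.tensorTensorTensorComm K A A A A
        (Coalgebra.comul (R := K) x ⊗ₜ[K] Coalgebra.comul (R := K) y)) := by
  classical
  let rx := ℛ K x
  let ry := ℛ K y
  -- Step 1/2: expand the comultiplication of the commutator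
  have step12 : Coalgebra.comul (R := K) (hopfComm K A (x ⊗ₜ[K] y)) =
      ∑ i ∈ rx.index, ∑ j ∈ ry.index,
        (Coalgebra.comul (R := K) (rx.left i) * Coalgebra.comul (R := K) (ry.left j)) *
          (SS (K := K) (A := A) (Coalgebra.comul (R := K) (rx.right i)) *
           SS (K := K) (A := A) (Coalgebra.comul (R := K) (ry.right j))) := by
    rw [hopfComm_tmul x y rx ry, map_sum]
    apply Finset.sum_congr rfl
    intro i _
    rw [map_sum]
    apply Finset.sum_congr rfl
    intro j _
    rw [Bialgebra.comul_mul, Bialgebra.comul_mul, Bialgebra.comul_mul,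
      comul_antipode_apply hA, comul_antipode_apply hA]
  -- Step 3: rewrite each summand via `claim33`
  have step3 : Coalgebra.comul (R := K) (hopfComm K A (x ⊗ₜ[K] y)) =
      ∑ i ∈ rx.index, ∑ j ∈ ry.index,
        Wmap K A
          ((TensorProduct.tensorTensorTensorComm K A A A A
              (Coalgebra.comul (R := K) (rx.left i) ⊗ₜ[K]
               Coalgebra.comul (R := K) (rx.right i))) ⊗ₜ[K]
           (TensorProduct.tensorTensorTensorComm K A A A A
              (Coalgebra.comul (R := K) (ry.left j) ⊗ₜ[K]
               Coalgebra.comul (R := K) (ry.right j)))) := by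
    rw [step12]
    apply Finset.sum_congr rfl
    intro i _
    apply Finset.sum_congr rfl
    intro j _
    exact claim33 _ _ _ _ (ℛ K _) (ℛ K _) (ℛ K _) (ℛ K _)
  -- Step 4: collect the sums and use cocommutativity (swap23)
  have collectx : ∑ i ∈ rx.index,
      TensorProduct.tensorTensorTensorComm K A A A A
        (Coalgebra.comul (R := K) (rx.left i) ⊗ₜ[K] Coalgebra.comul (R := K) (rx.right i)) =
      TensorProduct.map (Coalgebra.comul (R := K)) (Coalgebra.comul (R := K))
        (Coalgebra.comul (R := K) x) := by
    rw [← swap23 hA x, ← rx.eq]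
    simp [map_sum]
  have collecty : ∑ j ∈ ry.index,
      TensorProduct.tensorTensorTensorComm K A A A A
        (Coalgebra.comul (R := K) (ry.left j) ⊗ₜ[K] Coalgebra.comul (R := K) (ry.right j)) =
      TensorProduct.map (Coalgebra.comul (R := K)) (Coalgebra.comul (R := K))
        (Coalgebra.comul (R := K) y) := by
    rw [← swap23 hA y, ← ry.eq]
    simp [map_sum]
  have step4 : Coalgebra.comul (R := K) (hopfComm K A (x ⊗ₜ[K] y)) =
      Wmap K A
        ((TensorProduct.map (Coalgebra.comul (R := K)) (Coalgebra.comul (R := K))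
            (Coalgebra.comul (R := K) x)) ⊗ₜ[K]
         (TensorProduct.map (Coalgebra.comul (R := K)) (Coalgebra.comul (R := K))
            (Coalgebra.comul (R := K) y))) := by
    rw [step3, ← collectx, ← collecty, TensorProduct.sum_tmul, map_sum]
    apply Finset.sum_congr rfl
    intro i _
    rw [TensorProduct.tmul_sum, map_sum]
  -- Step 5: identify with the right-hand side
  rw [step4, ← rx.eq, ← ry.eq]
  simp only [map_sum, TensorProduct.map_tmul, TensorProduct.sum_tmul, TensorProduct.tmul_sum,
    TensorProduct.tensorTensorTensorComm_tmul, Wmap_tmul]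
  simp only [hopfComm_eq, TensorProduct.map_tmul]

end main4

/-- The commutator subalgebra `[X,Y]` of two normal Hopf subalgebras is a
subcoalgebra: `Δ({x,y}) ∈ [X,Y] ⊗ [X,Y]` for every generator. -/
theorem hopfCommutator_subcoalgebra
    {K A : Type*} [Field K] [Ring A] [HopfAlgebra K A] (hA : _root_.IsCocomm K A)
    (X Y : Subalgebra K A)
    (hX_comul : ∀ x ∈ X, Coalgebra.comul (R := K) x ∈
      LinearMap.range (TensorProduct.map X.toSubmodule.subtype X.toSubmodule.subtype))
    (hX_antipode : ∀ x ∈ X, HopfAlgebra.antipode (R := K) x ∈ X)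
    (hX_normal : ∀ (a : A), ∀ x ∈ X, adAct K A (a ⊗ₜ[K] x) ∈ X)
    (hY_comul : ∀ y ∈ Y, Coalgebra.comul (R := K) y ∈
      LinearMap.range (TensorProduct.map Y.toSubmodule.subtype Y.toSubmodule.subtype))
    (hY_antipode : ∀ y ∈ Y, HopfAlgebra.antipode (R := K) y ∈ Y)
    (hY_normal : ∀ (a : A), ∀ y ∈ Y, adAct K A (a ⊗ₜ[K] y) ∈ Y) :
    ∀ x ∈ X, ∀ y ∈ Y,
      Coalgebra.comul (R := K) (hopfComm K A (x ⊗ₜ[K] y)) ∈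
        LinearMap.range (TensorProduct.map
          (hopfCommutator X Y).toSubmodule.subtype
          (hopfCommutator X Y).toSubmodule.subtype) := by
  intro x hx y hy
  obtain ⟨t, ht⟩ := hX_comul x hx
  obtain ⟨s, hs⟩ := hY_comul y hy
  rw [comul_hopfComm hA x y, ← ht, ← hs]
  -- the generator map `X ⊗ Y → A`
  set g : (↥X) ⊗[K] (↥Y) →ₗ[K] A :=
    (hopfComm K A) ∘ₗ TensorProduct.map X.toSubmodule.subtype Y.toSubmodule.subtype with hg
  have hmem : ∀ w, g w ∈ (hopfCommutator X Y).toSubmodule := by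
    intro w
    induction w using TensorProduct.induction_on with
    | zero => rw [LinearMap.map_zero]; exact zero_mem _
    | tmul x' y' =>
      apply Algebra.subset_adjoin
      exact ⟨(x' : A), x'.2, (y' : A), y'.2, rfl⟩
    | add u v hu hv => rw [map_add]; exact add_mem hu hv
  set g' : (↥X) ⊗[K] (↥Y) →ₗ[K] (hopfCommutator X Y).toSubmodule :=
    g.codRestrict (hopfCommutator X Y).toSubmodule hmem with hg'
  have hfact : (hopfComm K A) ∘ₗ TensorProduct.map X.toSubmodule.subtype Y.toSubmodule.subtype =
      (hopfCommutator X Y).toSubmodule.subtype ∘ₗ g' := by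
    rw [← hg, hg']
    exact (LinearMap.subtype_comp_codRestrict _ _ _).symm
  have hnat := ttt_natural (R := K) X.toSubmodule.subtype X.toSubmodule.subtype
    Y.toSubmodule.subtype Y.toSubmodule.subtype
  have e1 := congr($hnat (t ⊗ₜ[K] s))
  simp only [LinearMap.comp_apply, TensorProduct.map_tmul, LinearEquiv.coe_coe] at e1
  rw [e1, ← LinearMap.comp_apply (TensorProduct.map (hopfComm K A) (hopfComm K A)),
    ← TensorProduct.map_comp, hfact, TensorProduct.map_comp, LinearMap.comp_apply]
  exact ⟨_, rfl⟩
end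

section
/- Let A be a cocommutative Hopf algebra over a field K, X, Y ⊆ A normal Hopf subalgebras, and [X,Y] the subalgebra generated by the elements {x,y} = x₁ y₁ S(x₂) S(y₂). Then [X,Y] is normal in A: for every c ∈ A, x ∈ X, y ∈ Y, the element c₁ x₁ y₁ S(x₂) S(y₂) S(c₂) lies in [X,Y]. -/
open TensorProduct Coalgebra

/-! ### Auxiliary convolution-algebra framework -/

namespace HopfCommAux

open Coalgebra TensorProduct HopfAlgebra

universe u v w

variable {K : Type u} {A : Type v} [CommSemiring K] [Semiring A] [HopfAlgebra K A]
variable {B : Type w} [Semiring B] [Algebra K B]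
variable {ι κ Λ : Type*}

local notation "𝒮" => HopfAlgebra.antipode (R := K) (A := A)
local notation "Δ" => Coalgebra.comul (R := K) (A := A)
local notation "ε" => Coalgebra.counit (R := K) (A := A)

/-- Convolution product of two linear maps from the Hopf algebra `A`
to an algebra `B`. -/
noncomputable def conv (f g : A →ₗ[K] B) : A →ₗ[K] B :=
  LinearMap.mul' K B ∘ₗ TensorProduct.map f g ∘ₗ Coalgebra.comul

lemma conv_apply_repr (f g : A →ₗ[K] B) {a : A} (r : Coalgebra.Repr K a ι) :
    conv f g a = ∑ i ∈ r.index, f (r.left i) * g (r.right i) := by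
  simp only [conv, LinearMap.comp_apply, ← r.eq, map_sum, TensorProduct.map_tmul,
    LinearMap.mul'_apply]

/-- The unit of the convolution algebra. -/
noncomputable def cu : A →ₗ[K] B := Algebra.linearMap K B ∘ₗ Coalgebra.counit

lemma cu_apply (a : A) : (cu : A →ₗ[K] B) a = algebraMap K B (ε a) := rfl

lemma sum_counit_smul {a : A} (r : Coalgebra.Repr K a ι) :
    ∑ i ∈ r.index, ε (r.left i) • r.right i = a := by
  have h := Coalgebra.sum_counit_tmul_eq (R := K) r
  calc ∑ i ∈ r.index, ε (r.left i) • r.right i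
      = TensorProduct.lid K A (∑ i ∈ r.index, ε (r.left i) ⊗ₜ[K] r.right i) := by
        rw [map_sum]; simp
    _ = TensorProduct.lid K A ((1 : K) ⊗ₜ[K] a) := by rw [h]
    _ = a := by simp

lemma sum_smul_counit {a : A} (r : Coalgebra.Repr K a ι) :
    ∑ i ∈ r.index, ε (r.right i) • r.left i = a := by
  have h := Coalgebra.sum_tmul_counit_eq (R := K) r
  calc ∑ i ∈ r.index, ε (r.right i) • r.left i
      = TensorProduct.rid K A (∑ i ∈ r.index, r.left i ⊗ₜ[K] ε (r.right i)) := by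
        rw [map_sum]; simp
    _ = TensorProduct.rid K A (a ⊗ₜ[K] (1 : K)) := by rw [h]
    _ = a := by simp

lemma sum_counit_smul_map {M : Type*} [AddCommMonoid M] [Module K M]
    (φ : A →ₗ[K] M) {a : A} (r : Coalgebra.Repr K a ι) :
    ∑ i ∈ r.index, ε (r.left i) • φ (r.right i) = φ a := by
  have h : ∑ i ∈ r.index, ε (r.left i) • φ (r.right i)
      = φ (∑ i ∈ r.index, ε (r.left i) • r.right i) := by
    rw [map_sum]; simp [map_smul]
  rw [h, sum_counit_smul r]

lemma sum_smul_counit_map {M : Type*} [AddCommMonoid M] [Module K M]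
    (φ : A →ₗ[K] M) {a : A} (r : Coalgebra.Repr K a ι) :
    ∑ i ∈ r.index, ε (r.right i) • φ (r.left i) = φ a := by
  have h : ∑ i ∈ r.index, ε (r.right i) • φ (r.left i)
      = φ (∑ i ∈ r.index, ε (r.right i) • r.left i) := by
    rw [map_sum]; simp [map_smul]
  rw [h, sum_smul_counit r]

lemma conv_cu_left (f : A →ₗ[K] B) : conv cu f = f := by
  ext a
  rw [conv_apply_repr _ _ (ℛ K a)]
  simp only [cu_apply, ← Algebra.smul_def]
  exact sum_counit_smul_map f (ℛ K a)

lemma conv_cu_right (f : A →ₗ[K] B) : conv f cu = f := by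
  ext a
  rw [conv_apply_repr _ _ (ℛ K a)]
  simp only [cu_apply]
  have : ∀ i ∈ (ℛ K a).index,
      f ((ℛ K a).left i) * algebraMap K B (ε ((ℛ K a).right i)) =
      ε ((ℛ K a).right i) • f ((ℛ K a).left i) := by
    intro i _
    rw [← Algebra.commutes, ← Algebra.smul_def]
  rw [Finset.sum_congr rfl this]
  exact sum_smul_counit_map f (ℛ K a)

lemma conv_assoc (f g h : A →ₗ[K] B) : conv (conv f g) h = conv f (conv g h) := by
  ext a
  set r := ℛ K a
  set rL : (i : A × A) → Coalgebra.Repr K (r.left i) (A × A) := fun i => ℛ K (r.left i)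
  set rR : (i : A × A) → Coalgebra.Repr K (r.right i) (A × A) := fun i => ℛ K (r.right i)
  have key := Coalgebra.sum_map_tmul_tmul_eq (f := f) (g := g) (h := h) (a := a)
    (repr := r) (a₁ := rL) (a₂ := rR)
  have key2 := congrArg (LinearMap.mul' K B ∘ₗ LinearMap.lTensor B (LinearMap.mul' K B)) key
  simp only [map_sum, LinearMap.comp_apply, LinearMap.lTensor_tmul,
    LinearMap.mul'_apply] at key2
  rw [conv_apply_repr (conv f g) h r, conv_apply_repr f (conv g h) r]
  have hL : ∀ i ∈ r.index, conv f g (r.left i) * h (r.right i) =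
      ∑ j ∈ (rL i).index, f ((rL i).left j) * (g ((rL i).right j) * h (r.right i)) := by
    intro i _
    rw [conv_apply_repr f g (rL i), Finset.sum_mul]
    exact Finset.sum_congr rfl fun j _ => mul_assoc _ _ _
  have hR : ∀ i ∈ r.index, f (r.left i) * conv g h (r.right i) =
      ∑ j ∈ (rR i).index, f (r.left i) * (g ((rR i).left j) * h ((rR i).right j)) := by
    intro i _
    rw [conv_apply_repr g h (rR i), Finset.mul_sum]
  rw [Finset.sum_congr rfl hL, Finset.sum_congr rfl hR]
  exact key2.symm

lemma conv_eq_of (f g h : A →ₗ[K] B) (h1 : conv f g = cu) (h2 : conv g h = cu) :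
    f = h := by
  have := conv_assoc f g h
  rw [h1, h2, conv_cu_left, conv_cu_right] at this
  exact this.symm

lemma comp_conv {B' : Type*} [Semiring B'] [Algebra K B'] (φ : B →ₐ[K] B')
    (f g : A →ₗ[K] B) :
    φ.toLinearMap ∘ₗ conv f g = conv (φ.toLinearMap ∘ₗ f) (φ.toLinearMap ∘ₗ g) := by
  ext a
  rw [LinearMap.comp_apply, conv_apply_repr f g (ℛ K a),
    conv_apply_repr _ _ (ℛ K a)]
  simp [map_sum]

lemma conv_sum_left {ι : Type*} (s : Finset ι) (F : ι → (A →ₗ[K] B)) (g : A →ₗ[K] B) :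
    conv (∑ k ∈ s, F k) g = ∑ k ∈ s, conv (F k) g := by
  ext a
  rw [conv_apply_repr _ _ (ℛ K a)]
  simp only [LinearMap.sum_apply, conv_apply_repr _ _ (ℛ K a), Finset.sum_mul]
  rw [Finset.sum_comm]

lemma conv_sum_right {ι : Type*} (s : Finset ι) (f : A →ₗ[K] B) (G : ι → (A →ₗ[K] B)) :
    conv f (∑ k ∈ s, G k) = ∑ k ∈ s, conv f (G k) := by
  ext a
  rw [conv_apply_repr _ _ (ℛ K a)]
  simp only [LinearMap.sum_apply, conv_apply_repr _ _ (ℛ K a), Finset.mul_sum]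
  rw [Finset.sum_comm]

/-- Swap a representation of the comultiplication, using cocommutativity. -/
noncomputable def swapRepr (hA : _root_.IsCocomm K A) {a : A} (r : Coalgebra.Repr K a ι) :
    Coalgebra.Repr K a ι where
  index := r.index
  left := r.right
  right := r.left
  eq := by
    have h1 : (TensorProduct.comm K A A) (Δ a) = Δ a := LinearMap.congr_fun hA a
    calc ∑ i ∈ r.index, r.right i ⊗ₜ[K] r.left i
        = (TensorProduct.comm K A A) (∑ i ∈ r.index, r.left i ⊗ₜ[K] r.right i) := by
          simp [map_sum]
      _ = Δ a := by rw [r.eq]; exact h1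

lemma conv_comm_of_commute (hA : _root_.IsCocomm K A) (f g : A →ₗ[K] B)
    (hc : ∀ a b : A, f a * g b = g b * f a) : conv f g = conv g f := by
  ext a
  rw [conv_apply_repr f g (ℛ K a), conv_apply_repr g f (swapRepr hA (ℛ K a))]
  exact Finset.sum_congr rfl fun i _ => (hc _ _)

/-! ### Basic antipode lemmas -/

lemma conv_antipode_id : conv (𝒮) (LinearMap.id) = (cu : A →ₗ[K] A) :=
  HopfAlgebra.mul_antipode_rTensor_comul

lemma conv_id_antipode : conv (LinearMap.id) (𝒮) = (cu : A →ₗ[K] A) :=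
  HopfAlgebra.mul_antipode_lTensor_comul

lemma algHom_conv_antipode (φ : A →ₐ[K] B) :
    conv (φ.toLinearMap ∘ₗ 𝒮) φ.toLinearMap = cu := by
  ext a
  rw [conv_apply_repr _ _ (ℛ K a)]
  have h1 : ∀ i ∈ (ℛ K a).index,
      (φ.toLinearMap ∘ₗ 𝒮) ((ℛ K a).left i) * φ.toLinearMap ((ℛ K a).right i)
      = φ (𝒮 ((ℛ K a).left i) * (ℛ K a).right i) := by
    intro i _; simp [map_mul]
  rw [Finset.sum_congr rfl h1, ← map_sum, HopfAlgebra.sum_antipode_mul_eq_algebraMap_counit (ℛ K a)]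
  simp [cu_apply, AlgHom.commutes]

lemma algHom_conv_antipode' (φ : A →ₐ[K] B) :
    conv φ.toLinearMap (φ.toLinearMap ∘ₗ 𝒮) = cu := by
  ext a
  rw [conv_apply_repr _ _ (ℛ K a)]
  have h1 : ∀ i ∈ (ℛ K a).index,
      φ.toLinearMap ((ℛ K a).left i) * (φ.toLinearMap ∘ₗ 𝒮) ((ℛ K a).right i)
      = φ ((ℛ K a).left i * 𝒮 ((ℛ K a).right i)) := by
    intro i _; simp [map_mul]
  rw [Finset.sum_congr rfl h1, ← map_sum, HopfAlgebra.sum_mul_antipode_eq_algebraMap_counit (ℛ K a)]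
  simp [cu_apply, AlgHom.commutes]

lemma antipode_one' : 𝒮 (1 : A) = 1 := by
  have h := HopfAlgebra.mul_antipode_rTensor_comul_apply (R := K) (a := (1 : A))
  simpa [Algebra.TensorProduct.one_def] using h

/-- The representation of `comul (x * y)` obtained by multiplying representations
of `comul x` and `comul y`. -/
noncomputable def mulRepr {x y : A} (rx : Coalgebra.Repr K x ι) (ry : Coalgebra.Repr K y κ) :
    Coalgebra.Repr K (x * y) (ι × κ) where
  index := rx.index ×ˢ ry.index
  left p := rx.left p.1 * ry.left p.2
  right p := rx.right p.1 * ry.right p.2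
  eq := by
    rw [Finset.sum_product]
    rw [Bialgebra.comul_mul, ← rx.eq, ← ry.eq, Finset.sum_mul_sum]
    simp [Algebra.TensorProduct.tmul_mul_tmul]

/-- Transport of nested representations along coassociativity. -/
lemma transport (f g h : A →ₗ[K] B) {a : A} (r : Coalgebra.Repr K a ι)
    (rL : ∀ i, Coalgebra.Repr K (r.left i) κ) (rR : ∀ i, Coalgebra.Repr K (r.right i) Λ) :
    ∑ i ∈ r.index, ∑ j ∈ (rR i).index,
      f (r.left i) * (g ((rR i).left j) * h ((rR i).right j))
    = ∑ i ∈ r.index, ∑ j ∈ (rL i).index,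
      f ((rL i).left j) * (g ((rL i).right j) * h (r.right i)) := by
  have key := Coalgebra.sum_map_tmul_tmul_eq (f := f) (g := g) (h := h) (a := a)
    (repr := r) (a₁ := rL) (a₂ := rR)
  have key2 := congrArg (LinearMap.mul' K B ∘ₗ LinearMap.lTensor B (LinearMap.mul' K B)) key
  simpa [map_sum] using key2

/-- The antipode is anti-multiplicative. -/
lemma antipode_mul' (x y : A) : 𝒮 (x * y) = 𝒮 y * 𝒮 x := by
  set rx := ℛ K x with hrx
  set ry := ℛ K y with hry
  set rxL : ∀ i, Coalgebra.Repr K (rx.left i) (A × A) := fun i => ℛ K (rx.left i) with hrxL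
  set rxR : ∀ i, Coalgebra.Repr K (rx.right i) (A × A) := fun i => ℛ K (rx.right i) with hrxR
  set ryL : ∀ k, Coalgebra.Repr K (ry.left k) (A × A) := fun k => ℛ K (ry.left k) with hryL
  set ryR : ∀ k, Coalgebra.Repr K (ry.right k) (A × A) := fun k => ℛ K (ry.right k) with hryR
  -- the master sum, in order (k, l, i, j), fully right-associated
  set T : A := ∑ k ∈ ry.index, ∑ l ∈ (ryR k).index, ∑ i ∈ rx.index, ∑ j ∈ (rxR i).index,
    𝒮 (rx.left i * ry.left k) *
      ((rxR i).left j * ((ryR k).left l *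
        (𝒮 ((ryR k).right l) * 𝒮 ((rxR i).right j)))) with hT
  -- Way 1 : T = 𝒮 (x * y)
  have way1 : T = 𝒮 (x * y) := by
    rw [hT]
    -- reorder (k,l,i,j) → (k,i,j,l)
    rw [Finset.sum_congr rfl fun k _ => Finset.sum_comm]
    rw [Finset.sum_congr rfl fun k _ =>
      Finset.sum_congr rfl fun i _ => Finset.sum_comm]
    -- collapse the l-sum, then the j-sum
    have hcol : ∀ k ∈ ry.index, ∀ i ∈ rx.index,
        (∑ j ∈ (rxR i).index, ∑ l ∈ (ryR k).index,
          𝒮 (rx.left i * ry.left k) *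
            ((rxR i).left j * ((ryR k).left l *
              (𝒮 ((ryR k).right l) * 𝒮 ((rxR i).right j)))))
        = ε (ry.right k) • (ε (rx.right i) • 𝒮 (rx.left i * ry.left k)) := by
      intro k _ i _
      have hl : ∀ j ∈ (rxR i).index,
          (∑ l ∈ (ryR k).index,
            𝒮 (rx.left i * ry.left k) *
              ((rxR i).left j * ((ryR k).left l *
                (𝒮 ((ryR k).right l) * 𝒮 ((rxR i).right j)))))
          = ε (ry.right k) •
              (𝒮 (rx.left i * ry.left k) *
                ((rxR i).left j * 𝒮 ((rxR i).right j))) := by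
        intro j _
        have e1 : ∀ l ∈ (ryR k).index,
            𝒮 (rx.left i * ry.left k) *
              ((rxR i).left j * ((ryR k).left l *
                (𝒮 ((ryR k).right l) * 𝒮 ((rxR i).right j))))
            = 𝒮 (rx.left i * ry.left k) *
                ((rxR i).left j *
                  (((ryR k).left l * 𝒮 ((ryR k).right l)) * 𝒮 ((rxR i).right j))) := by
          intro l _; simp only [mul_assoc]
        rw [Finset.sum_congr rfl e1, ← Finset.mul_sum, ← Finset.mul_sum,
          ← Finset.sum_mul, HopfAlgebra.sum_mul_antipode_eq_algebraMap_counit (ryR k),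
          ← Algebra.smul_def, mul_smul_comm, mul_smul_comm]
      rw [Finset.sum_congr rfl hl, ← Finset.smul_sum, ← Finset.mul_sum,
        HopfAlgebra.sum_mul_antipode_eq_algebraMap_counit (rxR i), ← Algebra.commutes,
        ← Algebra.smul_def]
    rw [Finset.sum_congr rfl fun k hk =>
      Finset.sum_congr rfl fun i hi => hcol k hk i hi]
    -- now assemble S(x*y)
    have e2 : ∀ k ∈ ry.index, ∀ i ∈ rx.index,
        ε (ry.right k) • (ε (rx.right i) • 𝒮 (rx.left i * ry.left k))
        = 𝒮 ((ε (rx.right i) • rx.left i) * (ε (ry.right k) • ry.left k)) := by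
      intro k _ i _
      rw [smul_mul_assoc, mul_smul_comm, map_smul, map_smul, smul_comm]
    rw [Finset.sum_congr rfl fun k hk =>
      Finset.sum_congr rfl fun i hi => e2 k hk i hi]
    have e3 : ∀ k ∈ ry.index,
        (∑ i ∈ rx.index,
          𝒮 ((ε (rx.right i) • rx.left i) * (ε (ry.right k) • ry.left k)))
        = 𝒮 (x * (ε (ry.right k) • ry.left k)) := by
      intro k _
      rw [← map_sum, ← Finset.sum_mul]
      rw [sum_smul_counit rx]
    rw [Finset.sum_congr rfl e3, ← map_sum, ← Finset.mul_sum, sum_smul_counit ry]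
  -- Way 2 : T = 𝒮 y * 𝒮 x
  have way2 : T = 𝒮 y * 𝒮 x := by
    rw [hT]
    -- Step A : transport the x-nesting, for fixed (k, l)
    have stepA : ∀ k ∈ ry.index, ∀ l ∈ (ryR k).index,
        (∑ i ∈ rx.index, ∑ j ∈ (rxR i).index,
          𝒮 (rx.left i * ry.left k) *
            ((rxR i).left j * ((ryR k).left l *
              (𝒮 ((ryR k).right l) * 𝒮 ((rxR i).right j)))))
        = ∑ i ∈ rx.index, ∑ j ∈ (rxL i).index,
            𝒮 ((rxL i).left j * ry.left k) *
              ((rxL i).right j * ((ryR k).left l *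
                (𝒮 ((ryR k).right l) * 𝒮 (rx.right i)))) := by
      intro k _ l _
      have tr := transport (B := A) (𝒮 ∘ₗ LinearMap.mulRight K (ry.left k))
        (LinearMap.id)
        (LinearMap.mulLeft K ((ryR k).left l * 𝒮 ((ryR k).right l)) ∘ₗ 𝒮)
        rx rxL rxR
      simp only [LinearMap.comp_apply, LinearMap.mulLeft_apply,
        LinearMap.mulRight_apply, LinearMap.id_coe, id_eq, mul_assoc] at tr
      exact tr
    rw [Finset.sum_congr rfl fun k hk =>
      Finset.sum_congr rfl fun l hl => stepA k hk l hl]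
    -- reorder (k,l,i,j) → (i,j,k,l)
    rw [Finset.sum_congr rfl fun k _ => Finset.sum_comm]
    rw [Finset.sum_congr rfl fun k _ =>
      Finset.sum_congr rfl fun i _ => Finset.sum_comm]
    rw [Finset.sum_comm]
    rw [Finset.sum_congr rfl fun i _ => Finset.sum_comm]
    -- Step B : transport the y-nesting, for fixed (i, j)
    have stepB : ∀ i ∈ rx.index, ∀ j ∈ (rxL i).index,
        (∑ k ∈ ry.index, ∑ l ∈ (ryR k).index,
          𝒮 ((rxL i).left j * ry.left k) *
            ((rxL i).right j * ((ryR k).left l *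
              (𝒮 ((ryR k).right l) * 𝒮 (rx.right i)))))
        = ∑ k ∈ ry.index, ∑ l ∈ (ryL k).index,
            𝒮 ((rxL i).left j * (ryL k).left l) *
              ((rxL i).right j * ((ryL k).right l *
                (𝒮 (ry.right k) * 𝒮 (rx.right i)))) := by
      intro i _ j _
      have tr := transport (B := A) (𝒮 ∘ₗ LinearMap.mulLeft K ((rxL i).left j))
        (LinearMap.mulLeft K ((rxL i).right j))
        (LinearMap.mulRight K (𝒮 (rx.right i)) ∘ₗ 𝒮)
        ry ryL ryR
      simp only [LinearMap.comp_apply, LinearMap.mulLeft_apply,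
        LinearMap.mulRight_apply, mul_assoc] at tr
      exact tr
    rw [Finset.sum_congr rfl fun i hi =>
      Finset.sum_congr rfl fun j hj => stepB i hi j hj]
    -- reorder (i,j,k,l) → (i,k,j,l)
    rw [Finset.sum_congr rfl fun i _ => Finset.sum_comm]
    -- Step C : collapse the head
    have stepC : ∀ i ∈ rx.index, ∀ k ∈ ry.index,
        (∑ j ∈ (rxL i).index, ∑ l ∈ (ryL k).index,
          𝒮 ((rxL i).left j * (ryL k).left l) *
            ((rxL i).right j * ((ryL k).right l *
              (𝒮 (ry.right k) * 𝒮 (rx.right i)))))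
        = (ε (rx.left i) * ε (ry.left k)) • (𝒮 (ry.right k) * 𝒮 (rx.right i)) := by
      intro i _ k _
      have e1 : ∀ j ∈ (rxL i).index, ∀ l ∈ (ryL k).index,
          𝒮 ((rxL i).left j * (ryL k).left l) *
            ((rxL i).right j * ((ryL k).right l *
              (𝒮 (ry.right k) * 𝒮 (rx.right i))))
          = (𝒮 (mulRepr (rxL i) (ryL k) |>.left (j, l)) *
              (mulRepr (rxL i) (ryL k) |>.right (j, l))) *
                (𝒮 (ry.right k) * 𝒮 (rx.right i)) := by
        intro j _ l _
        show _ = 𝒮 ((rxL i).left j * (ryL k).left l) *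
          ((rxL i).right j * (ryL k).right l) * (𝒮 (ry.right k) * 𝒮 (rx.right i))
        simp only [mul_assoc]
      rw [Finset.sum_congr rfl fun j hj =>
        Finset.sum_congr rfl fun l hl => e1 j hj l hl]
      rw [← Finset.sum_product']
      rw [← Finset.sum_mul]
      have e2 : (∑ p ∈ (rxL i).index ×ˢ (ryL k).index,
          𝒮 (mulRepr (rxL i) (ryL k) |>.left p) * (mulRepr (rxL i) (ryL k) |>.right p))
          = algebraMap K A (ε (rx.left i * ry.left k)) :=
        HopfAlgebra.sum_antipode_mul_eq_algebraMap_counit (mulRepr (rxL i) (ryL k))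
      rw [e2, Bialgebra.counit_mul, ← Algebra.smul_def]
    rw [Finset.sum_congr rfl fun i hi =>
      Finset.sum_congr rfl fun k hk => stepC i hi k hk]
    -- assemble 𝒮 y * 𝒮 x
    have e3 : ∀ i ∈ rx.index,
        (∑ k ∈ ry.index,
          (ε (rx.left i) * ε (ry.left k)) • (𝒮 (ry.right k) * 𝒮 (rx.right i)))
        = ε (rx.left i) • (𝒮 y * 𝒮 (rx.right i)) := by
      intro i _
      have e4 : ∀ k ∈ ry.index,
          (ε (rx.left i) * ε (ry.left k)) • (𝒮 (ry.right k) * 𝒮 (rx.right i))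
          = ε (rx.left i) • ((ε (ry.left k) • 𝒮 (ry.right k)) * 𝒮 (rx.right i)) := by
        intro k _
        rw [smul_mul_assoc, mul_smul]
      rw [Finset.sum_congr rfl e4, ← Finset.smul_sum, ← Finset.sum_mul,
        sum_counit_smul_map (𝒮) ry]
    rw [Finset.sum_congr rfl e3]
    have e5 : ∀ i ∈ rx.index,
        ε (rx.left i) • (𝒮 y * 𝒮 (rx.right i))
        = 𝒮 y * (ε (rx.left i) • 𝒮 (rx.right i)) := by
      intro i _; rw [mul_smul_comm]
    rw [Finset.sum_congr rfl e5, ← Finset.mul_sum, sum_counit_smul_map (𝒮) rx]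
  rw [← way1, way2]

/-! ### `S ∘ S = id` and `Δ ∘ S = (S ⊗ S) ∘ Δ` for cocommutative Hopf algebras -/

lemma antipode_algebraMap' (r : K) : 𝒮 (algebraMap K A r) = algebraMap K A r := by
  rw [Algebra.algebraMap_eq_smul_one, map_smul, antipode_one']

lemma conv_antipode_sq (hA : _root_.IsCocomm K A) :
    conv (𝒮) ((𝒮 : A →ₗ[K] A) ∘ₗ 𝒮) = (cu : A →ₗ[K] A) := by
  ext a
  rw [conv_apply_repr _ _ (ℛ K a)]
  have e1 : ∀ i ∈ (ℛ K a).index,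
      𝒮 ((ℛ K a).left i) * ((𝒮 : A →ₗ[K] A) ∘ₗ 𝒮) ((ℛ K a).right i)
      = 𝒮 (𝒮 ((ℛ K a).right i) * (ℛ K a).left i) := by
    intro i _
    rw [LinearMap.comp_apply, antipode_mul']
  rw [Finset.sum_congr rfl e1, ← map_sum]
  have e2 := HopfAlgebra.sum_antipode_mul_eq_algebraMap_counit (swapRepr hA (ℛ K a))
  simp only [swapRepr] at e2
  rw [e2, antipode_algebraMap']
  rfl

lemma antipode_antipode (hA : _root_.IsCocomm K A) :
    (𝒮 : A →ₗ[K] A) ∘ₗ 𝒮 = LinearMap.id :=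
  (conv_eq_of _ _ _ conv_id_antipode (conv_antipode_sq hA)).symm

lemma antipode_sq (hA : _root_.IsCocomm K A) (a : A) : 𝒮 (𝒮 a) = a :=
  LinearMap.congr_fun (antipode_antipode hA) a

lemma comulAlgHom_toLinearMap' : (Bialgebra.comulAlgHom K A).toLinearMap = (Δ) := rfl

lemma comul_eq_conv :
    (Δ) = conv (Algebra.TensorProduct.includeLeft : A →ₐ[K] A ⊗[K] A).toLinearMap
      (Algebra.TensorProduct.includeRight : A →ₐ[K] A ⊗[K] A).toLinearMap := by
  ext a
  rw [conv_apply_repr _ _ (ℛ K a)]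
  simp only [AlgHom.toLinearMap_apply, Algebra.TensorProduct.includeLeft_apply,
    Algebra.TensorProduct.includeRight_apply, Algebra.TensorProduct.tmul_mul_tmul,
    one_mul, mul_one]
  exact ((ℛ K a).eq).symm

lemma mapSS_comul_eq_conv (hA : _root_.IsCocomm K A) :
    (TensorProduct.map (𝒮) (𝒮)) ∘ₗ (Δ) =
      conv ((Algebra.TensorProduct.includeRight : A →ₐ[K] A ⊗[K] A).toLinearMap ∘ₗ 𝒮)
        ((Algebra.TensorProduct.includeLeft : A →ₐ[K] A ⊗[K] A).toLinearMap ∘ₗ 𝒮) := by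
  ext a
  rw [LinearMap.comp_apply, conv_apply_repr _ _ (ℛ K a),
    ← (swapRepr hA (ℛ K a)).eq]
  simp only [swapRepr, map_sum, TensorProduct.map_tmul, LinearMap.comp_apply,
    AlgHom.toLinearMap_apply, Algebra.TensorProduct.includeLeft_apply,
    Algebra.TensorProduct.includeRight_apply, Algebra.TensorProduct.tmul_mul_tmul,
    one_mul, mul_one]

lemma comul_antipode (hA : _root_.IsCocomm K A) :
    (Δ) ∘ₗ (𝒮) = (TensorProduct.map (𝒮) (𝒮)) ∘ₗ (Δ) := by
  apply conv_eq_of (g := (Δ))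
  · exact algHom_conv_antipode (Bialgebra.comulAlgHom K A)
  · rw [mapSS_comul_eq_conv hA]
    nth_rewrite 1 [comul_eq_conv]
    rw [conv_assoc]
    rw [← conv_assoc (Algebra.TensorProduct.includeRight : A →ₐ[K] A ⊗[K] A).toLinearMap]
    rw [algHom_conv_antipode' (Algebra.TensorProduct.includeRight : A →ₐ[K] A ⊗[K] A)]
    rw [conv_cu_left]
    exact algHom_conv_antipode' (Algebra.TensorProduct.includeLeft : A →ₐ[K] A ⊗[K] A)

/-! ### The adjoint action as a convolution -/

variable (K) in
/-- `q K u` is the linear map `c ↦ ∑ c₁ u S(c₂)` (the adjoint action of `c` on `u`). -/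
noncomputable def q (u : A) : A →ₗ[K] A := conv (LinearMap.mulRight K u) (𝒮)

lemma q_apply_repr (u : A) {c : A} (r : Coalgebra.Repr K c ι) :
    q K u c = ∑ i ∈ r.index, (r.left i * u) * 𝒮 (r.right i) := by
  rw [q, conv_apply_repr _ _ r]
  simp [LinearMap.mulRight_apply]

lemma adAct_tmul (c u : A) : adAct K A (c ⊗ₜ[K] u) = q K u c := by
  rw [q_apply_repr u (ℛ K c)]
  simp only [adAct, LinearMap.comp_apply, LinearMap.rTensor_tmul]
  rw [← (ℛ K c).eq]
  simp only [TensorProduct.sum_tmul, map_sum, LinearEquiv.coe_coe,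
    TensorProduct.assoc_tmul, LinearMap.lTensor_tmul, LinearMap.comp_apply,
    LinearMap.rTensor_tmul, TensorProduct.comm_tmul, LinearMap.mul'_apply]
  exact Finset.sum_congr rfl fun i _ => (mul_assoc _ _ _).symm

lemma hopfComm_tmul (x y : A) (rx : Coalgebra.Repr K x ι) (ry : Coalgebra.Repr K y κ) :
    hopfComm K A (x ⊗ₜ[K] y) =
      ∑ k ∈ rx.index, ∑ l ∈ ry.index,
        (rx.left k * ry.left l) * (𝒮 (rx.right k) * 𝒮 (ry.right l)) := by
  simp only [hopfComm, LinearMap.comp_apply, TensorProduct.map_tmul]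
  rw [← rx.eq, ← ry.eq]
  simp only [TensorProduct.sum_tmul, TensorProduct.tmul_sum, map_sum,
    LinearEquiv.coe_coe, TensorProduct.tensorTensorTensorComm_tmul,
    TensorProduct.map_tmul, LinearMap.comp_apply, LinearMap.mul'_apply]
  exact Finset.sum_comm

lemma q_sum {ι : Type*} (s : Finset ι) (f : ι → A) :
    q K (∑ i ∈ s, f i) = ∑ i ∈ s, q K (f i) := by
  ext c
  rw [q_apply_repr _ (ℛ K c)]
  simp only [LinearMap.sum_apply, q_apply_repr _ (ℛ K c)]
  rw [Finset.sum_comm]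
  refine Finset.sum_congr rfl fun i _ => ?_
  rw [← Finset.sum_mul, ← Finset.mul_sum]

lemma antipode_comp_q (hA : _root_.IsCocomm K A) (u : A) :
    (𝒮) ∘ₗ q K u = q K (𝒮 u) := by
  ext c
  rw [LinearMap.comp_apply, q_apply_repr u (ℛ K c), map_sum]
  have e1 : ∀ i ∈ (ℛ K c).index,
      𝒮 (((ℛ K c).left i * u) * 𝒮 ((ℛ K c).right i))
      = ((ℛ K c).right i * 𝒮 u) * 𝒮 ((ℛ K c).left i) := by
    intro i _
    rw [antipode_mul', antipode_mul', antipode_sq hA, mul_assoc]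
  rw [Finset.sum_congr rfl e1]
  have e2 := q_apply_repr (𝒮 u) (swapRepr hA (ℛ K c))
  simp only [swapRepr] at e2
  rw [e2]

lemma conv_antipode_mulRight (v : A) :
    conv (𝒮) (LinearMap.mulRight K v) = LinearMap.smulRight (ε) v := by
  ext c
  rw [conv_apply_repr _ _ (ℛ K c)]
  simp only [LinearMap.mulRight_apply, LinearMap.smulRight_apply]
  have e1 : ∀ i ∈ (ℛ K c).index,
      𝒮 ((ℛ K c).left i) * ((ℛ K c).right i * v)
      = (𝒮 ((ℛ K c).left i) * (ℛ K c).right i) * v := by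
    intro i _; rw [mul_assoc]
  rw [Finset.sum_congr rfl e1, ← Finset.sum_mul,
    HopfAlgebra.sum_antipode_mul_eq_algebraMap_counit (ℛ K c), ← Algebra.smul_def]

lemma conv_mulRight_smulRight (u v : A) :
    conv (LinearMap.mulRight K u) (LinearMap.smulRight (ε) v)
      = LinearMap.mulRight K (u * v) := by
  ext c
  rw [conv_apply_repr _ _ (ℛ K c)]
  simp only [LinearMap.mulRight_apply, LinearMap.smulRight_apply]
  have e1 : ∀ i ∈ (ℛ K c).index,
      ((ℛ K c).left i * u) * (ε ((ℛ K c).right i) • v)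
      = ε ((ℛ K c).right i) • (LinearMap.mulRight K (u * v) ((ℛ K c).left i)) := by
    intro i _
    rw [mul_smul_comm, mul_assoc]
    rfl
  rw [Finset.sum_congr rfl e1, sum_smul_counit_map _ (ℛ K c)]
  rfl

lemma q_mul (u v : A) : q K (u * v) = conv (q K u) (q K v) := by
  calc q K (u * v) = conv (LinearMap.mulRight K (u * v)) (𝒮) := rfl
    _ = conv (conv (LinearMap.mulRight K u) (LinearMap.smulRight (ε) v)) (𝒮) := by
        rw [conv_mulRight_smulRight]
    _ = conv (LinearMap.mulRight K u) (conv (LinearMap.smulRight (ε) v) (𝒮)) :=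
        conv_assoc _ _ _
    _ = conv (LinearMap.mulRight K u)
          (conv (conv (𝒮) (LinearMap.mulRight K v)) (𝒮)) := by
        rw [conv_antipode_mulRight]
    _ = conv (LinearMap.mulRight K u)
          (conv (𝒮) (conv (LinearMap.mulRight K v) (𝒮))) := by rw [conv_assoc]
    _ = conv (conv (LinearMap.mulRight K u) (𝒮))
          (conv (LinearMap.mulRight K v) (𝒮)) := (conv_assoc _ _ _).symm
    _ = conv (q K u) (q K v) := rfl

lemma comul_comp_mulRight (u : A) (ru : Coalgebra.Repr K u ι) :
    (Δ) ∘ₗ LinearMap.mulRight K u =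
      ∑ k ∈ ru.index,
        conv ((Algebra.TensorProduct.includeLeft : A →ₐ[K] A ⊗[K] A).toLinearMap ∘ₗ
            LinearMap.mulRight K (ru.left k))
          ((Algebra.TensorProduct.includeRight : A →ₐ[K] A ⊗[K] A).toLinearMap ∘ₗ
            LinearMap.mulRight K (ru.right k)) := by
  ext c
  simp only [LinearMap.comp_apply, LinearMap.mulRight_apply, LinearMap.sum_apply]
  rw [Bialgebra.comul_mul, ← (ℛ K c).eq, ← ru.eq, Finset.sum_mul_sum]
  have e1 : ∀ k ∈ ru.index,
      conv ((Algebra.TensorProduct.includeLeft : A →ₐ[K] A ⊗[K] A).toLinearMap ∘ₗ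
          LinearMap.mulRight K (ru.left k))
        ((Algebra.TensorProduct.includeRight : A →ₐ[K] A ⊗[K] A).toLinearMap ∘ₗ
          LinearMap.mulRight K (ru.right k)) c
      = ∑ i ∈ (ℛ K c).index,
          ((ℛ K c).left i * ru.left k) ⊗ₜ[K] ((ℛ K c).right i * ru.right k) := by
    intro k _
    rw [conv_apply_repr _ _ (ℛ K c)]
    simp [Algebra.TensorProduct.tmul_mul_tmul]
  rw [Finset.sum_congr rfl e1, Finset.sum_comm]
  simp [Algebra.TensorProduct.tmul_mul_tmul]

lemma incl_comm_lemma (hA : _root_.IsCocomm K A) (F G : A →ₗ[K] A) :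
    conv ((Algebra.TensorProduct.includeRight : A →ₐ[K] A ⊗[K] A).toLinearMap ∘ₗ F)
      ((Algebra.TensorProduct.includeLeft : A →ₐ[K] A ⊗[K] A).toLinearMap ∘ₗ G)
    = conv ((Algebra.TensorProduct.includeLeft : A →ₐ[K] A ⊗[K] A).toLinearMap ∘ₗ G)
      ((Algebra.TensorProduct.includeRight : A →ₐ[K] A ⊗[K] A).toLinearMap ∘ₗ F) := by
  apply conv_comm_of_commute hA
  intro a b
  simp [Algebra.TensorProduct.tmul_mul_tmul]

lemma comul_comp_q (hA : _root_.IsCocomm K A) (u : A) (ru : Coalgebra.Repr K u ι) :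
    (Δ) ∘ₗ q K u =
      ∑ k ∈ ru.index,
        conv ((Algebra.TensorProduct.includeLeft : A →ₐ[K] A ⊗[K] A).toLinearMap ∘ₗ
            q K (ru.left k))
          ((Algebra.TensorProduct.includeRight : A →ₐ[K] A ⊗[K] A).toLinearMap ∘ₗ
            q K (ru.right k)) := by
  calc (Δ) ∘ₗ q K u
      = conv ((Δ) ∘ₗ LinearMap.mulRight K u) ((Δ) ∘ₗ (𝒮)) := by
        rw [q, ← comulAlgHom_toLinearMap', comp_conv]
    _ = conv (∑ k ∈ ru.index,
            conv ((Algebra.TensorProduct.includeLeft : A →ₐ[K] A ⊗[K] A).toLinearMap ∘ₗ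
                LinearMap.mulRight K (ru.left k))
              ((Algebra.TensorProduct.includeRight : A →ₐ[K] A ⊗[K] A).toLinearMap ∘ₗ
                LinearMap.mulRight K (ru.right k)))
          (conv ((Algebra.TensorProduct.includeRight : A →ₐ[K] A ⊗[K] A).toLinearMap ∘ₗ 𝒮)
            ((Algebra.TensorProduct.includeLeft : A →ₐ[K] A ⊗[K] A).toLinearMap ∘ₗ 𝒮)) := by
        rw [comul_comp_mulRight u ru, comul_antipode hA, mapSS_comul_eq_conv hA]
    _ = ∑ k ∈ ru.index,
        conv (conv ((Algebra.TensorProduct.includeLeft : A →ₐ[K] A ⊗[K] A).toLinearMap ∘ₗ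
                LinearMap.mulRight K (ru.left k))
              ((Algebra.TensorProduct.includeRight : A →ₐ[K] A ⊗[K] A).toLinearMap ∘ₗ
                LinearMap.mulRight K (ru.right k)))
          (conv ((Algebra.TensorProduct.includeRight : A →ₐ[K] A ⊗[K] A).toLinearMap ∘ₗ 𝒮)
            ((Algebra.TensorProduct.includeLeft : A →ₐ[K] A ⊗[K] A).toLinearMap ∘ₗ 𝒮)) := by
        rw [conv_sum_left]
    _ = ∑ k ∈ ru.index,
        conv ((Algebra.TensorProduct.includeLeft : A →ₐ[K] A ⊗[K] A).toLinearMap ∘ₗ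
            q K (ru.left k))
          ((Algebra.TensorProduct.includeRight : A →ₐ[K] A ⊗[K] A).toLinearMap ∘ₗ
            q K (ru.right k)) := by
        refine Finset.sum_congr rfl fun k _ => ?_
        rw [conv_assoc, ← conv_assoc
          ((Algebra.TensorProduct.includeRight : A →ₐ[K] A ⊗[K] A).toLinearMap ∘ₗ
            LinearMap.mulRight K (ru.right k))]
        rw [← comp_conv (Algebra.TensorProduct.includeRight : A →ₐ[K] A ⊗[K] A)]
        rw [incl_comm_lemma hA]
        rw [← conv_assoc, ← comp_conv (Algebra.TensorProduct.includeLeft : A →ₐ[K] A ⊗[K] A)]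
        rfl


/-! ### Corner embeddings into `(A ⊗ A) ⊗ (A ⊗ A)` -/

variable (K A) in
/-- Comultiplication of the tensor-square bialgebra, as an algebra hom. -/
noncomputable def D2 : (A ⊗[K] A) →ₐ[K] (A ⊗[K] A) ⊗[K] (A ⊗[K] A) :=
  (Algebra.TensorProduct.tensorTensorTensorComm K K K K A A A A).toAlgHom.comp
    (Algebra.TensorProduct.map (Bialgebra.comulAlgHom K A) (Bialgebra.comulAlgHom K A))

variable (K A) in
/-- The multiplication-and-antipode collapse map of `hopfComm`. -/
noncomputable def Pi4 : (A ⊗[K] A) ⊗[K] (A ⊗[K] A) →ₗ[K] A :=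
  LinearMap.mul' K A ∘ₗ TensorProduct.map (LinearMap.mul' K A)
    (LinearMap.mul' K A ∘ₗ TensorProduct.map (𝒮) (𝒮))

variable (K A) in
noncomputable def Th1 : (A ⊗[K] A) →ₐ[K] (A ⊗[K] A) ⊗[K] (A ⊗[K] A) :=
  Algebra.TensorProduct.map Algebra.TensorProduct.includeLeft
    Algebra.TensorProduct.includeLeft

variable (K A) in
noncomputable def Th2 : (A ⊗[K] A) →ₐ[K] (A ⊗[K] A) ⊗[K] (A ⊗[K] A) :=
  Algebra.TensorProduct.map Algebra.TensorProduct.includeRight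
    Algebra.TensorProduct.includeRight

variable (K A) in
noncomputable def ce1 : A →ₐ[K] (A ⊗[K] A) ⊗[K] (A ⊗[K] A) :=
  (Algebra.TensorProduct.includeLeft).comp (Algebra.TensorProduct.includeLeft)

variable (K A) in
noncomputable def ce2 : A →ₐ[K] (A ⊗[K] A) ⊗[K] (A ⊗[K] A) :=
  (Algebra.TensorProduct.includeLeft).comp (Algebra.TensorProduct.includeRight)

variable (K A) in
noncomputable def ce3 : A →ₐ[K] (A ⊗[K] A) ⊗[K] (A ⊗[K] A) :=
  (Algebra.TensorProduct.includeRight).comp (Algebra.TensorProduct.includeLeft)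

variable (K A) in
noncomputable def ce4 : A →ₐ[K] (A ⊗[K] A) ⊗[K] (A ⊗[K] A) :=
  (Algebra.TensorProduct.includeRight).comp (Algebra.TensorProduct.includeRight)

lemma hopfComm_eq : hopfComm K A = Pi4 K A ∘ₗ (D2 K A).toLinearMap := by
  apply TensorProduct.ext'
  intro x y
  rw [LinearMap.comp_apply, hopfComm_tmul x y (ℛ K x) (ℛ K y)]
  have hD : (D2 K A).toLinearMap (x ⊗ₜ[K] y) =
      ∑ k ∈ (ℛ K x).index, ∑ l ∈ (ℛ K y).index,
        ((ℛ K x).left k ⊗ₜ[K] (ℛ K y).left l) ⊗ₜ[K]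
          ((ℛ K x).right k ⊗ₜ[K] (ℛ K y).right l) := by
    simp only [D2, AlgHom.toLinearMap_apply, AlgHom.comp_apply,
      Algebra.TensorProduct.map_tmul, Bialgebra.comulAlgHom_apply]
    rw [← (ℛ K x).eq, ← (ℛ K y).eq]
    simp only [TensorProduct.sum_tmul, TensorProduct.tmul_sum, map_sum,
      AlgEquiv.toAlgHom_eq_coe, AlgHom.coe_coe,
      Algebra.TensorProduct.tensorTensorTensorComm_tmul]
    exact Finset.sum_comm
  rw [hD]
  simp only [map_sum, Pi4, LinearMap.comp_apply, TensorProduct.map_tmul,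
    LinearMap.mul'_apply]

lemma D2_comp_inclLeft :
    (D2 K A).toLinearMap ∘ₗ
        (Algebra.TensorProduct.includeLeft : A →ₐ[K] A ⊗[K] A).toLinearMap =
      (Th1 K A).toLinearMap ∘ₗ (Δ) := by
  ext a
  simp only [LinearMap.comp_apply, AlgHom.toLinearMap_apply,
    Algebra.TensorProduct.includeLeft_apply]
  have : (D2 K A) (a ⊗ₜ[K] (1 : A)) =
      (Algebra.TensorProduct.tensorTensorTensorComm K K K K A A A A)
        ((Δ a) ⊗ₜ[K] ((1 : A) ⊗ₜ[K] (1 : A))) := by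
    simp only [D2, AlgHom.comp_apply, Algebra.TensorProduct.map_tmul,
      Bialgebra.comulAlgHom_apply, Bialgebra.comul_one,
      Algebra.TensorProduct.one_def, AlgEquiv.toAlgHom_eq_coe, AlgHom.coe_coe]
    rfl
  rw [this, ← (ℛ K a).eq]
  simp only [TensorProduct.sum_tmul, map_sum,
    Algebra.TensorProduct.tensorTensorTensorComm_tmul, Th1,
    Algebra.TensorProduct.map_tmul, Algebra.TensorProduct.includeLeft_apply]

lemma D2_comp_inclRight :
    (D2 K A).toLinearMap ∘ₗ
        (Algebra.TensorProduct.includeRight : A →ₐ[K] A ⊗[K] A).toLinearMap =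
      (Th2 K A).toLinearMap ∘ₗ (Δ) := by
  ext a
  simp only [LinearMap.comp_apply, AlgHom.toLinearMap_apply,
    Algebra.TensorProduct.includeRight_apply]
  have : (D2 K A) ((1 : A) ⊗ₜ[K] a) =
      (Algebra.TensorProduct.tensorTensorTensorComm K K K K A A A A)
        (((1 : A) ⊗ₜ[K] (1 : A)) ⊗ₜ[K] (Δ a)) := by
    simp only [D2, AlgHom.comp_apply, Algebra.TensorProduct.map_tmul,
      Bialgebra.comulAlgHom_apply, Bialgebra.comul_one,
      Algebra.TensorProduct.one_def, AlgEquiv.toAlgHom_eq_coe, AlgHom.coe_coe]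
    rfl
  rw [this, ← (ℛ K a).eq]
  simp only [TensorProduct.tmul_sum, map_sum,
    Algebra.TensorProduct.tensorTensorTensorComm_tmul, Th2,
    Algebra.TensorProduct.map_tmul, Algebra.TensorProduct.includeRight_apply]

lemma Th1_comp_inclLeft :
    (Th1 K A).toLinearMap ∘ₗ
        (Algebra.TensorProduct.includeLeft : A →ₐ[K] A ⊗[K] A).toLinearMap =
      (ce1 K A).toLinearMap := by
  ext a
  simp [Th1, ce1, Algebra.TensorProduct.one_def]

lemma Th1_comp_inclRight :
    (Th1 K A).toLinearMap ∘ₗ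
        (Algebra.TensorProduct.includeRight : A →ₐ[K] A ⊗[K] A).toLinearMap =
      (ce3 K A).toLinearMap := by
  ext a
  simp [Th1, ce3, Algebra.TensorProduct.one_def]

lemma Th2_comp_inclLeft :
    (Th2 K A).toLinearMap ∘ₗ
        (Algebra.TensorProduct.includeLeft : A →ₐ[K] A ⊗[K] A).toLinearMap =
      (ce2 K A).toLinearMap := by
  ext a
  simp [Th2, ce2, Algebra.TensorProduct.one_def]

lemma Th2_comp_inclRight :
    (Th2 K A).toLinearMap ∘ₗ
        (Algebra.TensorProduct.includeRight : A →ₐ[K] A ⊗[K] A).toLinearMap =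
      (ce4 K A).toLinearMap := by
  ext a
  simp [Th2, ce4, Algebra.TensorProduct.one_def]

lemma comp_sumL {M₁ M₂ M₃ : Type*} [AddCommMonoid M₁] [AddCommMonoid M₂]
    [AddCommMonoid M₃] [Module K M₁] [Module K M₂] [Module K M₃]
    {ι : Type*} (s : Finset ι) (f : M₂ →ₗ[K] M₃) (g : ι → (M₁ →ₗ[K] M₂)) :
    f ∘ₗ (∑ i ∈ s, g i) = ∑ i ∈ s, f ∘ₗ g i := by
  ext a
  simp [LinearMap.sum_apply, map_sum]

lemma conv_incl_split {B₁ B₂ : Type*} [Semiring B₁] [Algebra K B₁]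
    [Semiring B₂] [Algebra K B₂] (F : A →ₗ[K] B₁) (G : A →ₗ[K] B₂) :
    conv ((Algebra.TensorProduct.includeLeft : B₁ →ₐ[K] B₁ ⊗[K] B₂).toLinearMap ∘ₗ F)
      ((Algebra.TensorProduct.includeRight : B₂ →ₐ[K] B₁ ⊗[K] B₂).toLinearMap ∘ₗ G)
    = TensorProduct.map F G ∘ₗ (Δ) := by
  ext a
  rw [conv_apply_repr _ _ (ℛ K a), LinearMap.comp_apply, ← (ℛ K a).eq]
  simp [Algebra.TensorProduct.tmul_mul_tmul]

lemma Pi4_conv (g₁ g₂ g₃ g₄ : A →ₗ[K] A) :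
    Pi4 K A ∘ₗ conv (conv ((ce1 K A).toLinearMap ∘ₗ g₁) ((ce2 K A).toLinearMap ∘ₗ g₂))
      (conv ((ce3 K A).toLinearMap ∘ₗ g₃) ((ce4 K A).toLinearMap ∘ₗ g₄))
    = conv (conv g₁ g₂) (conv ((𝒮) ∘ₗ g₃) ((𝒮) ∘ₗ g₄)) := by
  have h12 : conv ((ce1 K A).toLinearMap ∘ₗ g₁) ((ce2 K A).toLinearMap ∘ₗ g₂)
      = (Algebra.TensorProduct.includeLeft :
            (A ⊗[K] A) →ₐ[K] (A ⊗[K] A) ⊗[K] (A ⊗[K] A)).toLinearMap ∘ₗ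
          (TensorProduct.map g₁ g₂ ∘ₗ (Δ)) := by
    rw [ce1, ce2, AlgHom.comp_toLinearMap, AlgHom.comp_toLinearMap,
      LinearMap.comp_assoc, LinearMap.comp_assoc, ← comp_conv, conv_incl_split]
  have h34 : conv ((ce3 K A).toLinearMap ∘ₗ g₃) ((ce4 K A).toLinearMap ∘ₗ g₄)
      = (Algebra.TensorProduct.includeRight :
            (A ⊗[K] A) →ₐ[K] (A ⊗[K] A) ⊗[K] (A ⊗[K] A)).toLinearMap ∘ₗ
          (TensorProduct.map g₃ g₄ ∘ₗ (Δ)) := by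
    rw [ce3, ce4, AlgHom.comp_toLinearMap, AlgHom.comp_toLinearMap,
      LinearMap.comp_assoc, LinearMap.comp_assoc, ← comp_conv, conv_incl_split]
  rw [h12, h34, conv_incl_split]
  have hPi : Pi4 K A ∘ₗ TensorProduct.map (TensorProduct.map g₁ g₂ ∘ₗ (Δ))
      (TensorProduct.map g₃ g₄ ∘ₗ (Δ))
      = LinearMap.mul' K A ∘ₗ
          TensorProduct.map (conv g₁ g₂) (conv ((𝒮) ∘ₗ g₃) ((𝒮) ∘ₗ g₄)) := by
    rw [Pi4, LinearMap.comp_assoc, ← TensorProduct.map_comp]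
    congr 2
    · ext a
      have hm : TensorProduct.map (𝒮) (𝒮) (TensorProduct.map g₃ g₄ ((Δ) a)) =
          TensorProduct.map ((𝒮) ∘ₗ g₃) ((𝒮) ∘ₗ g₄) ((Δ) a) := by
        rw [← LinearMap.comp_apply, ← TensorProduct.map_comp]
      simp only [conv, LinearMap.comp_apply, hm]
  rw [← LinearMap.comp_assoc, hPi, LinearMap.comp_assoc]
  rfl

lemma ce_comm (hA : _root_.IsCocomm K A) (F G : A →ₗ[K] A) :
    conv ((ce3 K A).toLinearMap ∘ₗ F) ((ce2 K A).toLinearMap ∘ₗ G)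
    = conv ((ce2 K A).toLinearMap ∘ₗ G) ((ce3 K A).toLinearMap ∘ₗ F) := by
  apply conv_comm_of_commute hA
  intro a b
  simp only [LinearMap.comp_apply, AlgHom.toLinearMap_apply, ce2, ce3,
    AlgHom.comp_apply, Algebra.TensorProduct.includeLeft_apply,
    Algebra.TensorProduct.includeRight_apply, Algebra.TensorProduct.one_def,
    Algebra.TensorProduct.tmul_mul_tmul, one_mul, mul_one]


/-! ### The key identity -/

lemma q_hopfComm (hA : _root_.IsCocomm K A) (x y : A) :
    q K (hopfComm K A (x ⊗ₜ[K] y)) =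
      hopfComm K A ∘ₗ TensorProduct.map (q K x) (q K y) ∘ₗ (Δ) := by
  set rx := ℛ K x with hrx
  set ry := ℛ K y with hry
  have hW : TensorProduct.map (q K x) (q K y) ∘ₗ (Δ) =
      conv ((Algebra.TensorProduct.includeLeft : A →ₐ[K] A ⊗[K] A).toLinearMap ∘ₗ q K x)
        ((Algebra.TensorProduct.includeRight : A →ₐ[K] A ⊗[K] A).toLinearMap ∘ₗ q K y) :=
    (conv_incl_split _ _).symm
  have hRHS : hopfComm K A ∘ₗ TensorProduct.map (q K x) (q K y) ∘ₗ (Δ)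
      = ∑ k ∈ rx.index, ∑ l ∈ ry.index,
          conv (conv (q K (rx.left k)) (q K (ry.left l)))
            (conv ((𝒮) ∘ₗ q K (rx.right k)) ((𝒮) ∘ₗ q K (ry.right l))) := by
    rw [hopfComm_eq, hW, LinearMap.comp_assoc, comp_conv (D2 K A)]
    have h1 : (D2 K A).toLinearMap ∘ₗ
          ((Algebra.TensorProduct.includeLeft : A →ₐ[K] A ⊗[K] A).toLinearMap ∘ₗ q K x)
        = ∑ k ∈ rx.index, conv ((ce1 K A).toLinearMap ∘ₗ q K (rx.left k))
            ((ce3 K A).toLinearMap ∘ₗ q K (rx.right k)) := by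
      rw [← LinearMap.comp_assoc, D2_comp_inclLeft, LinearMap.comp_assoc,
        comul_comp_q hA x rx, comp_sumL]
      refine Finset.sum_congr rfl fun k _ => ?_
      rw [comp_conv (Th1 K A), ← LinearMap.comp_assoc, Th1_comp_inclLeft,
        ← LinearMap.comp_assoc, Th1_comp_inclRight]
    have h2 : (D2 K A).toLinearMap ∘ₗ
          ((Algebra.TensorProduct.includeRight : A →ₐ[K] A ⊗[K] A).toLinearMap ∘ₗ q K y)
        = ∑ l ∈ ry.index, conv ((ce2 K A).toLinearMap ∘ₗ q K (ry.left l))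
            ((ce4 K A).toLinearMap ∘ₗ q K (ry.right l)) := by
      rw [← LinearMap.comp_assoc, D2_comp_inclRight, LinearMap.comp_assoc,
        comul_comp_q hA y ry, comp_sumL]
      refine Finset.sum_congr rfl fun l _ => ?_
      rw [comp_conv (Th2 K A), ← LinearMap.comp_assoc, Th2_comp_inclLeft,
        ← LinearMap.comp_assoc, Th2_comp_inclRight]
    rw [h1, h2, conv_sum_left]
    have h3 : ∀ k ∈ rx.index,
        conv (conv ((ce1 K A).toLinearMap ∘ₗ q K (rx.left k))
            ((ce3 K A).toLinearMap ∘ₗ q K (rx.right k)))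
          (∑ l ∈ ry.index, conv ((ce2 K A).toLinearMap ∘ₗ q K (ry.left l))
            ((ce4 K A).toLinearMap ∘ₗ q K (ry.right l)))
        = ∑ l ∈ ry.index,
            conv (conv ((ce1 K A).toLinearMap ∘ₗ q K (rx.left k))
                ((ce3 K A).toLinearMap ∘ₗ q K (rx.right k)))
              (conv ((ce2 K A).toLinearMap ∘ₗ q K (ry.left l))
                ((ce4 K A).toLinearMap ∘ₗ q K (ry.right l))) := by
      intro k _
      rw [conv_sum_right]
    rw [Finset.sum_congr rfl h3, comp_sumL]
    refine Finset.sum_congr rfl fun k _ => ?_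
    rw [comp_sumL]
    refine Finset.sum_congr rfl fun l _ => ?_
    rw [conv_assoc, ← conv_assoc ((ce3 K A).toLinearMap ∘ₗ q K (rx.right k)),
      ce_comm hA, conv_assoc, ← conv_assoc]
    exact Pi4_conv _ _ _ _
  rw [hRHS, hopfComm_tmul x y rx ry, q_sum]
  refine Finset.sum_congr rfl fun k _ => ?_
  rw [q_sum]
  refine Finset.sum_congr rfl fun l _ => ?_
  rw [q_mul, q_mul, q_mul, ← antipode_comp_q hA, ← antipode_comp_q hA]

lemma key_identity (hA : _root_.IsCocomm K A) (c x y : A) :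
    adAct K A (c ⊗ₜ[K] hopfComm K A (x ⊗ₜ[K] y))
    = ∑ i ∈ (ℛ K c).index,
        hopfComm K A (adAct K A ((ℛ K c).left i ⊗ₜ[K] x) ⊗ₜ[K]
          adAct K A ((ℛ K c).right i ⊗ₜ[K] y)) := by
  rw [adAct_tmul, q_hopfComm hA x y, LinearMap.comp_apply, LinearMap.comp_apply,
    ← (ℛ K c).eq]
  simp only [map_sum, TensorProduct.map_tmul]
  exact Finset.sum_congr rfl fun i _ => by rw [adAct_tmul, adAct_tmul]


end HopfCommAux

/-- The commutator subalgebra `[X,Y]` of two normal Hopf subalgebras is itself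
normal: `c₁ {x,y} S(c₂) ∈ [X,Y]` for every `c ∈ A`, `x ∈ X`, `y ∈ Y`. -/
theorem hopfCommutator_normal
    {K A : Type*} [Field K] [Ring A] [HopfAlgebra K A] (hA : _root_.IsCocomm K A)
    (X Y : Subalgebra K A)
    (hX_comul : ∀ x ∈ X, Coalgebra.comul (R := K) x ∈
      LinearMap.range (TensorProduct.map X.toSubmodule.subtype X.toSubmodule.subtype))
    (hX_antipode : ∀ x ∈ X, HopfAlgebra.antipode (R := K) x ∈ X)
    (hX_normal : ∀ (a : A), ∀ x ∈ X, adAct K A (a ⊗ₜ[K] x) ∈ X)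
    (hY_comul : ∀ y ∈ Y, Coalgebra.comul (R := K) y ∈
      LinearMap.range (TensorProduct.map Y.toSubmodule.subtype Y.toSubmodule.subtype))
    (hY_antipode : ∀ y ∈ Y, HopfAlgebra.antipode (R := K) y ∈ Y)
    (hY_normal : ∀ (a : A), ∀ y ∈ Y, adAct K A (a ⊗ₜ[K] y) ∈ Y) :
    ∀ (c : A), ∀ x ∈ X, ∀ y ∈ Y,
      adAct K A (c ⊗ₜ[K] hopfComm K A (x ⊗ₜ[K] y)) ∈ hopfCommutator X Y := by
  intro c x hx y hy
  rw [HopfCommAux.key_identity hA c x y]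
  refine Subalgebra.sum_mem _ fun i _ => ?_
  exact Algebra.subset_adjoin ⟨_, hX_normal _ x hx, _, hY_normal _ y hy, rfl⟩
end
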